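/- arXiv:1511.00003 — 7 statements merged into one kernel-verified Lean document; each statement's English description precedes it below -/
import Mathlib

section
/- Let V be a regular potential, let ψ be the solution of the gradient flow dψ_t = -V'(ψ_t)dt with ψ_0 = x₀ ∈ ℝ \ {0}, and let Φ be the fundamental solution of the linearization along the flow, dΦ_t = -V''(ψ_t)Φ_t dt with Φ_0 = 1. Then lim_{t→+∞} Φ_t = 0. -/
open Filter Set Topology

/-- Auxiliary version with `0 < x₀`. -/
lemma fund_aux (V ψ Φ : ℝ → ℝ) (x₀ : ℝ)
    (hV : ContDiff ℝ 3 V)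
    (hcrit : ∀ x : ℝ, deriv V x = 0 ↔ x = 0)
    (hV''0 : 0 < deriv (deriv V) 0)
    (hx₀ : 0 < x₀)
    (hψ0 : ψ 0 = x₀)
    (hψ : ∀ t : ℝ, 0 ≤ t → HasDerivAt ψ (-(deriv V (ψ t))) t)
    (hΦ0 : Φ 0 = 1)
    (hΦ : ∀ t : ℝ, 0 ≤ t → HasDerivAt Φ (-(deriv (deriv V) (ψ t)) * Φ t) t) :
    Tendsto Φ atTop (nhds 0) := by
  -- regularity facts
  have h2 : ContDiff ℝ 2 (deriv V) := by
    have h : ContDiff ℝ (2+1 : ℕ) V := by exact_mod_cast hV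
    exact (contDiff_succ_iff_deriv.mp h).2.2
  have h1 : ContDiff ℝ 1 (deriv (deriv V)) := by
    have h : ContDiff ℝ (1+1 : ℕ) (deriv V) := by exact_mod_cast h2
    exact (contDiff_succ_iff_deriv.mp h).2.2
  have contV' : Continuous (deriv V) := h2.continuous
  have hVd2 : Differentiable ℝ (deriv V) := h2.differentiable two_ne_zero
  have contV'' : Continuous (deriv (deriv V)) := h1.continuous
  have hV'0 : deriv V 0 = 0 := (hcrit 0).mpr rfl
  -- V' > 0 on (0, ∞)
  have hV'pos : ∀ x : ℝ, 0 < x → 0 < deriv V x := by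
    intro x hx
    rcases lt_trichotomy (deriv V x) 0 with hneg | h0 | hposs
    · exfalso
      have hd : HasDerivAt (deriv V) (deriv (deriv V) 0) 0 := (hVd2 0).hasDerivAt
      rw [hasDerivAt_iff_tendsto_slope] at hd
      have hev : ∀ᶠ y in 𝓝[>] (0:ℝ), 0 < slope (deriv V) 0 y := by
        have h := hd.eventually (lt_mem_nhds hV''0)
        exact h.filter_mono (nhdsWithin_mono 0 (fun y hy => ne_of_gt hy))
      have hev2 : ∀ᶠ y in 𝓝[>] (0:ℝ), y < x :=
        mem_nhdsWithin_of_mem_nhds (gt_mem_nhds hx)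
      have hev3 : ∀ᶠ y in 𝓝[>] (0:ℝ), 0 < y := eventually_mem_nhdsWithin
      obtain ⟨y, hy1, hy2, hy3⟩ := (hev.and (hev2.and hev3)).exists
      have hslope : slope (deriv V) 0 y = deriv V y / y := by
        rw [slope_def_field]; simp [hV'0]
      have hy' : 0 < deriv V y := by
        rw [hslope] at hy1
        have := mul_pos hy1 hy3
        rwa [div_mul_cancel₀ _ (ne_of_gt hy3)] at this
      -- IVT on [y, x]
      have hc : ContinuousOn (deriv V) (Icc y x) := contV'.continuousOn
      have h0mem : (0:ℝ) ∈ Icc (deriv V x) (deriv V y) := ⟨hneg.le, hy'.le⟩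
      obtain ⟨c, hcmem, hc0⟩ := intermediate_value_Icc' hy2.le hc h0mem
      have : c = 0 := (hcrit c).mp hc0
      have h5 : (0:ℝ) < c := lt_of_lt_of_le hy3 hcmem.1
      rw [this] at h5
      exact lt_irrefl 0 h5
    · exact absurd ((hcrit x).mp h0) (ne_of_gt hx)
    · exact hposs
  have hV'nonneg : ∀ x : ℝ, 0 ≤ x → 0 ≤ deriv V x := by
    intro x hx
    rcases eq_or_lt_of_le hx with h | h
    · rw [← h, hV'0]
    · exact (hV'pos x h).le
  -- continuity of ψ
  have contψ : ContinuousOn ψ (Ici 0) :=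
    fun t ht => ((hψ t ht).continuousAt).continuousWithinAt
  have contψb : Continuous (fun t => ψ (max t 0)) := by
    rw [continuous_iff_continuousAt]
    intro t
    exact ContinuousAt.comp ((hψ _ (le_max_right t 0)).continuousAt)
      ((continuous_id.max continuous_const).continuousAt)
  -- Lipschitz bound for V' near 0
  obtain ⟨M, hM⟩ := (isCompact_Icc : IsCompact (Icc (0:ℝ) x₀)).exists_bound_of_continuousOn
    contV''.continuousOn
  have hMV' : ∀ x ∈ Icc (0:ℝ) x₀, deriv V x ≤ M * x := by
    intro x hx
    have h := Convex.norm_image_sub_le_of_norm_deriv_le (f := deriv V)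
      (fun y _ => hVd2 y) hM (convex_Icc 0 x₀) (left_mem_Icc.mpr hx₀.le) hx
    rw [hV'0, sub_zero, sub_zero, Real.norm_eq_abs, Real.norm_eq_abs, abs_of_nonneg hx.1] at h
    calc deriv V x ≤ |deriv V x| := le_abs_self _
      _ ≤ M * x := h
  -- ψ stays positive
  have hpos : ∀ t : ℝ, 0 ≤ t → 0 < ψ t := by
    by_contra hcon
    push_neg at hcon
    obtain ⟨t₁, ht₁0, ht₁⟩ := hcon
    set S : Set ℝ := {t | 0 ≤ t ∧ ψ (max t 0) ≤ 0} with hSdef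
    have hSne : S.Nonempty := ⟨t₁, ht₁0, by rwa [max_eq_left ht₁0]⟩
    have hSc : IsClosed S := by
      have : S = {t | 0 ≤ t} ∩ {t | ψ (max t 0) ≤ 0} := rfl
      rw [this]
      exact (isClosed_le continuous_const continuous_id).inter
        (isClosed_le contψb continuous_const)
    have hSbdd : BddBelow S := ⟨0, fun s hs => hs.1⟩
    set T := sInf S with hTdef
    have hTS : T ∈ S := hSc.csInf_mem hSne hSbdd
    have hT0 : 0 ≤ T := hTS.1
    have hψT : ψ T ≤ 0 := by
      have := hTS.2
      rwa [max_eq_left hT0] at this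
    have hlt : ∀ s, 0 ≤ s → s < T → 0 < ψ s := by
      intro s hs hsT
      by_contra hc
      push_neg at hc
      have hmem : s ∈ S := ⟨hs, by rwa [max_eq_left hs]⟩
      exact absurd (csInf_le hSbdd hmem) (not_le.mpr hsT)
    have hcont : ContinuousOn ψ (Icc 0 T) := contψ.mono (fun s hs => hs.1)
    have hanti1 : AntitoneOn ψ (Icc 0 T) := by
      apply antitoneOn_of_deriv_nonpos (convex_Icc 0 T) hcont
      · intro s hs
        rw [interior_Icc] at hs
        exact ((hψ s hs.1.le).differentiableAt).differentiableWithinAt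
      · intro s hs
        rw [interior_Icc] at hs
        rw [(hψ s hs.1.le).deriv]
        have := hV'nonneg (ψ s) (hlt s hs.1.le hs.2).le
        linarith
    have hle_x₀ : ∀ s ∈ Icc (0:ℝ) T, ψ s ≤ x₀ := by
      intro s hs
      have := hanti1 (left_mem_Icc.mpr hT0) hs hs.1
      rwa [hψ0] at this
    have hexp : ∀ s : ℝ, HasDerivAt (fun s => Real.exp (M * s)) (Real.exp (M * s) * M) s := by
      intro s
      have h := ((hasDerivAt_id s).const_mul M).exp
      simpa using h
    have hu : MonotoneOn (fun s => ψ s * Real.exp (M * s)) (Icc 0 T) := by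
      apply monotoneOn_of_deriv_nonneg (convex_Icc 0 T)
      · exact hcont.mul ((Real.continuous_exp.comp (continuous_const.mul continuous_id)).continuousOn)
      · intro s hs
        rw [interior_Icc] at hs
        exact (((hψ s hs.1.le).mul (hexp s)).differentiableAt).differentiableWithinAt
      · intro s hs
        rw [interior_Icc] at hs
        have hd : HasDerivAt (fun s => ψ s * Real.exp (M * s)) _ s := (hψ s hs.1.le).mul (hexp s)
        rw [hd.deriv]
        have hψs0 : 0 < ψ s := hlt s hs.1.le hs.2
        have hψsx : ψ s ≤ x₀ := hle_x₀ s ⟨hs.1.le, hs.2.le⟩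
        have h1 : deriv V (ψ s) ≤ M * ψ s := hMV' (ψ s) ⟨hψs0.le, hψsx⟩
        have he : 0 < Real.exp (M * s) := Real.exp_pos _
        nlinarith
    have h3 : ψ 0 * Real.exp (M * 0) ≤ ψ T * Real.exp (M * T) :=
      hu (left_mem_Icc.mpr hT0) (right_mem_Icc.mpr hT0) hT0
    rw [hψ0] at h3
    simp only [mul_zero, Real.exp_zero, mul_one] at h3
    have he : 0 < Real.exp (M * T) := Real.exp_pos _
    nlinarith
  -- ψ is antitone on [0, ∞)
  have hanti : AntitoneOn ψ (Ici 0) := by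
    apply antitoneOn_of_deriv_nonpos (convex_Ici 0) contψ
    · intro s hs
      rw [interior_Ici] at hs
      exact ((hψ s hs.le).differentiableAt).differentiableWithinAt
    · intro s hs
      rw [interior_Ici] at hs
      rw [(hψ s hs.le).deriv]
      have := hV'nonneg (ψ s) (hpos s hs.le).le
      linarith
  have hub : ∀ t : ℝ, 0 ≤ t → ψ t ≤ x₀ := by
    intro t ht
    have := hanti (self_mem_Ici) ht ht
    rwa [hψ0] at this
  -- ψ → 0
  have hlim : Tendsto ψ atTop (𝓝 0) := by
    rw [Metric.tendsto_atTop]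
    intro ε hε
    have hex : ∃ t₀ : ℝ, 0 ≤ t₀ ∧ ψ t₀ < ε := by
      by_contra hc
      push_neg at hc
      have hεx₀ : ε ≤ x₀ := by
        have := hc 0 le_rfl
        rwa [hψ0] at this
      obtain ⟨z, hz, hzmin⟩ := (isCompact_Icc : IsCompact (Icc ε x₀)).exists_isMinOn
        ⟨ε, left_mem_Icc.mpr hεx₀⟩ contV'.continuousOn
      have hc0 : 0 < deriv V z := hV'pos z (lt_of_lt_of_le hε hz.1)
      set c := deriv V z with hcdef
      set T := x₀ / c with hTdef
      have hTpos : 0 ≤ T := div_nonneg hx₀.le hc0.le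
      have hg : AntitoneOn (fun s => ψ s + c * s) (Icc 0 T) := by
        apply antitoneOn_of_deriv_nonpos (convex_Icc 0 T)
        · exact (contψ.mono (fun s hs => hs.1)).add
            ((continuous_const.mul continuous_id).continuousOn)
        · intro s hs
          rw [interior_Icc] at hs
          exact (((hψ s hs.1.le).add ((hasDerivAt_id s).const_mul c)).differentiableAt).differentiableWithinAt
        · intro s hs
          rw [interior_Icc] at hs
          have hd : HasDerivAt (fun s => ψ s + c * s) (-(deriv V (ψ s)) + c * 1) s :=
            (hψ s hs.1.le).add ((hasDerivAt_id s).const_mul c)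
          rw [hd.deriv]
          have hmem : ψ s ∈ Icc ε x₀ := ⟨hc s hs.1.le, hub s hs.1.le⟩
          have h4 : c ≤ deriv V (ψ s) := hzmin hmem
          simp only [mul_one]
          linarith
      have h3 : ψ T + c * T ≤ ψ 0 + c * 0 :=
        hg (left_mem_Icc.mpr hTpos) (right_mem_Icc.mpr hTpos) hTpos
      rw [hψ0] at h3
      have hcT : c * T = x₀ := by
        rw [hTdef, mul_comm, div_mul_cancel₀ _ (ne_of_gt hc0)]
      have hψTle : ψ T ≤ 0 := by
        simp only [mul_zero, add_zero] at h3
        linarith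
      exact absurd (hc T hTpos) (not_le.mpr (lt_of_le_of_lt hψTle hε))
    obtain ⟨t₀, ht₀, hψt₀⟩ := hex
    refine ⟨t₀, fun t ht => ?_⟩
    have h1 : ψ t ≤ ψ t₀ := hanti ht₀ (ht₀.trans ht) ht
    have h2 : 0 < ψ t := hpos t (ht₀.trans ht)
    rw [Real.dist_eq, sub_zero, abs_of_pos h2]
    linarith
  -- V'(ψ t) → 0
  have hg0 : Tendsto (fun t => deriv V (ψ t)) atTop (𝓝 0) := by
    have h := (contV'.tendsto 0).comp hlim
    rwa [hV'0] at h
  -- uniqueness : V'(x₀) Φ t = V'(ψ t)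
  have hkey : ∀ t : ℝ, 0 ≤ t → deriv V x₀ * Φ t = deriv V (ψ t) := by
    intro T hT
    set D : ℝ → ℝ := fun s => deriv V x₀ * Φ s - deriv V (ψ s) with hDdef
    have hD0 : D 0 = 0 := by simp [hDdef, hΦ0, hψ0]
    have hDd : ∀ s : ℝ, 0 ≤ s → HasDerivAt D (-(deriv (deriv V) (ψ s)) * D s) s := by
      intro s hs
      have h1 : HasDerivAt (fun s => deriv V (ψ s))
          (deriv (deriv V) (ψ s) * (-(deriv V (ψ s)))) s :=
        (hVd2 (ψ s)).hasDerivAt.comp s (hψ s hs)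
      have h2 : HasDerivAt (fun y => deriv V x₀ * Φ y - deriv V (ψ y)) _ s := ((hΦ s hs).const_mul (deriv V x₀)).sub h1
      convert h2 using 1
      simp only [hDdef]
      ring
    have hDcont : ContinuousOn D (Icc 0 T) :=
      fun s hs => ((hDd s hs.1).continuousAt).continuousWithinAt
    have hcontK : ContinuousOn (fun s => deriv (deriv V) (ψ s)) (Icc 0 T) :=
      contV''.comp_continuousOn (contψ.mono (fun s hs => hs.1))
    obtain ⟨K, hK⟩ := (isCompact_Icc : IsCompact (Icc (0:ℝ) T)).exists_bound_of_continuousOn hcontK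
    have hexp2 : ∀ s : ℝ, HasDerivAt (fun s => Real.exp (-(2*K) * s))
        (Real.exp (-(2*K) * s) * (-(2*K))) s := by
      intro s
      have h := ((hasDerivAt_id s).const_mul (-(2*K))).exp
      simpa using h
    have hu : AntitoneOn (fun s => D s ^ 2 * Real.exp (-(2*K) * s)) (Icc 0 T) := by
      apply antitoneOn_of_deriv_nonpos (convex_Icc 0 T)
      · exact (hDcont.pow 2).mul
          ((Real.continuous_exp.comp (continuous_const.mul continuous_id)).continuousOn)
      · intro s hs
        rw [interior_Icc] at hs
        exact ((((hDd s hs.1.le).pow 2).mul (hexp2 s)).differentiableAt).differentiableWithinAt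
      · intro s hs
        rw [interior_Icc] at hs
        have hd : HasDerivAt (fun y => D y ^ 2 * Real.exp (-(2*K) * y))
            (2 * D s * (-(deriv (deriv V) (ψ s)) * D s) * Real.exp (-(2*K) * s)
              + D s ^ 2 * (Real.exp (-(2*K) * s) * (-(2*K)))) s := by
          have hd0 : HasDerivAt (fun y => D y ^ 2 * Real.exp (-(2*K) * y)) _ s := ((hDd s hs.1.le).pow 2).mul (hexp2 s)
          convert hd0 using 1
          norm_num
        rw [hd.deriv]
        have hKs : -(deriv (deriv V) (ψ s)) ≤ K := by
          have := hK s ⟨hs.1.le, hs.2.le⟩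
          rw [Real.norm_eq_abs] at this
          have h2 := neg_abs_le (deriv (deriv V) (ψ s))
          linarith
        have he : 0 < Real.exp (-(2*K) * s) := Real.exp_pos _
        have hsq : 0 ≤ D s ^ 2 := sq_nonneg _
        nlinarith [mul_nonneg (mul_nonneg (sub_nonneg.mpr hKs) hsq) he.le]
    have h3 : D T ^ 2 * Real.exp (-(2*K) * T) ≤ D 0 ^ 2 * Real.exp (-(2*K) * 0) :=
      hu (left_mem_Icc.mpr hT) (right_mem_Icc.mpr hT) hT
    rw [hD0] at h3
    simp only [ne_eq, OfNat.ofNat_ne_zero, not_false_eq_true, zero_pow, zero_mul] at h3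
    have he : 0 < Real.exp (-(2*K) * T) := Real.exp_pos _
    have hsq : 0 ≤ D T ^ 2 := sq_nonneg _
    have hDT2 : D T ^ 2 = 0 := by nlinarith
    have hDT : D T = 0 := by
      exact pow_eq_zero_iff (M₀ := ℝ) (n := 2) (by norm_num) |>.mp hDT2
    have := hDT
    simp only [hDdef] at this
    linarith
  -- conclusion
  have hcne : deriv V x₀ ≠ 0 := by
    intro h
    exact absurd ((hcrit x₀).mp h) (ne_of_gt hx₀)
  have heq : (fun t => deriv V (ψ t) / deriv V x₀) =ᶠ[atTop] Φ := by
    filter_upwards [eventually_ge_atTop (0:ℝ)] with t ht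
    rw [eq_comm, eq_div_iff hcne, mul_comm]
    exact hkey t ht
  have hlim2 : Tendsto (fun t => deriv V (ψ t) / deriv V x₀) atTop (𝓝 0) := by
    simpa using hg0.div_const (deriv V x₀)
  exact hlim2.congr' heq

/-- For a regular potential `V`, the fundamental solution `Φ` of the
linearization along the gradient flow `ψ` tends to `0` as `t → +∞`. -/
theorem fundamental_solution_tendsto_zero
    (V ψ Φ : ℝ → ℝ) (x₀ : ℝ)
    (hV : ContDiff ℝ 3 V)
    (hV0 : V 0 = 0)
    (hcrit : ∀ x : ℝ, deriv V x = 0 ↔ x = 0)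
    (hV''0 : 0 < deriv (deriv V) 0)
    (hcoercive : Tendsto V (Filter.cocompact ℝ) atTop)
    (hx₀ : x₀ ≠ 0)
    (hψ0 : ψ 0 = x₀)
    (hψ : ∀ t : ℝ, 0 ≤ t → HasDerivAt ψ (-(deriv V (ψ t))) t)
    (hΦ0 : Φ 0 = 1)
    (hΦ : ∀ t : ℝ, 0 ≤ t → HasDerivAt Φ (-(deriv (deriv V) (ψ t)) * Φ t) t) :
    Tendsto Φ atTop (nhds 0) := by
  rcases hx₀.lt_or_gt with hneg | hpos
  · -- reflect : apply the aux lemma to x ↦ V(-x), t ↦ -ψ t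
    have hd1 : ∀ x : ℝ, deriv (fun x => V (-x)) x = -deriv V (-x) :=
      fun x => deriv_comp_neg V x
    have hd1' : deriv (fun x => V (-x)) = fun x => -deriv V (-x) := funext hd1
    have hd2 : ∀ x : ℝ, deriv (deriv (fun x => V (-x))) x = deriv (deriv V) (-x) := by
      intro x
      rw [hd1']
      rw [show (fun x => -deriv V (-x)) = fun x => -((fun y => deriv V (-y)) x) from rfl]
      rw [deriv.fun_neg, deriv_comp_neg (deriv V) x, neg_neg]
    apply fund_aux (fun x => V (-x)) (fun t => -ψ t) Φ (-x₀)
    · exact hV.comp contDiff_neg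
    · intro x
      rw [hd1 x, neg_eq_zero, hcrit (-x), neg_eq_zero]
    · rw [hd2 0, neg_zero]
      exact hV''0
    · exact neg_pos.mpr hneg
    · rw [hψ0]
    · intro t ht
      have h := (hψ t ht).neg
      rw [neg_neg] at h
      have : -(deriv (fun x => V (-x)) (-ψ t)) = deriv V (ψ t) := by
        rw [hd1 (-ψ t), neg_neg, neg_neg]
      rw [this]
      exact h
    · exact hΦ0
    · intro t ht
      have h := hΦ t ht
      have : deriv (deriv fun x => V (-x)) (-ψ t) = deriv (deriv V) (ψ t) := by
        rw [hd2 (-ψ t), neg_neg]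
      rw [this]
      exact h
  · exact fund_aux V ψ Φ x₀ hV hcrit hV''0 hpos hψ0 hψ hΦ0 hΦ
end

section
/- Let V be a regular potential and let ψ be the solution of the gradient flow dψ_t = -V'(ψ_t)dt with ψ_0 = x₀ ∈ ℝ \ {0}. Then there exists a constant c̃ ≠ 0 such that lim_{t→+∞} e^{V''(0)t} ψ_t = c̃. -/
open Filter Set

set_option maxHeartbeats 2000000 in
private lemma flow_pos_case
    (V ψ : ℝ → ℝ) (x₀ : ℝ)
    (hV : ContDiff ℝ 3 V)
    (hcrit : ∀ x : ℝ, deriv V x = 0 ↔ x = 0)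
    (hV''0 : 0 < deriv (deriv V) 0)
    (hx₀ : 0 < x₀)
    (hψ0 : ψ 0 = x₀)
    (hψ : ∀ t : ℝ, 0 ≤ t → HasDerivAt ψ (-(deriv V (ψ t))) t) :
    ∃ c : ℝ, 0 < c ∧
      Tendsto (fun t : ℝ => Real.exp (deriv (deriv V) 0 * t) * ψ t) atTop (nhds c) := by
  set lam := deriv (deriv V) 0 with hlam
  -- basic differentiability facts
  have h3 : ContDiff ℝ (2+1 : WithTop ℕ∞) V := hV
  have hVd : Differentiable ℝ V := (contDiff_succ_iff_deriv.mp h3).1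
  have hc2 : ContDiff ℝ (1+1 : WithTop ℕ∞) (deriv V) := (contDiff_succ_iff_deriv.mp h3).2.2
  have hV'd : Differentiable ℝ (deriv V) := (contDiff_succ_iff_deriv.mp hc2).1
  have hc1 : ContDiff ℝ (0+1 : WithTop ℕ∞) (deriv (deriv V)) :=
    (contDiff_succ_iff_deriv.mp hc2).2.2
  have hV''d : Differentiable ℝ (deriv (deriv V)) := (contDiff_succ_iff_deriv.mp hc1).1
  have hV'''c : Continuous (deriv (deriv (deriv V))) :=
    hc1.continuous_deriv (by norm_num)
  have contV' : Continuous (deriv V) := hc2.continuous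
  have hD1 : ∀ x : ℝ, HasDerivAt (deriv V) (deriv (deriv V) x) x :=
    fun x => (hV'd x).hasDerivAt
  have hV'0 : deriv V 0 = 0 := (hcrit 0).mpr rfl
  -- bound on third derivative on [-1,1]
  obtain ⟨M0, hM0⟩ := (isCompact_Icc (a := (-1:ℝ)) (b := 1)).exists_bound_of_continuousOn
    hV'''c.continuousOn
  set M : ℝ := max M0 0 with hM
  have hMnn : 0 ≤ M := le_max_right _ _
  have hMb : ∀ x ∈ Icc (-1:ℝ) 1, ‖deriv (deriv (deriv V)) x‖ ≤ M := fun x hx =>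
    le_trans (hM0 x hx) (le_max_left _ _)
  -- Lipschitz bound for V'' near 0
  have hlip : ∀ x ∈ Icc (0:ℝ) 1, ∀ y ∈ Icc (0:ℝ) x,
      |deriv (deriv V) y - lam| ≤ M * x := by
    intro x hx y hy
    have hsub : Icc (0:ℝ) x ⊆ Icc (-1:ℝ) 1 := fun z hz =>
      ⟨by linarith [hz.1], le_trans hz.2 hx.2⟩
    have h0x : (0:ℝ) ∈ Icc (0:ℝ) x := ⟨le_refl 0, hy.1.trans hy.2⟩
    have h2 := (convex_Icc (0:ℝ) x).norm_image_sub_le_of_norm_hasDerivWithin_le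
      (f := deriv (deriv V)) (f' := deriv (deriv (deriv V)))
      (fun z hz => ((hV''d z).hasDerivAt).hasDerivWithinAt)
      (fun z hz => hMb z (hsub hz)) h0x hy
    rw [Real.norm_eq_abs, Real.norm_eq_abs] at h2
    have hyx : |y - 0| ≤ x := by
      rw [sub_zero, abs_of_nonneg hy.1]; exact hy.2
    calc |deriv (deriv V) y - lam| ≤ M * |y - 0| := h2
      _ ≤ M * x := by nlinarith [abs_nonneg (y - 0)]
  -- Taylor-type bound for V' near 0
  have hTay : ∀ x ∈ Icc (0:ℝ) 1, |deriv V x - lam * x| ≤ M * x ^ 2 := by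
    intro x hx
    have hder : ∀ y ∈ Icc (0:ℝ) x,
        HasDerivWithinAt (fun z => deriv V z - lam * z)
          (deriv (deriv V) y - lam) (Icc (0:ℝ) x) y := by
      intro y hy
      have := (hD1 y).sub ((hasDerivAt_id y).const_mul lam)
      exact this.hasDerivWithinAt.congr_deriv (by ring)
    have hbd : ∀ y ∈ Icc (0:ℝ) x, ‖deriv (deriv V) y - lam‖ ≤ M * x := by
      intro y hy; rw [Real.norm_eq_abs]; exact hlip x hx y hy
    have h0x : (0:ℝ) ∈ Icc (0:ℝ) x := ⟨le_refl 0, hx.1⟩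
    have hxx : x ∈ Icc (0:ℝ) x := ⟨hx.1, le_refl x⟩
    have h4 := (convex_Icc (0:ℝ) x).norm_image_sub_le_of_norm_hasDerivWithin_le
      hder hbd h0x hxx
    rw [Real.norm_eq_abs, Real.norm_eq_abs, hV'0] at h4
    norm_num at h4
    rw [abs_of_nonneg hx.1] at h4
    calc |deriv V x - lam * x| ≤ M * x * x := h4
      _ = M * x ^ 2 := by ring
  -- choice of eps
  set eps : ℝ := min 1 (lam / (2 * (M + 1))) with heps
  have hepspos : 0 < eps := by
    apply lt_min one_pos
    positivity
  have heps1 : eps ≤ 1 := min_le_left _ _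
  have hkey : ∀ x ∈ Icc (0:ℝ) eps, |deriv V x - lam * x| ≤ lam / 2 * x := by
    intro x hx
    have hx1 : x ∈ Icc (0:ℝ) 1 := ⟨hx.1, hx.2.trans heps1⟩
    refine le_trans (hTay x hx1) ?_
    have hxe : x ≤ eps := hx.2
    have he2 : eps ≤ lam / (2 * (M + 1)) := min_le_right _ _
    have hMx : M * x ≤ lam / 2 := by
      have hxle : x ≤ lam / (2 * (M + 1)) := hxe.trans he2
      have h1 : M * x ≤ M * (lam / (2 * (M + 1))) := by nlinarith
      have h2 : M * (lam / (2 * (M + 1))) ≤ lam / 2 := by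
        rw [← mul_div_assoc, div_le_div_iff₀ (by positivity) (by norm_num)]
        nlinarith
      linarith
    nlinarith [hx.1]
  have hlow : ∀ x ∈ Icc (0:ℝ) eps, lam / 2 * x ≤ deriv V x := by
    intro x hx
    have := abs_le.mp (hkey x hx)
    nlinarith [this.1]
  have hup : ∀ x ∈ Icc (0:ℝ) eps, deriv V x ≤ 2 * lam * x := by
    intro x hx
    have := abs_le.mp (hkey x hx)
    nlinarith [this.2, hx.1]
  -- V' is positive on (0, ∞)
  have hpos : ∀ x : ℝ, 0 < x → 0 < deriv V x := by
    intro a ha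
    by_contra hcon
    push_neg at hcon
    have hne : deriv V a ≠ 0 := fun h => by
      have h2 := (hcrit a).mp h
      rw [h2] at ha; exact lt_irrefl 0 ha
    have hlt : deriv V a < 0 := lt_of_le_of_ne hcon hne
    set b : ℝ := min eps a / 2 with hb
    have hbpos : 0 < b := by
      have := lt_min hepspos ha; positivity
    have hba : b < a := by
      have : min eps a ≤ a := min_le_right _ _
      rw [hb]; linarith
    have hbe : b ≤ eps := by
      have : min eps a ≤ eps := min_le_left _ _
      rw [hb]; linarith
    have hVb : 0 < deriv V b := by
      have := hlow b ⟨hbpos.le, hbe⟩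
      nlinarith
    have hmem : (0:ℝ) ∈ Ioo (deriv V a) (deriv V b) := ⟨hlt, hVb⟩
    obtain ⟨x, hx, hfx⟩ := intermediate_value_Ioo' (le_of_lt hba)
      (contV'.continuousOn (s := Icc b a)) hmem
    have hx0 := (hcrit x).mp hfx
    rw [hx0] at hx
    exact lt_irrefl 0 (hbpos.trans hx.1)
  -- continuity of ψ on [0,∞)
  have hcont : ∀ s : ℝ, 0 ≤ s → ContinuousAt ψ s := fun s hs => (hψ s hs).continuousAt
  -- ψ stays positive
  have hψpos : ∀ t : ℝ, 0 ≤ t → 0 < ψ t := by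
    by_contra hcon
    push_neg at hcon
    obtain ⟨t, ht, htle⟩ := hcon
    set S : Set ℝ := {s | 0 ≤ s ∧ ψ s ≤ 0} with hS
    have hSne : S.Nonempty := ⟨t, ht, htle⟩
    have hSbdd : BddBelow S := ⟨0, fun s hs => hs.1⟩
    have hSclosed : IsClosed S := by
      apply IsSeqClosed.isClosed
      intro xs x hxs hxn
      have hx0 : 0 ≤ x := ge_of_tendsto hxn (Eventually.of_forall fun n => (hxs n).1)
      have : Tendsto (fun n => ψ (xs n)) atTop (nhds (ψ x)) :=
        ((hcont x hx0).tendsto).comp hxn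
      exact ⟨hx0, le_of_tendsto this (Eventually.of_forall fun n => (hxs n).2)⟩
    set t₀ : ℝ := sInf S with ht₀
    have ht₀mem : t₀ ∈ S := hSclosed.csInf_mem hSne hSbdd
    have ht₀0 : 0 ≤ t₀ := ht₀mem.1
    have ht₀pos : 0 < t₀ := by
      rcases lt_or_eq_of_le ht₀0 with h | h
      · exact h
      · exfalso; have h2 := ht₀mem.2; rw [← h, hψ0] at h2; linarith
    have hprev : ∀ s : ℝ, 0 ≤ s → s < t₀ → 0 < ψ s := by
      intro s hs hst
      by_contra hcs
      push_neg at hcs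
      have : s ∈ S := ⟨hs, hcs⟩
      have := csInf_le hSbdd this
      linarith
    have hψt₀0 : ψ t₀ = 0 := by
      have hle : ψ t₀ ≤ 0 := ht₀mem.2
      have hgt : 0 ≤ ψ t₀ := by
        have htend : Tendsto ψ (nhdsWithin t₀ (Iio t₀)) (nhds (ψ t₀)) :=
          ((hcont t₀ ht₀0).continuousWithinAt).tendsto
        have hev : ∀ᶠ s in nhdsWithin t₀ (Iio t₀), 0 ≤ ψ s := by
          filter_upwards [Ioo_mem_nhdsLT_of_mem (a := (0:ℝ))
            ⟨ht₀pos, le_refl t₀⟩] with s hs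
          exact (hprev s hs.1.le hs.2).le
        exact ge_of_tendsto htend hev
      linarith
    -- continuity: ψ < eps near t₀
    have hev : ∀ᶠ s in nhds t₀, ψ s < eps := by
      have h5 := (hcont t₀ ht₀0).tendsto
      rw [hψt₀0] at h5
      exact h5 (Iio_mem_nhds hepspos)
    obtain ⟨δ, hδpos, hδ⟩ := Metric.eventually_nhds_iff.mp hev
    set t₁ : ℝ := max (t₀ - δ / 2) (t₀ / 2) with ht₁
    have ht₁pos : 0 < t₁ := lt_of_lt_of_le (by linarith) (le_max_right _ _)
    have ht₁lt : t₁ < t₀ := by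
      apply max_lt <;> linarith
    have ht₁near : t₀ - t₁ < δ := by
      have : t₀ - δ / 2 ≤ t₁ := le_max_left _ _
      linarith
    have hsmall : ∀ s ∈ Icc t₁ t₀, ψ s < eps := by
      intro s hs
      apply hδ
      rw [Real.dist_eq, abs_of_nonpos (by linarith [hs.2])]
      linarith [hs.1]
    have hnn : ∀ s ∈ Icc t₁ t₀, 0 ≤ ψ s := by
      intro s hs
      rcases lt_or_eq_of_le hs.2 with h | h
      · exact (hprev s (by linarith [hs.1]) h).le
      · rw [h, hψt₀0]
    -- monotone function e^{2 lam s} ψ s on [t₁, t₀]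
    set f : ℝ → ℝ := fun s => Real.exp (2 * lam * s) * ψ s with hf
    have hfd : ∀ s ∈ Icc t₁ t₀, HasDerivAt f
        (Real.exp (2 * lam * s) * (2 * lam) * ψ s
          + Real.exp (2 * lam * s) * (-(deriv V (ψ s)))) s := by
      intro s hs
      have h1 : HasDerivAt (fun y : ℝ => 2 * lam * y) (2 * lam) s := by
        simpa using (hasDerivAt_id s).const_mul (2 * lam)
      have h2 := (Real.hasDerivAt_exp (2 * lam * s)).comp s h1
      have h3 := h2.mul (hψ s (by linarith [hs.1]))
      exact h3.congr_deriv (by rw [Function.comp_apply])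
    have hmono : MonotoneOn f (Icc t₁ t₀) := by
      apply monotoneOn_of_deriv_nonneg (convex_Icc _ _)
      · intro s hs
        exact ((hfd s hs).continuousAt).continuousWithinAt
      · intro s hs
        rw [interior_Icc] at hs
        exact ((hfd s (Ioo_subset_Icc_self hs)).differentiableAt).differentiableWithinAt
      · intro s hs
        rw [interior_Icc] at hs
        have hs' := Ioo_subset_Icc_self hs
        rw [(hfd s hs').deriv]
        have hmem : ψ s ∈ Icc (0:ℝ) eps := ⟨hnn s hs', (hsmall s hs').le⟩
        have := hup (ψ s) hmem
        have he : 0 < Real.exp (2 * lam * s) := Real.exp_pos _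
        nlinarith
    have h1 := hmono ⟨le_refl t₁, ht₁lt.le⟩ ⟨ht₁lt.le, le_refl t₀⟩ ht₁lt.le
    have hft₁ : 0 < f t₁ := by
      have := hprev t₁ ht₁pos.le ht₁lt
      have he : 0 < Real.exp (2 * lam * t₁) := Real.exp_pos _
      rw [hf]; positivity
    rw [hf] at h1
    simp only at h1
    rw [hψt₀0, mul_zero] at h1
    rw [hf] at hft₁
    simp only at hft₁
    linarith
  -- ψ is antitone on [0,∞)
  have hanti : AntitoneOn ψ (Ici 0) := by
    apply antitoneOn_of_deriv_nonpos (convex_Ici _)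
    · intro s hs; exact (hcont s hs).continuousWithinAt
    · intro s hs
      rw [interior_Ici] at hs
      exact ((hψ s hs.le).differentiableAt).differentiableWithinAt
    · intro s hs
      rw [interior_Ici] at hs
      rw [(hψ s hs.le).deriv]
      have := hpos (ψ s) (hψpos s hs.le)
      linarith
  -- limit of ψ is 0
  set φ : ℝ → ℝ := fun t => ψ (max t 0) with hφ
  have hφanti : Antitone φ := by
    intro s t hst
    exact hanti (le_max_right s 0) (le_max_right t 0) (max_le_max hst (le_refl 0))
  have hφpos : ∀ t, 0 < φ t := fun t => hψpos _ (le_max_right t 0)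
  have hφbdd : BddBelow (range φ) := by
    refine ⟨0, fun y hy => ?_⟩
    obtain ⟨t, ht⟩ := hy
    exact ht ▸ (hφpos t).le
  have hφtend : Tendsto φ atTop (nhds (⨅ t, φ t)) := tendsto_atTop_ciInf hφanti hφbdd
  set L : ℝ := ⨅ t, φ t with hL
  have hL0 : 0 ≤ L := le_ciInf fun t => (hφpos t).le
  have hφL : ∀ t, L ≤ φ t := fun t => ciInf_le hφbdd t
  have hLzero : L = 0 := by
    by_contra hcon
    have hLpos : 0 < L := lt_of_le_of_ne hL0 (Ne.symm hcon)
    have hψL : ∀ t : ℝ, 0 ≤ t → L ≤ ψ t := by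
      intro t ht
      have h7 := hφL t
      simpa [hφ, max_eq_left ht] using h7
    have hψx₀ : ∀ t : ℝ, 0 ≤ t → ψ t ≤ x₀ := by
      intro t ht
      rw [← hψ0]
      exact hanti self_mem_Ici ht ht
    have hLx₀ : L ≤ x₀ := (hψL 0 le_rfl).trans_eq hψ0
    obtain ⟨z, hz, hzmin⟩ := (isCompact_Icc (a := L) (b := x₀)).exists_isMinOn
      (nonempty_Icc.mpr hLx₀) contV'.continuousOn
    set m : ℝ := deriv V z with hm
    have hmpos : 0 < m := hpos z (lt_of_lt_of_le hLpos hz.1)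
    set g : ℝ → ℝ := fun t => ψ t + m * t with hg
    have hganti : AntitoneOn g (Ici 0) := by
      apply antitoneOn_of_deriv_nonpos (convex_Ici _)
      · intro s hs
        exact ((hψ s hs).continuousAt.add
          ((continuous_const.mul continuous_id).continuousAt)).continuousWithinAt
      · intro s hs
        rw [interior_Ici] at hs
        have hd : HasDerivAt g (-(deriv V (ψ s)) + m) s := by
          exact ((hψ s hs.le).add ((hasDerivAt_id s).const_mul m)).congr_deriv (by ring)
        exact hd.differentiableAt.differentiableWithinAt
      · intro s hs
        rw [interior_Ici] at hs
        have hd : HasDerivAt g (-(deriv V (ψ s)) + m) s := by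
          exact ((hψ s hs.le).add ((hasDerivAt_id s).const_mul m)).congr_deriv (by ring)
        rw [hd.deriv]
        have hmem : ψ s ∈ Icc L x₀ := ⟨hψL s hs.le, hψx₀ s hs.le⟩
        have hmin : m ≤ deriv V (ψ s) := hzmin hmem
        nlinarith
    set T0 : ℝ := (x₀ - L) / m + 1 with hT0
    have hT0pos : 0 < T0 := by
      have h8 : 0 ≤ (x₀ - L) / m := div_nonneg (by linarith) hmpos.le
      rw [hT0]; linarith
    have hgle := hganti self_mem_Ici (mem_Ici.mpr hT0pos.le) hT0pos.le
    rw [hg] at hgle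
    simp only at hgle
    rw [hψ0] at hgle
    have hmT0 : m * T0 = (x₀ - L) + m := by
      rw [hT0]; field_simp
    have := hψL T0 hT0pos.le
    nlinarith
  have hψtend : Tendsto ψ atTop (nhds 0) := by
    rw [hLzero] at hφtend
    apply hφtend.congr'
    filter_upwards [eventually_ge_atTop (0:ℝ)] with t ht
    rw [hφ]; simp only; rw [max_eq_left ht]
  -- find T with ψ < eps beyond T
  obtain ⟨T, hT⟩ := (((hψtend.eventually (Iio_mem_nhds hepspos)).and
    (eventually_ge_atTop (0:ℝ)))).exists_forall_of_atTop
  have hTmem : ∀ t : ℝ, T ≤ t → 0 ≤ t ∧ ψ t < eps := fun t ht => ⟨(hT t ht).2, (hT t ht).1⟩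
  have hT0 : 0 ≤ T := (hTmem T le_rfl).1
  -- exponential decay beyond T
  set C : ℝ := Real.exp (lam / 2 * T) * ψ T with hC
  have hCpos : 0 < C := by
    have := hψpos T hT0
    rw [hC]; positivity
  have hdecay : ∀ t : ℝ, T ≤ t → ψ t ≤ C * Real.exp (-(lam / 2) * t) := by
    intro t ht
    set g2 : ℝ → ℝ := fun s => Real.exp (lam / 2 * s) * ψ s with hg2
    have hg2d : ∀ s ∈ Icc T t, HasDerivAt g2
        (Real.exp (lam / 2 * s) * (lam / 2) * ψ s
          + Real.exp (lam / 2 * s) * (-(deriv V (ψ s)))) s := by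
      intro s hs
      have h1 : HasDerivAt (fun y : ℝ => lam / 2 * y) (lam / 2) s := by
        simpa using (hasDerivAt_id s).const_mul (lam / 2)
      have h2 := (Real.hasDerivAt_exp (lam / 2 * s)).comp s h1
      have h3 := h2.mul (hψ s (hT0.trans hs.1))
      exact h3.congr_deriv (by rw [Function.comp_apply])
    have hanti2 : AntitoneOn g2 (Icc T t) := by
      apply antitoneOn_of_deriv_nonpos (convex_Icc _ _)
      · intro s hs; exact ((hg2d s hs).continuousAt).continuousWithinAt
      · intro s hs
        rw [interior_Icc] at hs
        exact ((hg2d s (Ioo_subset_Icc_self hs)).differentiableAt).differentiableWithinAt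
      · intro s hs
        rw [interior_Icc] at hs
        have hs' := Ioo_subset_Icc_self hs
        rw [(hg2d s hs').deriv]
        have hst : T ≤ s := hs'.1
        have hmem : ψ s ∈ Icc (0:ℝ) eps :=
          ⟨(hψpos s (hT0.trans hst)).le, (hTmem s hst).2.le⟩
        have := hlow (ψ s) hmem
        have he : 0 < Real.exp (lam / 2 * s) := Real.exp_pos _
        nlinarith
    have hee : Real.exp (lam / 2 * t) * ψ t ≤ C :=
      hanti2 ⟨le_refl T, ht⟩ ⟨ht, le_refl t⟩ ht
    have hepos : 0 < Real.exp (lam / 2 * t) := Real.exp_pos _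
    rw [show -(lam / 2) * t = -(lam / 2 * t) by ring, Real.exp_neg, mul_comm C,
      inv_mul_eq_div, le_div_iff₀ hepos]
    calc ψ t * Real.exp (lam / 2 * t) = Real.exp (lam / 2 * t) * ψ t := mul_comm _ _
      _ ≤ C := hee
  -- the function u = lam * t + log (ψ t)
  set u : ℝ → ℝ := fun t => lam * t + Real.log (ψ t) with hu
  have hud : ∀ t : ℝ, 0 ≤ t → HasDerivAt u (lam + -(deriv V (ψ t)) / ψ t) t := by
    intro t ht
    have h1 : HasDerivAt (fun y : ℝ => lam * y) lam t := by
      simpa using (hasDerivAt_id t).const_mul lam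
    exact h1.add ((hψ t ht).log (ne_of_gt (hψpos t ht)))
  have hubd : ∀ t : ℝ, T ≤ t →
      |lam + -(deriv V (ψ t)) / ψ t| ≤ M * C * Real.exp (-(lam / 2) * t) := by
    intro t ht
    have hψt : 0 < ψ t := hψpos t (hT0.trans ht)
    have hmem : ψ t ∈ Icc (0:ℝ) 1 := ⟨hψt.le, ((hTmem t ht).2.le.trans heps1)⟩
    have h1 : |deriv V (ψ t) - lam * ψ t| ≤ M * (ψ t) ^ 2 := hTay (ψ t) hmem
    have hne : ψ t ≠ 0 := hψt.ne'
    have heq : lam + -(deriv V (ψ t)) / ψ t = -((deriv V (ψ t) - lam * ψ t) / ψ t) := by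
      field_simp
      ring
    rw [heq, abs_neg, abs_div, abs_of_pos hψt, div_le_iff₀ hψt]
    have h2 : ψ t ≤ C * Real.exp (-(lam / 2) * t) := hdecay t ht
    calc |deriv V (ψ t) - lam * ψ t| ≤ M * (ψ t) ^ 2 := h1
      _ ≤ M * (C * Real.exp (-(lam / 2) * t)) * ψ t := by
          nlinarith [mul_nonneg (mul_nonneg hMnn hψt.le) (sub_nonneg.mpr h2), hψt.le]
      _ = M * C * Real.exp (-(lam / 2) * t) * ψ t := by ring
  -- the correction term r
  set K : ℝ := 2 * M * C / lam with hK
  have hKnn : 0 ≤ K := by positivity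
  set r : ℝ → ℝ := fun t => K * Real.exp (-(lam / 2) * t) with hr
  have hrd : ∀ t : ℝ, HasDerivAt r (-(M * C) * Real.exp (-(lam / 2) * t)) t := by
    intro t
    have h1 : HasDerivAt (fun y : ℝ => -(lam / 2) * y) (-(lam / 2)) t := by
      simpa using (hasDerivAt_id t).const_mul (-(lam / 2))
    have h2 := ((Real.hasDerivAt_exp (-(lam / 2) * t)).comp t h1).const_mul K
    refine h2.congr_deriv ?_
    rw [hK]
    field_simp
  -- u + r antitone, u - r monotone on [T,∞)
  have hAanti : AntitoneOn (fun t => u t + r t) (Ici T) := by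
    apply antitoneOn_of_deriv_nonpos (convex_Ici _)
    · intro s hs
      exact (((hud s (hT0.trans hs)).add (hrd s)).continuousAt).continuousWithinAt
    · intro s hs
      rw [interior_Ici] at hs
      exact (((hud s (hT0.trans hs.le)).add (hrd s)).differentiableAt).differentiableWithinAt
    · intro s hs
      rw [interior_Ici] at hs
      rw [show (fun t => u t + r t) = u + r from rfl, ((hud s (hT0.trans hs.le)).add (hrd s)).deriv]
      have := abs_le.mp (hubd s hs.le)
      linarith [this.2]
  have hBmono : MonotoneOn (fun t => u t - r t) (Ici T) := by
    apply monotoneOn_of_deriv_nonneg (convex_Ici _)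
    · intro s hs
      exact (((hud s (hT0.trans hs)).sub (hrd s)).continuousAt).continuousWithinAt
    · intro s hs
      rw [interior_Ici] at hs
      exact (((hud s (hT0.trans hs.le)).sub (hrd s)).differentiableAt).differentiableWithinAt
    · intro s hs
      rw [interior_Ici] at hs
      rw [show (fun t => u t - r t) = u - r from rfl, ((hud s (hT0.trans hs.le)).sub (hrd s)).deriv]
      have := abs_le.mp (hubd s hs.le)
      linarith [this.1]
  -- convergence of u + r
  set A : ℝ → ℝ := fun t => u (max t T) + r (max t T) with hA
  have hAanti' : Antitone A := fun s t hst =>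
    hAanti (le_max_right s T) (le_max_right t T) (max_le_max hst le_rfl)
  have hAbdd : BddBelow (range A) := by
    refine ⟨u T - r T, fun y hy => ?_⟩
    obtain ⟨t, ht⟩ := hy
    rw [← ht, hA]
    have h1 := hBmono self_mem_Ici (mem_Ici.mpr (le_max_right t T)) (le_max_right t T)
    have h2 : 0 ≤ r (max t T) := by rw [hr]; positivity
    simp only at h1 ⊢
    linarith
  have hAtend : Tendsto A atTop (nhds (⨅ t, A t)) := tendsto_atTop_ciInf hAanti' hAbdd
  set l : ℝ := ⨅ t, A t with hl
  have hrtend : Tendsto r atTop (nhds 0) := by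
    rw [hr, show (0:ℝ) = K * 0 by ring]
    apply Tendsto.const_mul
    apply Real.tendsto_exp_atBot.comp
    exact (tendsto_id (α := ℝ)).const_mul_atTop_of_neg (by linarith)
  have hutend : Tendsto u atTop (nhds l) := by
    have h1 : Tendsto (fun t => A t - r t) atTop (nhds (l - 0)) := hAtend.sub hrtend
    rw [sub_zero] at h1
    apply h1.congr'
    filter_upwards [eventually_ge_atTop T] with t ht
    simp only [hA]
    rw [max_eq_left ht]
    ring
  refine ⟨Real.exp l, Real.exp_pos l, ?_⟩
  have hexp : Tendsto (fun t => Real.exp (u t)) atTop (nhds (Real.exp l)) :=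
    (Real.continuous_exp.continuousAt.tendsto).comp hutend
  apply hexp.congr'
  filter_upwards [eventually_ge_atTop (0:ℝ)] with t ht
  rw [hu]
  simp only
  rw [Real.exp_add, Real.exp_log (hψpos t ht)]

/-- For a regular potential `V` and the gradient flow `ψ` started at
`x₀ ≠ 0`, there is a constant `c̃ ≠ 0` with `e^{V''(0) t} ψ t → c̃` as `t → +∞`. -/
theorem exp_mul_flow_tendsto_const
    (V ψ : ℝ → ℝ) (x₀ : ℝ)
    (hV : ContDiff ℝ 3 V)
    (hV0 : V 0 = 0)
    (hcrit : ∀ x : ℝ, deriv V x = 0 ↔ x = 0)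
    (hV''0 : 0 < deriv (deriv V) 0)
    (hcoercive : Tendsto V (Filter.cocompact ℝ) atTop)
    (hx₀ : x₀ ≠ 0)
    (hψ0 : ψ 0 = x₀)
    (hψ : ∀ t : ℝ, 0 ≤ t → HasDerivAt ψ (-(deriv V (ψ t))) t) :
    ∃ c : ℝ, c ≠ 0 ∧
      Tendsto (fun t : ℝ => Real.exp (deriv (deriv V) 0 * t) * ψ t) atTop (nhds c) := by
  rcases hx₀.lt_or_gt with hneg | hposx
  · -- x₀ < 0 : apply the positive case to W = V ∘ (-·), φ = -ψ
    set W : ℝ → ℝ := fun x => V (-x) with hW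
    have h3 : ContDiff ℝ (2+1 : WithTop ℕ∞) V := hV
    have hVd : Differentiable ℝ V := (contDiff_succ_iff_deriv.mp h3).1
    have hc2 : ContDiff ℝ (1+1 : WithTop ℕ∞) (deriv V) := (contDiff_succ_iff_deriv.mp h3).2.2
    have hV'd : Differentiable ℝ (deriv V) := (contDiff_succ_iff_deriv.mp hc2).1
    have hWc : ContDiff ℝ 3 W := hV.comp (contDiff_id.neg)
    have hWd : ∀ x : ℝ, HasDerivAt W (-(deriv V (-x))) x := by
      intro x
      have h1 := ((hVd (-x)).hasDerivAt).comp x (hasDerivAt_neg x)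
      exact h1.congr_deriv (by ring)
    have hderivW : deriv W = fun x => -(deriv V (-x)) := funext fun x => (hWd x).deriv
    have hWcrit : ∀ x : ℝ, deriv W x = 0 ↔ x = 0 := by
      intro x
      rw [hderivW]
      simp only [neg_eq_zero]
      rw [hcrit (-x)]
      constructor
      · intro h; linarith
      · intro h; rw [h]; ring
    have hW2 : deriv (deriv W) 0 = deriv (deriv V) 0 := by
      rw [hderivW]
      have h1 : HasDerivAt (fun x : ℝ => -(deriv V (-x))) (deriv (deriv V) 0) 0 := by
        have h2 := ((hV'd (-0 : ℝ)).hasDerivAt).comp 0 (hasDerivAt_neg (0:ℝ))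
        have h3 := h2.neg
        exact h3.congr_deriv (by simp)
      exact h1.deriv
    set φ : ℝ → ℝ := fun t => -ψ t with hφ
    have hφ0 : φ 0 = -x₀ := by rw [hφ]; simp [hψ0]
    have hφd : ∀ t : ℝ, 0 ≤ t → HasDerivAt φ (-(deriv W (φ t))) t := by
      intro t ht
      have h1 := (hψ t ht).neg
      have h2 : -(deriv W (φ t)) = deriv V (ψ t) := by
        rw [hderivW, hφ]
        simp
      rw [h2]
      exact h1.congr_deriv (by ring)
    obtain ⟨c, hcpos, hctend⟩ := flow_pos_case W φ (-x₀) hWc hWcrit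
      (by rw [hW2]; exact hV''0) (by linarith) hφ0 hφd
    refine ⟨-c, by simp [ne_of_gt hcpos], ?_⟩
    rw [hW2] at hctend
    have := hctend.neg
    apply this.congr
    intro t
    rw [hφ]
    simp only
    ring
  · obtain ⟨c, hcpos, hctend⟩ := flow_pos_case V ψ x₀ hV hcrit hV''0 hposx hψ0 hψ
    exact ⟨c, ne_of_gt hcpos, hctend⟩
end

section
/- Let V be a regular potential, let ψ be the solution of the gradient flow dψ_t = -V'(ψ_t)dt with ψ_0 = x₀ ∈ ℝ \ {0}, and let Φ be the fundamental solution of dΦ_t = -V''(ψ_t)Φ_t dt with Φ_0 = 1. Then there exists a constant c ≠ 0 such that lim_{t→+∞} e^{V''(0)t} Φ_t = c. -/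
open Filter Set

lemma antitoneOn_Ici_of_hasDerivAt {f f' : ℝ → ℝ} {c : ℝ}
    (hf : ∀ t ∈ Ici c, HasDerivAt f (f' t) t) (h' : ∀ t ∈ Ici c, f' t ≤ 0) :
    AntitoneOn f (Ici c) := by
  apply antitoneOn_of_deriv_nonpos (convex_Ici c)
  · exact fun t ht => (hf t ht).continuousAt.continuousWithinAt
  · intro t ht
    rw [interior_Ici] at ht
    exact ((hf t (mem_Ici.mpr ht.le)).differentiableAt).differentiableWithinAt
  · intro t ht
    rw [interior_Ici] at ht
    rw [(hf t (mem_Ici.mpr ht.le)).deriv]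
    exact h' t (mem_Ici.mpr ht.le)

lemma abs_le_of_mul_self_le_mul_self {x y : ℝ} (hy : 0 ≤ y) (h : x * x ≤ y * y) : |x| ≤ y := by
  nlinarith [abs_mul_abs_self x, abs_nonneg x, le_abs_self x, neg_abs_le x]

section main
variable (V ψ Φ : ℝ → ℝ) (x₀ : ℝ)
    (hV : ContDiff ℝ 3 V)
    (hcrit : ∀ x : ℝ, deriv V x = 0 ↔ x = 0)
    (hV''0 : 0 < deriv (deriv V) 0)
    (hx₀ : x₀ ≠ 0)
    (hψ0 : ψ 0 = x₀)
    (hψ : ∀ t : ℝ, 0 ≤ t → HasDerivAt ψ (-(deriv V (ψ t))) t)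

-- sign of derivative
include hV hcrit hV''0 in
lemma sign_fact : ∀ x : ℝ, x ≠ 0 → 0 < x * deriv V x := by
  have hd2 : ContDiff ℝ 2 (deriv V) := by
    have := (contDiff_succ_iff_deriv (n := 2) (f := V)).mp (by norm_num at hV ⊢; exact hV)
    exact this.2.2
  have hV'0 : deriv V 0 = 0 := (hcrit 0).mpr rfl
  have hdd : HasDerivAt (deriv V) (deriv (deriv V) 0) 0 :=
    ((hd2.differentiable (by norm_num)) 0).hasDerivAt
  have hslope := hasDerivAt_iff_tendsto_slope.mp hdd
  have hev : ∀ᶠ x in nhdsWithin (0:ℝ) {(0:ℝ)}ᶜ, 0 < slope (deriv V) 0 x :=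
    hslope.eventually (eventually_gt_nhds hV''0)
  rw [eventually_nhdsWithin_iff] at hev
  rw [Metric.eventually_nhds_iff] at hev
  obtain ⟨δ, hδ, hδs⟩ := hev
  have hsmall : ∀ x : ℝ, x ≠ 0 → |x| < δ → 0 < x * deriv V x := by
    intro x hx hxδ
    have := hδs (by simpa [Real.dist_eq] using hxδ) hx
    rw [slope_def_field, hV'0, sub_zero, sub_zero] at this
    rcases lt_or_gt_of_ne hx with h | h
    · have : deriv V x / x * x < 0 := mul_neg_of_pos_of_neg this h
      rw [div_mul_cancel₀ _ hx] at this
      nlinarith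
    · have : 0 < deriv V x / x * x := mul_pos ‹0 < deriv V x / x› h
      rw [div_mul_cancel₀ _ hx] at this
      nlinarith
  have hcont : Continuous (deriv V) := (hd2.differentiable (by norm_num)).continuous
  intro x hx
  rcases lt_or_ge |x| δ with h | h
  · exact hsmall x hx h
  -- |x| ≥ δ; pick x1 = sign x * δ/2
  rcases lt_or_gt_of_ne hx with hneg | hpos
  · -- x < 0; x1 := -δ/2, f x1 < 0 from hsmall
    have hx1 : 0 < (-(δ/2)) * deriv V (-(δ/2)) := hsmall _ (by linarith) (by rw [abs_of_nonpos (by linarith)]; linarith)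
    have hfx1 : deriv V (-(δ/2)) < 0 := by nlinarith
    by_contra hcon
    push_neg at hcon
    have hfx : 0 < deriv V x := by
      rcases lt_trichotomy (deriv V x) 0 with h1 | h1 | h1
      · nlinarith
      · exact absurd ((hcrit x).mp h1) hx
      · exact h1
    have hxle : x ≤ -(δ/2) := by
      rw [abs_of_neg hneg] at h; linarith
    have hsub := intermediate_value_Icc' hxle hcont.continuousOn
    have h0m : (0:ℝ) ∈ Icc (deriv V (-(δ/2))) (deriv V x) := ⟨hfx1.le, hfx.le⟩
    obtain ⟨z, hz, hz0⟩ := hsub h0m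
    have : z = 0 := (hcrit z).mp hz0
    have : z ≤ -(δ/2) := hz.2
    linarith
  · -- x > 0
    have hx1 : 0 < (δ/2) * deriv V (δ/2) := hsmall _ (by linarith) (by rw [abs_of_pos (by linarith)]; linarith)
    have hfx1 : 0 < deriv V (δ/2) := by nlinarith
    by_contra hcon
    push_neg at hcon
    have hfx : deriv V x < 0 := by
      rcases lt_trichotomy (deriv V x) 0 with h1 | h1 | h1
      · exact h1
      · exact absurd ((hcrit x).mp h1) hx
      · nlinarith
    have hxle : (δ/2) ≤ x := by
      rw [abs_of_pos hpos] at h; linarith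
    have hsub := intermediate_value_Icc' hxle hcont.continuousOn
    have h0m : (0:ℝ) ∈ Icc (deriv V x) (deriv V (δ/2)) := ⟨hfx.le, hfx1.le⟩
    obtain ⟨z, hz, hz0⟩ := hsub h0m
    have : z = 0 := (hcrit z).mp hz0
    have : (δ/2) ≤ z := hz.1
    linarith

include hV hcrit hV''0 hx₀ hψ0 hψ in
lemma u_tendsto : Tendsto (fun t => ψ t * ψ t) atTop (nhds 0) := by
  have hsf := sign_fact V hV hcrit hV''0
  have hd2 : ContDiff ℝ 2 (deriv V) := by
    have := (contDiff_succ_iff_deriv (n := 2) (f := V)).mp (by norm_num at hV ⊢; exact hV)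
    exact this.2.2
  have hcont : Continuous (deriv V) := (hd2.differentiable (by norm_num)).continuous
  have hxf : ∀ x : ℝ, 0 ≤ x * deriv V x := by
    intro x
    rcases eq_or_ne x 0 with h | h
    · simp [h]
    · exact (hsf x h).le
  set u : ℝ → ℝ := fun t => ψ t * ψ t with hu_def
  have hu' : ∀ t ∈ Ici (0:ℝ), HasDerivAt u (-(2 * (ψ t * deriv V (ψ t)))) t := by
    intro t ht
    have this : HasDerivAt (fun y => ψ y * ψ y) _ t := (hψ t ht).mul (hψ t ht)
    convert this using 1
    ring
  have hu_anti : AntitoneOn u (Ici 0) :=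
    antitoneOn_Ici_of_hasDerivAt hu' (fun t ht => by nlinarith [hxf (ψ t)])
  set v : ℝ → ℝ := fun t => u (max t 0) with hv_def
  have hv_anti : Antitone v := fun s t hst =>
    hu_anti (le_max_right s 0) (le_max_right t 0) (max_le_max hst le_rfl)
  have hbdd : BddBelow (Set.range v) := ⟨0, by rintro y ⟨t, rfl⟩; exact mul_self_nonneg _⟩
  have htv : Tendsto v atTop (nhds (⨅ t, v t)) := tendsto_atTop_ciInf hv_anti hbdd
  set ℓ := ⨅ t, v t with hℓ_def
  have hℓ0 : 0 ≤ ℓ := le_ciInf fun t => mul_self_nonneg _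
  have huv : u =ᶠ[atTop] v := by
    filter_upwards [eventually_ge_atTop (0:ℝ)] with t ht
    simp [hv_def, max_eq_left ht]
  have hul : ∀ t : ℝ, 0 ≤ t → ℓ ≤ u t := by
    intro t ht
    have := ciInf_le hbdd t
    simpa [hv_def, max_eq_left ht] using this
  have hℓ : ℓ = 0 := by
    by_contra hne
    have hℓpos : 0 < ℓ := lt_of_le_of_ne hℓ0 (Ne.symm hne)
    set M := |x₀| with hM_def
    have hM : 0 < M := abs_pos.mpr hx₀
    have hu0 : u 0 = x₀ * x₀ := by simp [hu_def, hψ0]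
    have hψbd : ∀ t : ℝ, 0 ≤ t → |ψ t| ≤ M := by
      intro t ht
      have h1 : u t ≤ u 0 := hu_anti self_mem_Ici ht ht
      refine abs_le_of_mul_self_le_mul_self (abs_nonneg _) ?_
      rw [abs_mul_abs_self]
      rw [hu0] at h1
      exact h1
    set K : Set ℝ := Icc (-M) M ∩ {x | ℓ ≤ x * x} with hK_def
    have hKc : IsCompact K :=
      isCompact_Icc.inter_right (isClosed_le continuous_const (continuous_id.mul continuous_id))
    have hKne : K.Nonempty := by
      refine ⟨x₀, ⟨neg_abs_le _, le_abs_self _⟩, ?_⟩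
      have := hul 0 le_rfl
      rwa [hu0] at this
    obtain ⟨z, hzK, hzmin⟩ := hKc.exists_isMinOn hKne ((continuous_id.mul hcont).continuousOn)
    have hz0 : z ≠ 0 := by
      intro h
      have := hzK.2
      rw [h] at this
      simp at this
      linarith
    set δ := z * deriv V z with hδ_def
    have hδ : 0 < δ := hsf z hz0
    have hψK : ∀ t : ℝ, 0 ≤ t → ψ t ∈ K := by
      intro t ht
      refine ⟨⟨?_, ?_⟩, hul t ht⟩
      · have := hψbd t ht; have := neg_abs_le (ψ t); linarith
      · have := hψbd t ht; have := le_abs_self (ψ t); linarith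
    have h2 : AntitoneOn (fun t => u t + 2 * δ * t) (Ici 0) := by
      apply antitoneOn_Ici_of_hasDerivAt
        (f' := fun t => -(2 * (ψ t * deriv V (ψ t))) + 2 * δ)
      · intro t ht
        have this : HasDerivAt (fun t => u t + 2 * δ * t) _ t := (hu' t ht).add ((hasDerivAt_id t).const_mul (2 * δ))
        convert this using 1
        ring
      · intro t ht
        have h4 := hzmin (hψK t ht)
        simp only [Set.mem_setOf_eq, Pi.mul_apply, id_eq] at h4
        rw [hδ_def]
        linarith
    set t₁ : ℝ := u 0 / (2 * δ) + 1 with ht₁_def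
    have h2δ : 0 < 2 * δ := by linarith
    have hu00 : 0 ≤ u 0 := mul_self_nonneg _
    have ht₁0 : 0 ≤ t₁ := by
      have := div_nonneg hu00 h2δ.le
      rw [ht₁_def]; linarith
    have hkey : 2 * δ * t₁ = u 0 + 2 * δ := by
      rw [ht₁_def]; field_simp
    have := h2 self_mem_Ici ht₁0 ht₁0
    simp only at this
    have hut₁ : 0 ≤ u t₁ := mul_self_nonneg _
    linarith
  rw [hℓ] at htv
  exact htv.congr' huv.symm

end main

set_option maxHeartbeats 2000000 in
open MeasureTheory intervalIntegral in
/-- For a regular potential `V`, the fundamental solution `Φ` of the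
linearization along the gradient flow `ψ` satisfies `e^{V''(0) t} Φ t → c` as
`t → +∞` for some constant `c ≠ 0`. -/
theorem exp_mul_fundamental_solution_tendsto_const
    (V ψ Φ : ℝ → ℝ) (x₀ : ℝ)
    (hV : ContDiff ℝ 3 V)
    (hV0 : V 0 = 0)
    (hcrit : ∀ x : ℝ, deriv V x = 0 ↔ x = 0)
    (hV''0 : 0 < deriv (deriv V) 0)
    (hcoercive : Tendsto V (Filter.cocompact ℝ) atTop)
    (hx₀ : x₀ ≠ 0)
    (hψ0 : ψ 0 = x₀)
    (hψ : ∀ t : ℝ, 0 ≤ t → HasDerivAt ψ (-(deriv V (ψ t))) t)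
    (hΦ0 : Φ 0 = 1)
    (hΦ : ∀ t : ℝ, 0 ≤ t → HasDerivAt Φ (-(deriv (deriv V) (ψ t)) * Φ t) t) :
    ∃ c : ℝ, c ≠ 0 ∧
      Tendsto (fun t : ℝ => Real.exp (deriv (deriv V) 0 * t) * Φ t) atTop (nhds c) := by
  clear hV0 hcoercive
  set a := deriv (deriv V) 0 with ha_def
  have hsf := sign_fact V hV hcrit hV''0
  have hut := u_tendsto V ψ x₀ hV hcrit hV''0 hx₀ hψ0 hψ
  -- differentiability bookkeeping
  have hd2 : ContDiff ℝ 2 (deriv V) := by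
    have := (contDiff_succ_iff_deriv (n := 2) (f := V)).mp (by norm_num at hV ⊢; exact hV)
    exact this.2.2
  have hd1 : ContDiff ℝ 1 (deriv (deriv V)) := by
    have := (contDiff_succ_iff_deriv (n := 1) (f := deriv V)).mp (by norm_num at hd2 ⊢; exact hd2)
    exact this.2.2
  have hV''cont : Continuous (deriv (deriv V)) := hd1.continuous
  have hd1diff : Differentiable ℝ (deriv (deriv V)) := (contDiff_one_iff_deriv.mp hd1).1
  have hV'''cont : Continuous (deriv (deriv (deriv V))) := (contDiff_one_iff_deriv.mp hd1).2
  have hV'diff : Differentiable ℝ (deriv V) := hd2.differentiable (by norm_num)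
  have hV'0 : deriv V 0 = 0 := (hcrit 0).mpr rfl
  -- the squared solution
  set u : ℝ → ℝ := fun t => ψ t * ψ t with hu_def
  have hu' : ∀ t ∈ Ici (0:ℝ), HasDerivAt u (-(2 * (ψ t * deriv V (ψ t)))) t := by
    intro t ht
    have this : HasDerivAt (fun y => ψ y * ψ y) _ t := (hψ t ht).mul (hψ t ht)
    convert this using 1
    ring
  have hxf : ∀ x : ℝ, 0 ≤ x * deriv V x := by
    intro x
    rcases eq_or_ne x 0 with h | h
    · simp [h]
    · exact (hsf x h).le
  have hu_anti : AntitoneOn u (Ici 0) :=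
    antitoneOn_Ici_of_hasDerivAt hu' (fun t ht => by nlinarith [hxf (ψ t)])
  set M := |x₀| with hM_def
  have hM : 0 < M := abs_pos.mpr hx₀
  have hu0 : u 0 = x₀ * x₀ := by simp [hu_def, hψ0]
  have hψbd : ∀ t : ℝ, 0 ≤ t → |ψ t| ≤ M := by
    intro t ht
    have h1 : u t ≤ u 0 := hu_anti self_mem_Ici ht ht
    refine abs_le_of_mul_self_le_mul_self (abs_nonneg _) ?_
    rw [abs_mul_abs_self]
    rw [hu0] at h1
    exact h1
  -- choose r
  obtain ⟨r', hr', hrs⟩ := Metric.continuousAt_iff.mp hV''cont.continuousAt (a/2) (by linarith)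
  set r := min (r'/2) M with hr_def
  have hrpos : 0 < r := lt_min (by linarith) hM
  have hrM : r ≤ M := min_le_right _ _
  have hrsmall : ∀ y : ℝ, |y| ≤ r → a/2 ≤ deriv (deriv V) y := by
    intro y hy
    have h1 : dist y 0 < r' := by
      rw [Real.dist_eq, sub_zero]
      have : r ≤ r'/2 := min_le_left _ _
      linarith
    have h2 := hrs h1
    rw [Real.dist_eq, ← ha_def] at h2
    have := abs_lt.mp h2
    linarith [this.1]
  -- quadratic lower bound on x * V'(x) near 0
  have hVlow : ∀ x : ℝ, |x| ≤ r → a/2 * (x*x) ≤ x * deriv V x := by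
    intro x hx
    have hxr := abs_le.mp hx
    rcases lt_trichotomy x 0 with hneg | rfl | hpos
    · obtain ⟨c, hc, hceq⟩ := exists_hasDerivAt_eq_slope (deriv V) (deriv (deriv V)) hneg
        hV'diff.continuous.continuousOn (fun y _ => (hV'diff y).hasDerivAt)
      rw [hV'0, zero_sub, zero_sub, neg_div_neg_eq] at hceq
      have hxne : x ≠ 0 := ne_of_lt hneg
      have hfx : deriv V x = deriv (deriv V) c * x := (div_eq_iff hxne).mp hceq.symm
      have hcr : |c| ≤ r := by
        rw [abs_le]
        exact ⟨by linarith [hc.1, hxr.1], by linarith [hc.2]⟩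
      have := hrsmall c hcr
      rw [hfx]
      nlinarith [mul_self_nonneg x]
    · simp [hV'0]
    · obtain ⟨c, hc, hceq⟩ := exists_hasDerivAt_eq_slope (deriv V) (deriv (deriv V)) hpos
        hV'diff.continuous.continuousOn (fun y _ => (hV'diff y).hasDerivAt)
      rw [hV'0, sub_zero, sub_zero] at hceq
      have hxne : x ≠ 0 := ne_of_gt hpos
      have hfx : deriv V x = deriv (deriv V) c * x := (div_eq_iff hxne).mp hceq.symm
      have hcr : |c| ≤ r := by
        rw [abs_le]
        exact ⟨by linarith [hc.1], by linarith [hc.2, hxr.2]⟩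
      have := hrsmall c hcr
      rw [hfx]
      nlinarith [mul_self_nonneg x]
  -- find T
  obtain ⟨T₀, hT₀⟩ := eventually_atTop.mp (hut.eventually (eventually_lt_nhds (mul_pos hrpos hrpos)))
  set T := max T₀ 0 with hT_def
  have hT0 : (0:ℝ) ≤ T := le_max_right _ _
  have huT : ∀ t : ℝ, T ≤ t → u t < r * r := fun t ht => hT₀ t (le_trans (le_max_left _ _) ht)
  have hψr : ∀ t : ℝ, T ≤ t → |ψ t| ≤ r := fun t ht =>
    abs_le_of_mul_self_le_mul_self hrpos.le (le_of_lt (huT t ht))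
  -- exponential decay of u after T
  have hw_anti : AntitoneOn (fun t => Real.exp (a*t) * u t) (Ici T) := by
    apply antitoneOn_Ici_of_hasDerivAt
      (f' := fun t => Real.exp (a*t) * (a * 1) * u t + Real.exp (a*t) * (-(2 * (ψ t * deriv V (ψ t)))))
    · intro t ht
      have ht0 : (0:ℝ) ≤ t := le_trans hT0 ht
      exact (((hasDerivAt_id t).const_mul a).exp).mul (hu' t ht0)
    · intro t ht
      simp only [hu_def]
      have h5 := hVlow (ψ t) (hψr t ht)
      have h6 : (0:ℝ) ≤ Real.exp (a*t) * (ψ t * deriv V (ψ t) - a/2 * (ψ t * ψ t)) :=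
        mul_nonneg (Real.exp_pos _).le (by linarith)
      nlinarith [h6]
  have hudecay : ∀ t : ℝ, T ≤ t → u t ≤ r * r * Real.exp (a*T) * Real.exp (-(a*t)) := by
    intro t ht
    have h := hw_anti self_mem_Ici ht ht
    simp only at h
    have huTle : u T ≤ r * r := (huT T le_rfl).le
    calc u t = Real.exp (a*t) * u t * Real.exp (-(a*t)) := by
          rw [mul_right_comm, ← Real.exp_add]
          simp
      _ ≤ Real.exp (a*T) * u T * Real.exp (-(a*t)) :=
          mul_le_mul_of_nonneg_right h (Real.exp_pos _).le
      _ ≤ r * r * Real.exp (a*T) * Real.exp (-(a*t)) := by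
          have h1 : Real.exp (a*T) * u T ≤ Real.exp (a*T) * (r*r) :=
            mul_le_mul_of_nonneg_left huTle (Real.exp_pos _).le
          nlinarith [Real.exp_pos (-(a*t))]
  have hψdecay : ∀ t : ℝ, T ≤ t → |ψ t| ≤ r * Real.exp (a/2*T) * Real.exp (-(a/2)*t) := by
    intro t ht
    apply abs_le_of_mul_self_le_mul_self (by positivity)
    have h7 : (r * Real.exp (a/2*T) * Real.exp (-(a/2)*t)) * (r * Real.exp (a/2*T) * Real.exp (-(a/2)*t))
        = r * r * Real.exp (a*T) * Real.exp (-(a*t)) := by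
      rw [show a*T = a/2*T + a/2*T by ring, show -(a*t) = -(a/2)*t + -(a/2)*t by ring,
        Real.exp_add, Real.exp_add]
      ring
    rw [h7]
    exact hudecay t ht
  -- Lipschitz bound for V'' near 0
  obtain ⟨L, hL⟩ := (isCompact_Icc (a := -M) (b := M)).exists_bound_of_continuousOn hV'''cont.continuousOn
  have h0mem : (0:ℝ) ∈ Icc (-M) M := ⟨by linarith, by linarith⟩
  have hL0 : 0 ≤ L := le_trans (norm_nonneg _) (hL 0 h0mem)
  have hLip : ∀ x ∈ Icc (-M) M, |deriv (deriv V) x - a| ≤ L * |x| := by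
    intro x hx
    have := Convex.norm_image_sub_le_of_norm_hasDerivWithin_le (f := deriv (deriv V))
      (f' := deriv (deriv (deriv V))) (s := Icc (-M) M)
      (fun y _ => (hd1diff y).hasDerivAt.hasDerivWithinAt) hL (convex_Icc _ _) h0mem hx
    simpa [Real.norm_eq_abs, ← ha_def] using this
  have hψmem : ∀ t : ℝ, 0 ≤ t → ψ t ∈ Icc (-M) M := by
    intro t ht
    have := hψbd t ht
    exact ⟨by linarith [neg_abs_le (ψ t)], by linarith [le_abs_self (ψ t)]⟩
  -- the bound on g
  set g : ℝ → ℝ := fun s => a - deriv (deriv V) (ψ s) with hg_def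
  set C := L * (M + r) * Real.exp (a/2*T) with hC_def
  have hgbd : ∀ t : ℝ, 0 ≤ t → |g t| ≤ C * Real.exp (-(a/2)*t) := by
    intro t ht
    have hgabs : |g t| ≤ L * |ψ t| := by
      rw [hg_def]
      simp only
      rw [abs_sub_comm]
      exact hLip (ψ t) (hψmem t ht)
    rcases le_or_gt T t with hTt | htT
    · have h8 := hψdecay t hTt
      have h9 : L * |ψ t| ≤ L * (r * Real.exp (a/2*T) * Real.exp (-(a/2)*t)) :=
        mul_le_mul_of_nonneg_left h8 hL0
      have h10 : L * (r * Real.exp (a/2*T) * Real.exp (-(a/2)*t)) ≤ C * Real.exp (-(a/2)*t) := by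
        rw [hC_def]
        nlinarith [mul_nonneg (mul_nonneg (mul_nonneg hL0 hM.le) (Real.exp_pos (a/2*T)).le)
          (Real.exp_pos (-(a/2)*t)).le]
      linarith
    · have h8 : |ψ t| ≤ M := hψbd t ht
      have h9 : L * |ψ t| ≤ L * M := mul_le_mul_of_nonneg_left h8 hL0
      have hE1 : (1:ℝ) ≤ Real.exp (a/2*T) * Real.exp (-(a/2)*t) := by
        rw [← Real.exp_add]
        apply Real.one_le_exp
        nlinarith
      have h10 : L * M ≤ C * Real.exp (-(a/2)*t) := by
        rw [hC_def]
        have hMr : 0 ≤ L * (M + r) := mul_nonneg hL0 (by linarith)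
        nlinarith [mul_le_mul_of_nonneg_left hE1 hMr, mul_nonneg hL0 hrpos.le]
      linarith
  -- integrability of g on (0, ∞)
  have hψcont : ContinuousOn ψ (Ici 0) := fun t ht => (hψ t ht).continuousAt.continuousWithinAt
  have hgcont : ContinuousOn g (Ici 0) :=
    continuousOn_const.sub (hV''cont.comp_continuousOn hψcont)
  have hgmeas : AEStronglyMeasurable g (volume.restrict (Ioi (0:ℝ))) :=
    (hgcont.mono Ioi_subset_Ici_self).aestronglyMeasurable measurableSet_Ioi
  have hbound_int : IntegrableOn (fun t => C * Real.exp (-(a/2) * t)) (Ioi (0:ℝ)) :=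
    (exp_neg_integrableOn_Ioi 0 (by linarith : (0:ℝ) < a/2)).const_mul C
  have hgint : IntegrableOn g (Ioi (0:ℝ)) := by
    apply Integrable.mono' hbound_int hgmeas
    rw [ae_restrict_iff' measurableSet_Ioi]
    exact ae_of_all _ fun t ht => by
      simpa [Real.norm_eq_abs] using hgbd t (le_of_lt ht)
  set Gi := ∫ s in Ioi (0:ℝ), g s with hGi_def
  have hGt : Tendsto (fun t : ℝ => ∫ s in (0:ℝ)..t, g s) atTop (nhds Gi) :=
    MeasureTheory.intervalIntegral_tendsto_integral_Ioi 0 hgint tendsto_id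
  -- the primitive P of V''(ψ ·)
  set h : ℝ → ℝ := fun s => deriv (deriv V) (ψ s) with hh_def
  have hhcont : ContinuousOn h (Ici 0) := hV''cont.comp_continuousOn hψcont
  have hhint : ∀ t : ℝ, 0 ≤ t → IntervalIntegrable h volume 0 t := by
    intro t ht
    exact (hhcont.mono (by rw [uIcc_of_le ht]; exact Icc_subset_Ici_self)).intervalIntegrable
  set P : ℝ → ℝ := fun t => ∫ s in (0:ℝ)..t, h s with hP_def
  have hPderiv : ∀ t : ℝ, 0 < t → HasDerivAt P (h t) t := by
    intro t ht
    apply intervalIntegral.integral_hasDerivAt_right (hhint t ht.le)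
    · exact ⟨Ioi 0, Ioi_mem_nhds ht,
        (hhcont.mono Ioi_subset_Ici_self).aestronglyMeasurable measurableSet_Ioi⟩
    · exact ContinuousAt.comp hV''cont.continuousAt (hψ t ht.le).continuousAt
  have hP0 : HasDerivWithinAt P (h 0) (Ici 0) 0 := by
    apply intervalIntegral.integral_hasDerivWithinAt_right (hhint 0 le_rfl)
      (t := Ioi (0:ℝ))
    · exact ⟨Ioi 0, self_mem_nhdsWithin,
        (hhcont.mono Ioi_subset_Ici_self).aestronglyMeasurable measurableSet_Ioi⟩
    · exact (hhcont 0 self_mem_Ici).mono Ioi_subset_Ici_self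
  have hPwithin : ∀ t : ℝ, 0 ≤ t → HasDerivWithinAt P (h t) (Ici t) t := by
    intro t ht
    rcases eq_or_lt_of_le ht with rfl | ht'
    · exact hP0
    · exact (hPderiv t ht').hasDerivWithinAt
  have hPcont : ContinuousOn P (Ici 0) := by
    intro x hx
    rcases eq_or_lt_of_le (mem_Ici.mp hx) with rfl | hx'
    · exact hP0.continuousWithinAt
    · exact (hPderiv x hx').continuousAt.continuousWithinAt
  have hP00 : P 0 = 0 := intervalIntegral.integral_same
  -- Φ t * exp (P t) = 1
  have hΦP : ∀ b : ℝ, 0 ≤ b → Φ b * Real.exp (P b) = 1 := by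
    intro b hb
    have key := constant_of_has_deriv_right_zero (f := fun t => Φ t * Real.exp (P t))
      (a := 0) (b := b) ?_ ?_
    · have := key b (right_mem_Icc.mpr hb)
      simpa [hΦ0, hP00] using this
    · apply ContinuousOn.mul
      · exact fun x hx => (hΦ x hx.1).continuousAt.continuousWithinAt
      · exact (Real.continuous_exp.comp_continuousOn
          (hPcont.mono (fun x hx => hx.1))).congr (fun x _ => rfl)
    · intro x hx
      have hx0 : (0:ℝ) ≤ x := hx.1
      have hPx : HasDerivWithinAt P (h x) (Ici x) x := hPwithin x hx0
      have hmul : HasDerivWithinAt (fun t => Φ t * Real.exp (P t)) _ (Ici x) x := (hΦ x hx0).hasDerivWithinAt.mul hPx.exp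
      refine hmul.congr_deriv ?_
      rw [hh_def]
      simp only
      ring
  -- conclusion
  refine ⟨Real.exp Gi, Real.exp_ne_zero _, ?_⟩
  have htend : Tendsto (fun t : ℝ => Real.exp (∫ s in (0:ℝ)..t, g s)) atTop (nhds (Real.exp Gi)) :=
    (Real.continuous_exp.tendsto Gi).comp hGt
  apply htend.congr'
  filter_upwards [eventually_ge_atTop (0:ℝ)] with t ht
  have h1 : ∫ s in (0:ℝ)..t, g s = a * t - P t := by
    rw [hg_def, hP_def]
    simp only
    rw [intervalIntegral.integral_sub intervalIntegrable_const (hhint t ht),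
      intervalIntegral.integral_const]
    simp [smul_eq_mul]
    ring
  have h2 : Φ t = Real.exp (-(P t)) := by
    have h3 := hΦP t ht
    have := eq_inv_of_mul_eq_one_left h3
    rw [this, ← Real.exp_neg]
  rw [h1, h2, ← Real.exp_add]
  ring_nf
end

section
/- Let V be a regular potential, let ψ be the solution of the gradient flow dψ_t = -V'(ψ_t)dt with ψ_0 = x₀ ∈ ℝ \ {0}, and let Φ be the fundamental solution of dΦ_t = -V''(ψ_t)Φ_t dt with Φ_0 = 1. Then lim_{t→+∞} Φ_t² ∫₀ᵗ (1/Φ_s)² ds = 1/(2V''(0)). -/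
open Filter

open Set Real MeasureTheory intervalIntegral

section VarNormAux


lemma VN_deriv_sign (V : ℝ → ℝ) (hV : ContDiff ℝ 3 V)
    (hcrit : ∀ x : ℝ, deriv V x = 0 ↔ x = 0) (hV''0 : 0 < deriv (deriv V) 0) :
    ∀ x : ℝ, x ≠ 0 → 0 < x * deriv V x := by
  have hDc : Continuous (deriv V) := hV.continuous_deriv (by norm_num)
  have hD0 : deriv V 0 = 0 := (hcrit 0).mpr rfl
  have hdd : HasDerivAt (deriv V) (deriv (deriv V) 0) 0 := by
    have h2 : ContDiff ℝ 2 (deriv V) :=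
      ((contDiff_succ_iff_deriv (n := 2)).mp (by exact_mod_cast hV)).2.2
    exact (h2.differentiable (by norm_num) 0).hasDerivAt
  -- slope positive near 0
  have hslope : ∀ᶠ x in nhdsWithin 0 {(0:ℝ)}ᶜ, 0 < deriv V x / x := by
    have := hasDerivAt_iff_tendsto_slope.mp hdd
    have h := this.eventually (Ioi_mem_nhds hV''0)
    refine h.mono fun x hx => ?_
    simpa [slope_def_field, hD0, div_eq_inv_mul] using hx
  -- get a small positive point
  obtain ⟨δ, hδpos, hδ'⟩ := Metric.eventually_nhds_iff.mp (eventually_nhdsWithin_iff.mp hslope)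
  have hδ : ∀ y : ℝ, |y| < δ → y ≠ 0 → 0 < deriv V y / y := by
    intro y h1 h2
    exact hδ' (by simpa [Real.dist_eq] using h1) h2
  intro x hx
  -- key: near-zero points of same sign as x
  set y := if 0 < x then min (δ/2) x else max (-(δ/2)) x with hy
  have hyne : y ≠ 0 ∧ 0 < y * deriv V y ∧ y * x > 0 ∧ |y| ≤ |x| := by
    rcases lt_or_gt_of_ne hx with hneg | hpos
    · have hy' : y = max (-(δ/2)) x := by simp [hy, not_lt.mpr hneg.le]
      have h1 : y < 0 := by rw [hy']; exact max_lt (by linarith) hneg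
      have h2 : -(δ) < y := by
        rw [hy']; exact lt_max_of_lt_left (by linarith)
      have hsl : 0 < deriv V y / y := hδ y (by rw [abs_of_neg h1]; linarith) h1.ne
      have : 0 < y * deriv V y := by
        rcases div_pos_iff.mp hsl with ⟨h3, h4⟩ | ⟨h3, h4⟩
        · nlinarith
        · nlinarith
      refine ⟨h1.ne, this, by nlinarith, ?_⟩
      rw [abs_of_neg h1, abs_of_neg hneg, hy']; simp
    · have hy' : y = min (δ/2) x := by simp [hy, hpos]
      have h1 : 0 < y := by rw [hy']; exact lt_min (by linarith) hpos
      have h2 : y < δ := by rw [hy']; exact min_lt_of_left_lt (by linarith)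
      have hsl : 0 < deriv V y / y := hδ y (by rw [abs_of_pos h1]; linarith) h1.ne'
      have : 0 < y * deriv V y := by
        rcases div_pos_iff.mp hsl with ⟨h3, h4⟩ | ⟨h3, h4⟩
        · nlinarith
        · nlinarith
      refine ⟨h1.ne', this, by nlinarith, ?_⟩
      rw [abs_of_pos h1, abs_of_pos hpos, hy']; simp
  obtain ⟨hyne0, hypos, hyx, hyabs⟩ := hyne
  -- now show x * deriv V x > 0; else IVT gives zero between y and x
  by_contra hcon
  push_neg at hcon
  have hDx : deriv V x ≠ 0 := fun h => hx ((hcrit x).mp h)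
  have hDxneg : x * deriv V x < 0 := lt_of_le_of_ne hcon (by
    intro h; exact hDx (by rcases mul_eq_zero.mp h with h|h; exact absurd h hx; exact h))
  -- 0 between deriv V y and deriv V x
  have h0mem : (0:ℝ) ∈ uIcc (deriv V y) (deriv V x) := by
    rcases lt_or_gt_of_ne hx with hneg | hpos
    · have hy0 : y < 0 := by nlinarith
      have : deriv V y < 0 := by nlinarith
      have : deriv V x > 0 := by nlinarith
      rw [Set.mem_uIcc]; left; constructor <;> nlinarith
    · have hy0 : 0 < y := by nlinarith
      have : deriv V y > 0 := by nlinarith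
      have : deriv V x < 0 := by nlinarith
      rw [Set.mem_uIcc]; right; constructor <;> nlinarith
  obtain ⟨z, hz, hz0⟩ := intermediate_value_uIcc (hDc.continuousOn (s := uIcc y x)) h0mem
  have hz00 : z = 0 := (hcrit z).mp hz0
  subst hz00
  -- but 0 ∉ uIcc y x since y, x same sign
  rcases lt_or_gt_of_ne hx with hneg | hpos
  · have hy0 : y < 0 := by nlinarith
    rw [Set.mem_uIcc] at hz
    rcases hz with ⟨h1, h2⟩ | ⟨h1, h2⟩ <;> nlinarith
  · have hy0 : 0 < y := by nlinarith
    rw [Set.mem_uIcc] at hz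
    rcases hz with ⟨h1, h2⟩ | ⟨h1, h2⟩ <;> nlinarith

lemma VN_V_pos (V : ℝ → ℝ) (hV : ContDiff ℝ 3 V) (hV0 : V 0 = 0)
    (hcrit : ∀ x : ℝ, deriv V x = 0 ↔ x = 0) (hV''0 : 0 < deriv (deriv V) 0) :
    ∀ x : ℝ, x ≠ 0 → 0 < V x := by
  have hsign := VN_deriv_sign V hV hcrit hV''0
  have hVd : Differentiable ℝ V := hV.differentiable (by norm_num)
  intro x hx
  rcases lt_or_gt_of_ne hx with hneg | hpos
  · obtain ⟨c, hc, hc'⟩ := exists_hasDerivAt_eq_slope V (deriv V) hneg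
      hVd.continuous.continuousOn (fun y _ => (hVd y).hasDerivAt)
    have hcneg : c < 0 := hc.2
    have h1 := hsign c hcneg.ne
    rw [hc'] at h1
    set q := (V 0 - V x) / (0 - x) with hq
    have hqneg : q < 0 := by nlinarith
    rcases div_neg_iff.mp hqneg with ⟨h3, h4⟩ | ⟨h3, h4⟩
    · rw [hV0] at h3; linarith
    · linarith
  · obtain ⟨c, hc, hc'⟩ := exists_hasDerivAt_eq_slope V (deriv V) hpos
      hVd.continuous.continuousOn (fun y _ => (hVd y).hasDerivAt)
    have hcpos : 0 < c := hc.1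
    have h1 := hsign c hcpos.ne'
    rw [hc'] at h1
    set q := (V x - V 0) / (x - 0) with hq
    have hqpos : 0 < q := by nlinarith
    rcases div_pos_iff.mp hqpos with ⟨h3, h4⟩ | ⟨h3, h4⟩
    · rw [hV0] at h3; linarith
    · linarith

lemma VN_psi_tendsto (V ψ : ℝ → ℝ) (x₀ : ℝ) (hV : ContDiff ℝ 3 V) (hV0 : V 0 = 0)
    (hcrit : ∀ x : ℝ, deriv V x = 0 ↔ x = 0) (hV''0 : 0 < deriv (deriv V) 0)
    (hcoercive : Tendsto V (Filter.cocompact ℝ) atTop) (hx₀ : x₀ ≠ 0) (hψ0 : ψ 0 = x₀)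
    (hψ : ∀ t : ℝ, 0 ≤ t → HasDerivAt ψ (-(deriv V (ψ t))) t) :
    Tendsto ψ atTop (nhds 0) := by
  have hVd : Differentiable ℝ V := hV.differentiable (by norm_num)
  have hDc : Continuous (deriv V) := hV.continuous_deriv (by norm_num)
  have hVnn : ∀ x : ℝ, 0 ≤ V x := by
    intro x
    rcases eq_or_ne x 0 with h | h
    · simp [h, hV0]
    · exact (VN_V_pos V hV hV0 hcrit hV''0 x h).le
  set W := fun t => V (ψ t) with hW
  have hWd : ∀ t : ℝ, 0 ≤ t → HasDerivAt W (-(deriv V (ψ t))^2) t := by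
    intro t ht
    have := ((hVd (ψ t)).hasDerivAt).comp t (hψ t ht)
    exact this.congr_deriv (by ring)
  have hWanti : AntitoneOn W (Set.Ici 0) := by
    apply antitoneOn_of_hasDerivWithinAt_nonpos (f' := fun t => -(deriv V (ψ t))^2)
      (convex_Ici 0)
    · exact fun t ht => ((hWd t ht).continuousAt).continuousWithinAt
    · intro t ht
      rw [interior_Ici] at ht
      exact ((hWd t (le_of_lt ht)).hasDerivWithinAt)
    · intro t _
      exact neg_nonpos.mpr (sq_nonneg _)
  -- boundedness
  obtain ⟨K, hKcomp, hK⟩ := (hasBasis_cocompact.eventually_iff).mp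
    (hcoercive.eventually (eventually_ge_atTop (V x₀ + 1)))
  obtain ⟨r, hr⟩ := hKcomp.isBounded.subset_closedBall 0
  set R := max r (|x₀|) with hR
  have hWle : ∀ t : ℝ, 0 ≤ t → W t ≤ V x₀ := by
    intro t ht
    have := hWanti (Set.self_mem_Ici) ht ht
    simpa [hW, hψ0] using this
  have hψR : ∀ t : ℝ, 0 ≤ t → |ψ t| ≤ R := by
    intro t ht
    by_cases hmem : ψ t ∈ K
    · have := hr hmem
      simp only [Metric.mem_closedBall, Real.dist_eq, sub_zero] at this
      exact this.trans (le_max_left _ _)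
    · have := hK hmem
      have h2 := hWle t ht
      simp only [hW] at h2
      linarith
  -- infimum of W is ≤ 0 : ∀ m > 0, ∃ t ≥ 0, W t < m
  have hinf : ∀ m : ℝ, 0 < m → ∃ t : ℝ, 0 ≤ t ∧ W t < m := by
    intro m hm
    by_contra hcon
    push_neg at hcon
    have hWm : ∀ t : ℝ, 0 ≤ t → m ≤ W t := fun t ht => hcon t ht
    -- δ from continuity of V at 0
    obtain ⟨δ, hδpos, hδ⟩ := Metric.continuousAt_iff.mp (hVd.continuous.continuousAt (x := 0))
      m hm
    simp only [Real.dist_eq, sub_zero, hV0] at hδ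
    have hψδ : ∀ t : ℝ, 0 ≤ t → δ ≤ |ψ t| := by
      intro t ht
      by_contra h
      push_neg at h
      have := hδ (show |ψ t - 0| < δ by simpa using h)
      have h2 := hWm t ht
      simp only [hW] at h2
      rw [abs_of_nonneg (by simpa using hVnn (ψ t))] at this
      simp at this
      linarith
    -- compact set and min
    set K2 : Set ℝ := Set.Icc (-R) R ∩ {x | δ ≤ |x|} with hK2
    have hK2comp : IsCompact K2 := isCompact_Icc.inter_right
      (isClosed_le continuous_const continuous_abs)
    have hK2ne : K2.Nonempty := by
      refine ⟨x₀, ?_, ?_⟩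
      · constructor <;> [linarith [abs_le.mp (le_max_right r |x₀|), neg_abs_le x₀];
          linarith [le_abs_self x₀, le_max_right r |x₀|]]
      · have := hψδ 0 le_rfl; rwa [hψ0] at this
    obtain ⟨z, hzK, hzmin⟩ := hK2comp.exists_isMinOn hK2ne
      ((hDc.pow 2).continuousOn)
    have hz0 : z ≠ 0 := by
      intro h
      have := hzK.2
      rw [h] at this
      simp only [Set.mem_setOf_eq, abs_zero] at this
      linarith
    set c := (deriv V z)^2 with hc
    have hcpos : 0 < c := by
      have : deriv V z ≠ 0 := fun h => hz0 ((hcrit z).mp h)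
      positivity
    -- u = W + c t antitone
    have huanti : AntitoneOn (fun t => W t + c * t) (Set.Ici 0) := by
      apply antitoneOn_of_hasDerivWithinAt_nonpos
        (f' := fun t => -(deriv V (ψ t))^2 + c) (convex_Ici 0)
      · exact fun t ht =>
          (((hWd t ht).add ((hasDerivAt_id t).const_mul c)).continuousAt).continuousWithinAt
      · intro t ht
        rw [interior_Ici] at ht
        have := (hWd t ht.le).add (((hasDerivAt_id t).const_mul c))
        exact (this.congr_deriv (by ring)).hasDerivWithinAt
      · intro t ht
        rw [interior_Ici] at ht
        have hmem : ψ t ∈ K2 := by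
          refine ⟨?_, hψδ t ht.le⟩
          have := hψR t ht.le
          rw [abs_le] at this
          exact ⟨this.1, this.2⟩
        have := hzmin hmem
        simp only [hc] at *
        have h2 : (deriv V z)^2 ≤ (deriv V (ψ t))^2 := this
        linarith
    -- contradiction at large t
    have hTpos : 0 < V x₀ / c + 1 := by
      have h0 : 0 ≤ V x₀ / c := div_nonneg (hVnn x₀) hcpos.le
      linarith
    set T := V x₀ / c + 1 with hT
    have h1 := huanti (Set.self_mem_Ici) (Set.mem_Ici.mpr hTpos.le) hTpos.le
    simp only [mul_zero, add_zero] at h1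
    have hWT := hWm T hTpos.le
    have hW0' : W 0 = V x₀ := by simp [hW, hψ0]
    have hcT : c * T = V x₀ + c := by
      rw [hT, mul_add, mul_one, mul_div_cancel₀ _ hcpos.ne']
    nlinarith [h1, hWT, hm, hcpos]
  -- conclude tendsto
  rw [Metric.tendsto_atTop]
  intro ε hε
  set K2 : Set ℝ := Set.Icc (-R) R ∩ {x | ε ≤ |x|} with hK2
  rcases Set.eq_empty_or_nonempty K2 with hemp | hne
  · refine ⟨0, fun t ht => ?_⟩
    have hmem : ψ t ∈ Set.Icc (-R) R := by
      have := hψR t ht; rw [abs_le] at this; exact ⟨this.1, this.2⟩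
    have : ψ t ∉ K2 := by rw [hemp]; exact Set.notMem_empty _
    have h2 : ¬ (ε ≤ |ψ t|) := fun h => this ⟨hmem, h⟩
    push_neg at h2
    simpa [Real.dist_eq] using h2
  · have hK2comp : IsCompact K2 := isCompact_Icc.inter_right
      (isClosed_le continuous_const continuous_abs)
    obtain ⟨z, hzK, hzmin⟩ := hK2comp.exists_isMinOn hne hVd.continuous.continuousOn
    have hz0 : z ≠ 0 := by
      intro h
      have := hzK.2
      rw [h] at this
      simp only [Set.mem_setOf_eq, abs_zero] at this
      linarith
    have hm : 0 < V z := VN_V_pos V hV hV0 hcrit hV''0 z hz0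
    obtain ⟨t0, ht0, hWt0⟩ := hinf (V z) hm
    refine ⟨t0, fun t ht => ?_⟩
    have htn : 0 ≤ t := le_trans ht0 ht
    have hWt : W t < V z := lt_of_le_of_lt (hWanti (Set.mem_Ici.mpr ht0) (Set.mem_Ici.mpr htn) ht) hWt0
    have hmem : ψ t ∈ Set.Icc (-R) R := by
      have := hψR t htn; rw [abs_le] at this; exact ⟨this.1, this.2⟩
    by_contra h
    push_neg at h
    rw [Real.dist_eq, sub_zero] at h
    have : ψ t ∈ K2 := ⟨hmem, h⟩
    have := hzmin this
    simp only [hW] at hWt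
    exact absurd hWt (not_lt.mpr this)


set_option maxHeartbeats 1000000 in
lemma VN_aux_limit (f A : ℝ → ℝ) (a : ℝ) (ha : 0 < a)
    (hfc : ContinuousOn f (Set.Ici 0))
    (hA : ∀ t : ℝ, 0 ≤ t → HasDerivWithinAt A (f t) (Set.Ici 0) t)
    (hfa : Tendsto f atTop (nhds a)) :
    Tendsto (fun t => Real.exp (-(2 * A t)) * ∫ s in (0:ℝ)..t, Real.exp (2 * A s)) atTop
      (nhds (1 / (2 * a))) := by
  have hAc : ContinuousOn A (Set.Ici 0) := fun t ht => (hA t ht).continuousWithinAt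
  set E := fun u => Real.exp (2 * A u) with hE
  have hEc : ContinuousOn E (Set.Ici 0) := Real.continuous_exp.comp_continuousOn (continuousOn_const.mul hAc)
  have hEpos : ∀ u, 0 < E u := fun u => Real.exp_pos _
  have hEint : ∀ s t : ℝ, 0 ≤ s → s ≤ t → IntervalIntegrable E volume s t := by
    intro s t hs hst
    apply ContinuousOn.intervalIntegrable
    rw [Set.uIcc_of_le hst]
    exact hEc.mono (fun x hx => le_trans hs hx.1)
  have hfint : ∀ s t : ℝ, 0 ≤ s → s ≤ t → IntervalIntegrable f volume s t := by
    intro s t hs hst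
    apply ContinuousOn.intervalIntegrable
    rw [Set.uIcc_of_le hst]
    exact hfc.mono (fun x hx => le_trans hs hx.1)
  -- FTC for A
  have hAftc : ∀ T t : ℝ, 0 ≤ T → T ≤ t → ∫ u in T..t, f u = A t - A T := by
    intro T t hT hTt
    apply intervalIntegral.integral_eq_sub_of_hasDeriv_right_of_le hTt
    · exact hAc.mono (fun x hx => le_trans hT hx.1)
    · intro x hx
      exact (hA x (le_trans hT hx.1.le)).mono
        (fun y hy => le_trans (le_trans hT hx.1.le) hy.le)
    · exact hfint T t hT hTt
  -- FTC for E
  have hEftc : ∀ T t : ℝ, 0 ≤ T → T ≤ t →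
      ∫ u in T..t, 2 * f u * E u = E t - E T := by
    intro T t hT hTt
    apply intervalIntegral.integral_eq_sub_of_hasDeriv_right_of_le hTt
    · exact hEc.mono (fun x hx => le_trans hT hx.1)
    · intro x hx
      have hx0 : (0:ℝ) ≤ x := le_trans hT hx.1.le
      have h1 : HasDerivWithinAt (fun u => 2 * A u) (2 * f x) (Set.Ioi x) x :=
        ((hA x hx0).mono (fun y hy => le_trans hx0 hy.le)).const_mul 2
      have := h1.exp
      exact this.congr_deriv (by ring)
    · apply ContinuousOn.intervalIntegrable
      rw [Set.uIcc_of_le hTt]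
      have hsub : Set.Icc T t ⊆ Set.Ici (0:ℝ) := fun x hx => le_trans hT hx.1
      exact (continuousOn_const.mul (hfc.mono hsub)).mul (hEc.mono hsub)
  -- A tends to atTop
  obtain ⟨T₀', hT₀'⟩ := (Metric.tendsto_atTop.mp hfa) (a/2) (by linarith)
  set T₀ := max T₀' 0 with hT₀def
  have hT₀0 : (0:ℝ) ≤ T₀ := le_max_right _ _
  have hfge : ∀ s, T₀ ≤ s → a/2 ≤ f s := by
    intro s hs
    have := hT₀' s (le_trans (le_max_left _ _) hs)
    rw [Real.dist_eq, abs_lt] at this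
    linarith [this.1]
  have hAgrow : ∀ t, T₀ ≤ t → A T₀ + a/2 * (t - T₀) ≤ A t := by
    intro t ht
    have h1 : ∫ u in T₀..t, (a/2 : ℝ) ≤ ∫ u in T₀..t, f u := by
      apply intervalIntegral.integral_mono_on ht (intervalIntegrable_const)
        (hfint T₀ t hT₀0 ht)
      intro x hx
      exact hfge x hx.1
    rw [hAftc T₀ t hT₀0 ht] at h1
    rw [intervalIntegral.integral_const, smul_eq_mul] at h1
    linarith [h1]
  have hAtop : Tendsto A atTop atTop := by
    apply tendsto_atTop_mono' atTop
      (eventually_atTop.mpr ⟨T₀, fun t ht => hAgrow t ht⟩)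
    have : Tendsto (fun t : ℝ => a/2 * (t - T₀)) atTop atTop := by
      apply Tendsto.const_mul_atTop (by linarith)
      exact tendsto_atTop_add_const_right _ _ tendsto_id
    exact tendsto_atTop_add_const_left _ _ this
  have hp0 : Tendsto (fun t => Real.exp (-(2 * A t))) atTop (nhds 0) := by
    apply Real.tendsto_exp_atBot.comp
    apply Filter.tendsto_neg_atTop_atBot.comp
    exact hAtop.const_mul_atTop two_pos
  -- epsilon argument
  rw [Metric.tendsto_atTop]
  intro ε' hε'
  set ε := min (a/2) (a^2 * ε' / 4) with hεdef
  have hεpos : 0 < ε := lt_min (by linarith) (by positivity)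
  have hεa : ε ≤ a/2 := min_le_left _ _
  have hεe : ε ≤ a^2*ε'/4 := min_le_right _ _
  obtain ⟨T₁', hT₁'⟩ := Metric.tendsto_atTop.mp hfa ε hεpos
  set T := max T₁' 0 with hTdef
  have hT0 : (0:ℝ) ≤ T := le_max_right _ _
  have hfb : ∀ s, T ≤ s → a - ε ≤ f s ∧ f s ≤ a + ε := by
    intro s hs
    have := hT₁' s (le_trans (le_max_left _ _) hs)
    rw [Real.dist_eq, abs_lt] at this
    exact ⟨by linarith [this.1], by linarith [this.2]⟩
  set I₁ := ∫ s in (0:ℝ)..T, E s with hI₁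
  have hI₁nn : 0 ≤ I₁ := intervalIntegral.integral_nonneg hT0 (fun u _ => (hEpos u).le)
  have hg₁ : Tendsto (fun t => Real.exp (-(2*A t)) * I₁) atTop (nhds 0) := by
    simpa using hp0.mul_const I₁
  have hg₂ : Tendsto (fun t => Real.exp (-(2*A t)) * E T) atTop (nhds 0) := by
    simpa using hp0.mul_const (E T)
  have ev1 : ∀ᶠ t in atTop, Real.exp (-(2*A t)) * I₁ < ε'/4 :=
    hg₁.eventually_lt_const (by linarith)
  have ev2 : ∀ᶠ t in atTop, Real.exp (-(2*A t)) * E T < a * ε'/2 :=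
    hg₂.eventually_lt_const (by positivity)
  have evT : ∀ᶠ t in atTop, T ≤ t := eventually_ge_atTop T
  obtain ⟨N, hN⟩ := eventually_atTop.mp ((ev1.and ev2).and evT)
  refine ⟨N, fun t ht => ?_⟩
  obtain ⟨⟨h1, h2⟩, hTt⟩ := hN t ht
  set p := Real.exp (-(2*A t)) with hp
  have hppos : 0 < p := Real.exp_pos _
  have hsplit : ∫ s in (0:ℝ)..t, E s = I₁ + ∫ s in T..t, E s :=
    (intervalIntegral.integral_add_adjacent_intervals (hEint 0 T le_rfl hT0)
      (hEint T t hT0 hTt)).symm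
  set I₂ := ∫ s in T..t, E s with hI₂
  have hI₂nn : 0 ≤ I₂ := intervalIntegral.integral_nonneg hTt (fun u _ => (hEpos u).le)
  have hfEint : IntervalIntegrable (fun u => 2 * f u * E u) volume T t := by
    apply ContinuousOn.intervalIntegrable
    rw [Set.uIcc_of_le hTt]
    have hsub : Set.Icc T t ⊆ Set.Ici (0:ℝ) := fun x hx => le_trans hT0 hx.1
    exact (continuousOn_const.mul (hfc.mono hsub)).mul (hEc.mono hsub)
  have hup : 2*(a-ε) * I₂ ≤ E t - E T := by
    rw [← hEftc T t hT0 hTt, ← intervalIntegral.integral_const_mul]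
    apply intervalIntegral.integral_mono_on hTt ((hEint T t hT0 hTt).const_mul _) hfEint
    intro x hx
    have hb := (hfb x hx.1).1
    nlinarith [hEpos x]
  have hlo : E t - E T ≤ 2*(a+ε) * I₂ := by
    rw [← hEftc T t hT0 hTt, ← intervalIntegral.integral_const_mul]
    apply intervalIntegral.integral_mono_on hTt hfEint ((hEint T t hT0 hTt).const_mul _)
    intro x hx
    have hb := (hfb x hx.1).2
    nlinarith [hEpos x]
  have hpEt : p * E t = 1 := by
    rw [hp, hE, ← Real.exp_add]
    norm_num
  set x := p * I₂ with hx
  set g₁ := p * I₁ with hg₁def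
  set g₂ := p * E T with hg₂def
  have hxnn : 0 ≤ x := mul_nonneg hppos.le hI₂nn
  have hg1nn : 0 ≤ g₁ := mul_nonneg hppos.le hI₁nn
  have hg2nn : 0 ≤ g₂ := mul_nonneg hppos.le (hEpos T).le
  have hx1 : 2*(a-ε) * x ≤ 1 - g₂ := by
    have h := mul_le_mul_of_nonneg_left hup hppos.le
    rw [hx, hg₂def]
    ring_nf at h hpEt ⊢
    linarith [h, hpEt]
  have hx2 : 1 - g₂ ≤ 2*(a+ε) * x := by
    have h := mul_le_mul_of_nonneg_left hlo hppos.le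
    rw [hx, hg₂def]
    ring_nf at h hpEt ⊢
    linarith [h, hpEt]
  -- final arithmetic
  have hgoal : Real.exp (-(2 * A t)) * ∫ s in (0:ℝ)..t, E s = g₁ + x := by
    rw [hsplit]; ring
  rw [Real.dist_eq, hgoal, abs_lt]
  have h2a : (0:ℝ) < 2*a := by linarith
  have hu : 1/(2*a)*(2*a) = 1 := by field_simp
  have hupos : 0 < 1/(2*a) := by positivity
  constructor
  · -- lower:  -(ε') < g₁ + x - 1/(2a)
    have hxlo : (1 - g₂)/(2*(a+ε)) ≤ x := by
      rw [div_le_iff₀ (by linarith : (0:ℝ) < 2*(a+ε))]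
      nlinarith [hx2]
    have hkey : 1/(2*a) - ε' < (1 - g₂)/(2*(a+ε)) := by
      rw [lt_div_iff₀ (by linarith : (0:ℝ) < 2*(a+ε))]
      nlinarith [hu, h2, hεe, hεpos, hupos, hε', ha,
        mul_le_mul_of_nonneg_right hεe hupos.le]
    linarith [hxlo, hkey, hg1nn]
  · -- upper: g₁ + x - 1/(2a) < ε'
    have hxup : x ≤ 1/(2*(a-ε)) := by
      rw [le_div_iff₀ (by linarith : (0:ℝ) < 2*(a-ε))]
      nlinarith [hx1, hg2nn]
    have hkey : 1/(2*(a-ε)) ≤ 1/(2*a) + ε'/4 := by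
      rw [div_le_iff₀ (by linarith : (0:ℝ) < 2*(a-ε))]
      nlinarith [hu, hεe, hεpos, hupos, hε', ha, hεa,
        mul_le_mul_of_nonneg_right hεe hupos.le]
    linarith [hxup, hkey, h1]


end VarNormAux

set_option maxHeartbeats 1000000 in
/-- For a regular potential `V`, the fundamental solution `Φ` of the
linearization along the gradient flow `ψ` satisfies
`Φ t ^ 2 * ∫₀ᵗ (1 / Φ s)^2 ds → 1 / (2 V''(0))` as `t → +∞`. -/
theorem variance_normalization_tendsto
    (V ψ Φ : ℝ → ℝ) (x₀ : ℝ)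
    (hV : ContDiff ℝ 3 V)
    (hV0 : V 0 = 0)
    (hcrit : ∀ x : ℝ, deriv V x = 0 ↔ x = 0)
    (hV''0 : 0 < deriv (deriv V) 0)
    (hcoercive : Tendsto V (Filter.cocompact ℝ) atTop)
    (hx₀ : x₀ ≠ 0)
    (hψ0 : ψ 0 = x₀)
    (hψ : ∀ t : ℝ, 0 ≤ t → HasDerivAt ψ (-(deriv V (ψ t))) t)
    (hΦ0 : Φ 0 = 1)
    (hΦ : ∀ t : ℝ, 0 ≤ t → HasDerivAt Φ (-(deriv (deriv V) (ψ t)) * Φ t) t) :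
    Tendsto (fun t : ℝ => (Φ t) ^ 2 * ∫ s in (0:ℝ)..t, (1 / Φ s) ^ 2) atTop
      (nhds (1 / (2 * deriv (deriv V) 0))) := by
  set a := deriv (deriv V) 0 with ha
  have hV''c : Continuous (deriv (deriv V)) := by
    have h2 : ContDiff ℝ 2 (deriv V) :=
      ((contDiff_succ_iff_deriv (n := 2)).mp (by exact_mod_cast hV)).2.2
    exact h2.continuous_deriv (by norm_num)
  set f := fun t => deriv (deriv V) (ψ t) with hf
  have hψcont : ∀ t : ℝ, 0 ≤ t → ContinuousAt ψ t := fun t ht => (hψ t ht).continuousAt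
  have hfc : ContinuousOn f (Set.Ici 0) := fun t ht =>
    (hV''c.continuousAt.comp (hψcont t ht)).continuousWithinAt
  have hfa : Tendsto f atTop (nhds a) := by
    have := (hV''c.tendsto 0).comp
      (VN_psi_tendsto V ψ x₀ hV hV0 hcrit hV''0 hcoercive hx₀ hψ0 hψ)
    exact this
  set A := fun t => ∫ s in (0:ℝ)..t, f s with hA
  have hfint : ∀ t : ℝ, 0 ≤ t → IntervalIntegrable f volume 0 t := by
    intro t ht
    apply ContinuousOn.intervalIntegrable
    rw [Set.uIcc_of_le ht]
    exact hfc.mono (fun x hx => hx.1)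
  have hAd : ∀ t : ℝ, 0 ≤ t → HasDerivWithinAt A (f t) (Set.Ici 0) t := by
    intro t ht
    rcases eq_or_lt_of_le ht with h0 | h0
    · -- t = 0
      subst h0
      exact intervalIntegral.integral_hasDerivWithinAt_right (IntervalIntegrable.refl)
        ⟨Set.Ioi 0, self_mem_nhdsWithin,
          ((hfc.mono (fun x hx => le_of_lt hx)).aestronglyMeasurable measurableSet_Ioi)⟩
        ((hfc 0 Set.self_mem_Ici).mono Set.Ioi_subset_Ici_self)
    · refine (intervalIntegral.integral_hasDerivAt_right (hfint t ht)
        ⟨Set.Ioi 0, Ioi_mem_nhds h0,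
          ((hfc.mono (fun x hx => le_of_lt hx)).aestronglyMeasurable measurableSet_Ioi)⟩
        (hV''c.continuousAt.comp (hψcont t ht))).hasDerivWithinAt
  -- Φ = exp(-A) on Ici 0
  have hA0 : A 0 = 0 := by simp [hA]
  have hΦA : ∀ t : ℝ, 0 ≤ t → Φ t = Real.exp (-(A t)) := by
    intro t ht
    have hzero : ∫ s in (0:ℝ)..t, (0:ℝ) =
        (fun u => Φ u * Real.exp (A u)) t - (fun u => Φ u * Real.exp (A u)) 0 := by
      apply intervalIntegral.integral_eq_sub_of_hasDeriv_right_of_le ht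
      · apply ContinuousOn.mul
        · exact fun s hs => ((hΦ s hs.1).continuousAt).continuousWithinAt
        · exact Real.continuous_exp.comp_continuousOn
            (fun s hs => ((hAd s hs.1).continuousWithinAt).mono (fun y hy => hy.1))
      · intro x hx
        have hx0 : (0:ℝ) ≤ x := hx.1.le
        have hΦx : HasDerivWithinAt Φ (-(f x) * Φ x) (Set.Ioi x) x :=
          (hΦ x hx0).hasDerivWithinAt
        have hAx : HasDerivWithinAt A (f x) (Set.Ioi x) x :=
          (hAd x hx0).mono (fun y hy => le_trans hx0 hy.le)
        have := hΦx.mul hAx.exp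
        exact this.congr_deriv (by ring)
      · exact intervalIntegrable_const
    simp only [intervalIntegral.integral_zero, hΦ0, hA0, Real.exp_zero, mul_one] at hzero
    have h1 : Φ t * Real.exp (A t) = 1 := by linarith [hzero]
    rw [Real.exp_neg]
    field_simp
    linarith [h1]
  -- conclude
  have hmain := VN_aux_limit f A a hV''0 hfc hAd hfa
  apply hmain.congr'
  filter_upwards [eventually_ge_atTop (0:ℝ)] with t ht
  have hΦt : Φ t = Real.exp (-(A t)) := hΦA t ht
  have h1 : Real.exp (-(2 * A t)) = Φ t ^ 2 := by
    rw [hΦt, sq, ← Real.exp_add]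
    ring_nf
  have h2 : ∫ s in (0:ℝ)..t, Real.exp (2 * A s) = ∫ s in (0:ℝ)..t, (1 / Φ s) ^ 2 := by
    apply intervalIntegral.integral_congr
    intro s hs
    rw [Set.uIcc_of_le ht] at hs
    show Real.exp (2 * A s) = (1 / Φ s) ^ 2
    rw [hΦA s hs.1, one_div, ← Real.exp_neg, sq, ← Real.exp_add]
    ring_nf
  rw [h1, h2]
end

section
/- Let V be a regular potential, let ψ be the solution of the gradient flow dψ_t = -V'(ψ_t)dt with ψ_0 = x₀ ∈ ℝ \ {0}, let Φ be the fundamental solution of dΦ_t = -V''(ψ_t)Φ_t dt with Φ_0 = 1, and let y₀ ∈ ℝ \ {0}. For ε > 0 and t > 0 define d_ε(t) := ‖N(Φ_t y₀, ε Φ_t² ∫₀ᵗ (1/Φ_s)² ds) − N(0, ε/(2V''(0)))‖ (this is the total variation distance between the law of the linearized diffusion y^ε at time t and its equilibrium law). Set t_ε := (1/(2V''(0)))(ln(1/ε) + ln(2V''(0) y₀²)) and w_ε := 1/V''(0). Let c ≠ 0 be the constant with lim_{t→∞} e^{V''(0)t} Φ_t = c, and define G(b) := ‖N(c e^{−b},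 1) − N(0, 1)‖. Then for every b ∈ ℝ, lim_{ε→0} d_ε(t_ε + b w_ε) = G(b); moreover lim_{b→−∞} G(b) = 1 and lim_{b→+∞} G(b) = 0. In particular the family of linearized diffusions presents profile cut-off at (t_ε, w_ε) with profile G. -/
open Filter MeasureTheory ProbabilityTheory Real
open scoped NNReal ENNReal

/-- Total variation distance between two measures on `ℝ`:
`sup_A |P(A) - Q(A)|` over measurable sets `A`. -/
noncomputable def tvDist (P Q : Measure ℝ) : ℝ :=
  ⨆ A : {s : Set ℝ // MeasurableSet s}, |(P A.1).toReal - (Q A.1).toReal|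

lemma gaussianPDFReal_scale {μ v s : ℝ} (hv : 0 < v) (hs : 0 < s) (u : ℝ) :
    Real.sqrt s * gaussianPDFReal μ v.toNNReal (Real.sqrt s * u)
      = gaussianPDFReal (μ / Real.sqrt s) (v / s).toNNReal u := by
  have hsq : Real.sqrt s * Real.sqrt s = s := Real.mul_self_sqrt hs.le
  have hs' : Real.sqrt s ≠ 0 := by positivity
  unfold gaussianPDFReal
  rw [Real.coe_toNNReal _ hv.le, Real.coe_toNNReal _ (by positivity : (0:ℝ) ≤ v / s)]
  rw [show (2 * π * (v / s) : ℝ) = (2 * π * v) / s by ring, Real.sqrt_div (by positivity) s]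
  have harg : -(Real.sqrt s * u - μ) ^ 2 / (2 * v) = -(u - μ / Real.sqrt s) ^ 2 / (2 * (v / s)) := by
    rw [show Real.sqrt s * u - μ = Real.sqrt s * (u - μ / Real.sqrt s) by field_simp]
    rw [mul_pow]
    rw [show (Real.sqrt s) ^ 2 = s by rw [sq]; exact hsq]
    field_simp
  rw [harg]
  have hpre : Real.sqrt s * (Real.sqrt (2 * π * v))⁻¹ = (Real.sqrt (2 * π * v) / Real.sqrt s)⁻¹ := by
    field_simp
  rw [← mul_assoc, hpre]

lemma min_integral_scaling {μ v s : ℝ} (hv : 0 < v) (hs : 0 < s) :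
    ∫ x, min (gaussianPDFReal μ v.toNNReal x) (gaussianPDFReal 0 s.toNNReal x)
      = ∫ x, min (gaussianPDFReal (μ / Real.sqrt s) (v / s).toNNReal x)
          (gaussianPDFReal 0 1 x) := by
  have hs' : Real.sqrt s ≠ 0 := by positivity
  have h := MeasureTheory.Measure.integral_comp_mul_left
    (fun x => min (gaussianPDFReal μ v.toNNReal x) (gaussianPDFReal 0 s.toNNReal x)) (Real.sqrt s)
  rw [abs_of_pos (by positivity : (0:ℝ) < (Real.sqrt s)⁻¹), smul_eq_mul] at h
  have h2 : ∫ x, min (gaussianPDFReal μ v.toNNReal x) (gaussianPDFReal 0 s.toNNReal x)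
      = Real.sqrt s * ∫ x, min (gaussianPDFReal μ v.toNNReal (Real.sqrt s * x))
          (gaussianPDFReal 0 s.toNNReal (Real.sqrt s * x)) := by
    rw [h]; field_simp
  rw [h2, ← MeasureTheory.integral_const_mul]
  congr 1
  ext x
  rw [mul_min_of_nonneg _ _ (Real.sqrt_nonneg s)]
  rw [gaussianPDFReal_scale hv hs, gaussianPDFReal_scale hs hs]
  rw [zero_div, div_self hs.ne', Real.toNNReal_one]

lemma min_integral_neg (μ : ℝ) (v w : ℝ≥0) :
    ∫ x, min (gaussianPDFReal (-μ) v x) (gaussianPDFReal 0 w x)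
      = ∫ x, min (gaussianPDFReal μ v x) (gaussianPDFReal 0 w x) := by
  rw [← integral_neg_eq_self (fun x => min (gaussianPDFReal μ v x) (gaussianPDFReal 0 w x)) volume]
  congr 1; ext x
  unfold gaussianPDFReal
  congr 2 <;> ring_nf


lemma tvDist_gaussianReal (μ₁ μ₂ : ℝ) {v₁ v₂ : ℝ≥0} (h₁ : v₁ ≠ 0) (h₂ : v₂ ≠ 0) :
    tvDist (gaussianReal μ₁ v₁) (gaussianReal μ₂ v₂)
      = 1 - ∫ x, min (gaussianPDFReal μ₁ v₁ x) (gaussianPDFReal μ₂ v₂ x) := by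
  classical
  set p := gaussianPDFReal μ₁ v₁ with hp
  set q := gaussianPDFReal μ₂ v₂ with hq
  have hp_int : Integrable p := integrable_gaussianPDFReal _ _
  have hq_int : Integrable q := integrable_gaussianPDFReal _ _
  have hp_nonneg : ∀ x, 0 ≤ p x := gaussianPDFReal_nonneg _ _
  have hq_nonneg : ∀ x, 0 ≤ q x := gaussianPDFReal_nonneg _ _
  have hmin_meas : StronglyMeasurable (fun x => min (p x) (q x)) :=
    ((measurable_gaussianPDFReal _ _).min (measurable_gaussianPDFReal _ _)).stronglyMeasurable
  have hmin_int : Integrable (fun x => min (p x) (q x)) := by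
    refine hp_int.mono hmin_meas.aestronglyMeasurable (ae_of_all _ fun x => ?_)
    rw [Real.norm_eq_abs, Real.norm_eq_abs, abs_of_nonneg (le_min (hp_nonneg x) (hq_nonneg x)),
      abs_of_nonneg (hp_nonneg x)]
    exact min_le_left _ _
  set D := 1 - ∫ x, min (p x) (q x) with hD
  have hDp : D = ∫ x, (p x - min (p x) (q x)) := by
    rw [integral_sub hp_int hmin_int, integral_gaussianPDFReal_eq_one _ h₁, hD]
  have hDq : D = ∫ x, (q x - min (p x) (q x)) := by
    rw [integral_sub hq_int hmin_int, integral_gaussianPDFReal_eq_one _ h₂, hD]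
  have hD_nonneg : 0 ≤ D := by
    rw [hDp]
    exact integral_nonneg fun x => sub_nonneg.2 (min_le_left _ _)
  have key₁ : ∀ A : Set ℝ, MeasurableSet A →
      ((gaussianReal μ₁ v₁) A).toReal = ∫ x in A, p x := by
    intro A hA
    rw [gaussianReal_apply_eq_integral _ h₁ A,
      ENNReal.toReal_ofReal (setIntegral_nonneg hA fun x _ => hp_nonneg x)]
  have key₂ : ∀ A : Set ℝ, MeasurableSet A →
      ((gaussianReal μ₂ v₂) A).toReal = ∫ x in A, q x := by
    intro A hA
    rw [gaussianReal_apply_eq_integral _ h₂ A,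
      ENNReal.toReal_ofReal (setIntegral_nonneg hA fun x _ => hq_nonneg x)]
  have bound : ∀ A : Set ℝ, MeasurableSet A →
      |((gaussianReal μ₁ v₁) A).toReal - ((gaussianReal μ₂ v₂) A).toReal| ≤ D := by
    intro A hA
    rw [key₁ A hA, key₂ A hA]
    have h1 : (∫ x in A, p x) - ∫ x in A, q x ≤ D := by
      rw [← integral_sub hp_int.integrableOn hq_int.integrableOn, hDp]
      calc ∫ x in A, (p x - q x)
          ≤ ∫ x in A, (p x - min (p x) (q x)) := by
            refine integral_mono (hp_int.integrableOn.sub hq_int.integrableOn)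
              (hp_int.integrableOn.sub hmin_int.integrableOn) fun x => ?_
            exact sub_le_sub_left (min_le_right _ _) _
        _ ≤ ∫ x, (p x - min (p x) (q x)) :=
            setIntegral_le_integral (hp_int.sub hmin_int)
              (ae_of_all _ fun x => sub_nonneg.2 (min_le_left _ _))
    have h2 : (∫ x in A, q x) - ∫ x in A, p x ≤ D := by
      rw [← integral_sub hq_int.integrableOn hp_int.integrableOn, hDq]
      calc ∫ x in A, (q x - p x)
          ≤ ∫ x in A, (q x - min (p x) (q x)) := by
            refine integral_mono (hq_int.integrableOn.sub hp_int.integrableOn)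
              (hq_int.integrableOn.sub hmin_int.integrableOn) fun x => ?_
            exact sub_le_sub_left (min_le_left _ _) _
        _ ≤ ∫ x, (q x - min (p x) (q x)) :=
            setIntegral_le_integral (hq_int.sub hmin_int)
              (ae_of_all _ fun x => sub_nonneg.2 (min_le_right _ _))
    exact abs_le.2 ⟨by linarith, h1⟩
  haveI : Nonempty {s : Set ℝ // MeasurableSet s} := ⟨⟨∅, MeasurableSet.empty⟩⟩
  have hbdd : BddAbove (Set.range fun A : {s : Set ℝ // MeasurableSet s} =>
      |((gaussianReal μ₁ v₁) A.1).toReal - ((gaussianReal μ₂ v₂) A.1).toReal|) := by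
    refine ⟨D, ?_⟩
    rintro _ ⟨A, rfl⟩
    exact bound A.1 A.2
  refine le_antisymm (ciSup_le fun A => bound A.1 A.2) ?_
  -- attainment
  set Astar : Set ℝ := {x | q x ≤ p x} with hAstar
  have hAmeas : MeasurableSet Astar :=
    measurableSet_le (measurable_gaussianPDFReal _ _) (measurable_gaussianPDFReal _ _)
  have hval : ((gaussianReal μ₁ v₁) Astar).toReal - ((gaussianReal μ₂ v₂) Astar).toReal = D := by
    rw [key₁ _ hAmeas, key₂ _ hAmeas,
      ← integral_sub hp_int.integrableOn hq_int.integrableOn, hDp]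
    rw [show ∫ x in Astar, (p x - q x) = ∫ x in Astar, (p x - min (p x) (q x)) from
      setIntegral_congr_fun hAmeas fun x hx => by
        rw [min_eq_right (hx : q x ≤ p x)]]
    refine setIntegral_eq_integral_of_forall_compl_eq_zero fun x hx => ?_
    have : p x < q x := not_le.1 hx
    rw [min_eq_left this.le, sub_self]
  calc D = |((gaussianReal μ₁ v₁) Astar).toReal - ((gaussianReal μ₂ v₂) Astar).toReal| := by
        rw [hval, abs_of_nonneg hD_nonneg]
    _ ≤ _ := le_ciSup hbdd (⟨Astar, hAmeas⟩ : {s : Set ℝ // MeasurableSet s})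

lemma tendsto_gaussianPDFReal_pt {α : Type*} {l : Filter α} {M W : α → ℝ} {m₀ : ℝ}
    (hM : Tendsto M l (nhds m₀)) (hW : Tendsto W l (nhds 1)) (x : ℝ) :
    Tendsto (fun a => gaussianPDFReal (M a) (W a).toNNReal x) l
      (nhds (gaussianPDFReal m₀ 1 x)) := by
  have hW' : Tendsto (fun a => ((W a).toNNReal : ℝ)) l (nhds 1) := by
    have : Tendsto (fun a => max (W a) 0) l (nhds (max 1 0)) :=
      hW.max tendsto_const_nhds
    simpa [Real.coe_toNNReal'] using this
  unfold gaussianPDFReal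
  have hpre : Tendsto (fun a => (Real.sqrt (2 * π * ((W a).toNNReal : ℝ)))⁻¹) l
      (nhds ((Real.sqrt (2 * π * ((1 : ℝ≥0) : ℝ)))⁻¹)) := by
    refine Tendsto.inv₀ ?_ (by positivity)
    exact (Real.continuous_sqrt.tendsto _).comp
      ((tendsto_const_nhds.mul hW').congr' (by simp) |>.congr fun a => rfl)
  have hexp : Tendsto (fun a => Real.exp (-(x - M a) ^ 2 / (2 * ((W a).toNNReal : ℝ)))) l
      (nhds (Real.exp (-(x - m₀) ^ 2 / (2 * ((1 : ℝ≥0) : ℝ))))) := by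
    refine (Real.continuous_exp.tendsto _).comp ?_
    refine Tendsto.div ?_ (tendsto_const_nhds.mul hW') (by norm_num)
    exact (((tendsto_const_nhds.sub hM).pow 2).neg)
  exact hpre.mul hexp

lemma tendsto_min_integral {α : Type*} {l : Filter α} [l.IsCountablyGenerated]
    {M W : α → ℝ} {m₀ : ℝ} (hM : Tendsto M l (nhds m₀)) (hW : Tendsto W l (nhds 1)) :
    Tendsto (fun a => ∫ x, min (gaussianPDFReal (M a) (W a).toNNReal x)
        (gaussianPDFReal 0 1 x)) l
      (nhds (∫ x, min (gaussianPDFReal m₀ 1 x) (gaussianPDFReal 0 1 x))) := by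
  refine tendsto_integral_filter_of_dominated_convergence (gaussianPDFReal 0 1) ?_ ?_
    (integrable_gaussianPDFReal _ _) ?_
  · exact Eventually.of_forall fun a =>
      ((measurable_gaussianPDFReal _ _).min (measurable_gaussianPDFReal _ _)).aestronglyMeasurable
  · refine Eventually.of_forall fun a => ae_of_all _ fun x => ?_
    rw [Real.norm_eq_abs, abs_of_nonneg
      (le_min (gaussianPDFReal_nonneg _ _ _) (gaussianPDFReal_nonneg _ _ _))]
    exact min_le_right _ _
  · exact ae_of_all _ fun x =>
      (tendsto_gaussianPDFReal_pt hM hW x).min tendsto_const_nhds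

lemma tendsto_min_integral_escape {α : Type*} {l : Filter α} [l.IsCountablyGenerated]
    {M : α → ℝ} (hM : Tendsto (fun a => |M a|) l atTop) :
    Tendsto (fun a => ∫ x, min (gaussianPDFReal (M a) 1 x) (gaussianPDFReal 0 1 x)) l
      (nhds 0) := by
  have hptwise : ∀ x : ℝ, Tendsto (fun a => min (gaussianPDFReal (M a) 1 x)
      (gaussianPDFReal 0 1 x)) l (nhds 0) := by
    intro x
    have hsq : Tendsto (fun a => (x - M a) ^ 2) l atTop := by
      have h1 : Tendsto (fun a => |M a| * |M a| / 2 - x ^ 2) l atTop := by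
        refine tendsto_atTop_add_const_right _ _ ?_
        exact (hM.atTop_mul_atTop₀ hM).atTop_div_const (by norm_num)
      have hle : ∀ a, |M a| * |M a| / 2 - x ^ 2 ≤ (x - M a) ^ 2 := by
        intro a
        nlinarith [sq_nonneg (2 * x - M a), abs_mul_abs_self (M a)]
      exact tendsto_atTop_mono hle h1
    have hexp : Tendsto (fun a => gaussianPDFReal (M a) 1 x) l (nhds 0) := by
      unfold gaussianPDFReal
      rw [show (0:ℝ) = (Real.sqrt (2 * π * ((1:ℝ≥0):ℝ)))⁻¹ * 0 by ring]
      refine Tendsto.const_mul _ ?_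
      refine Real.tendsto_exp_atBot.comp ?_
      have h2 := hsq.atTop_div_const (show (0:ℝ) < 2 by norm_num)
      have h3 : Tendsto (fun a => -((x - M a) ^ 2 / 2)) l atBot := tendsto_neg_atBot_iff.mpr h2
      refine h3.congr fun a => ?_
      rw [neg_div]
      norm_num
    refine squeeze_zero (fun a => le_min (gaussianPDFReal_nonneg _ _ _)
      (gaussianPDFReal_nonneg _ _ _)) (fun a => min_le_left _ _) hexp
  have key : Tendsto (fun a => ∫ x, min (gaussianPDFReal (M a) 1 x) (gaussianPDFReal 0 1 x)) l
      (nhds (∫ x : ℝ, (0:ℝ))) := by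
    refine tendsto_integral_filter_of_dominated_convergence (gaussianPDFReal 0 1) ?_ ?_
      (integrable_gaussianPDFReal _ _) ?_
    · exact Eventually.of_forall fun a =>
        ((measurable_gaussianPDFReal _ _).min (measurable_gaussianPDFReal _ _)).aestronglyMeasurable
    · refine Eventually.of_forall fun a => ae_of_all _ fun x => ?_
      have hnn : (0:ℝ) ≤ min (gaussianPDFReal (M a) 1 x) (gaussianPDFReal 0 1 x) :=
        le_min (gaussianPDFReal_nonneg _ _ _) (gaussianPDFReal_nonneg _ _ _)
      rw [Real.norm_eq_abs, abs_of_nonneg hnn]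
      exact min_le_right _ _
    · exact ae_of_all _ hptwise
  simpa using key

lemma integral_exp_mul (k : ℝ) (hk : k ≠ 0) (T t : ℝ) :
    ∫ s in T..t, Real.exp (k * s) = (Real.exp (k * t) - Real.exp (k * T)) / k := by
  have hderiv : ∀ s ∈ Set.uIcc T t, HasDerivAt (fun u => Real.exp (k * u) / k)
      (Real.exp (k * s)) s := by
    intro s _
    have h1 : HasDerivAt (fun u => k * u) k s := by
      simpa using (hasDerivAt_id s).const_mul k
    have h2 := h1.exp
    have h3 := h2.div_const k
    simpa [mul_comm, mul_div_assoc, mul_div_cancel_left₀ _ hk] using h3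
  rw [intervalIntegral.integral_eq_sub_of_hasDerivAt hderiv
    ((Real.continuous_exp.comp (continuous_const.mul continuous_id)).intervalIntegrable T t)]
  ring

lemma exp_decay_integral {g : ℝ → ℝ} {k L : ℝ} (hk : 0 < k)
    (hgc : ContinuousOn g (Set.Ici 0))
    (hlim : Tendsto (fun s => g s * Real.exp (-(k * s))) atTop (nhds L)) :
    Tendsto (fun t => Real.exp (-(k * t)) * ∫ s in (0:ℝ)..t, g s) atTop (nhds (L / k)) := by
  have hgint : ∀ a b : ℝ, 0 ≤ a → 0 ≤ b → IntervalIntegrable g volume a b := by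
    intro a b ha hb
    refine (hgc.mono ?_).intervalIntegrable
    rw [Set.uIcc_eq_union]
    refine Set.union_subset ?_ ?_ <;> intro x hx
    · exact ha.trans hx.1
    · exact hb.trans hx.1
  rw [Metric.tendsto_nhds]
  intro δ hδ
  have hδ3 : 0 < δ * k / 3 := by positivity
  obtain ⟨T₁, hT₁⟩ := eventually_atTop.mp (Metric.tendsto_nhds.mp hlim (δ * k / 3) hδ3)
  set T := max T₁ 0 with hTdef
  have hT0 : (0:ℝ) ≤ T := le_max_right _ _
  have hTbound : ∀ s, T ≤ s → |g s - L * Real.exp (k * s)| ≤ δ * k / 3 * Real.exp (k * s) := by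
    intro s hs
    have h := hT₁ s (le_trans (le_max_left _ _) hs)
    rw [Real.dist_eq] at h
    have hpos : (0:ℝ) < Real.exp (k * s) := Real.exp_pos _
    have heq : |g s - L * Real.exp (k * s)|
        = |g s * Real.exp (-(k * s)) - L| * Real.exp (k * s) := by
      rw [← abs_of_pos hpos, ← abs_mul]
      congr 1
      rw [Real.exp_neg]
      field_simp
      try ring
      rw [abs_of_pos hpos]
    rw [heq]
    exact mul_le_mul_of_nonneg_right h.le hpos.le
  set C := |∫ s in (0:ℝ)..T, g s| + |L| * Real.exp (k * T) / k with hCdef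
  have hC : Tendsto (fun t => C * Real.exp (-(k * t))) atTop (nhds 0) := by
    rw [show (0:ℝ) = C * 0 by ring]
    refine Tendsto.const_mul C ?_
    refine Real.tendsto_exp_atBot.comp ?_
    refine tendsto_neg_atBot_iff.mpr ?_
    exact (tendsto_id.const_mul_atTop hk)
  have hev := hC.eventually (gt_mem_nhds (show (0:ℝ) < δ / 3 by positivity))
  filter_upwards [hev, eventually_ge_atTop T] with t hCt htT
  rw [Real.dist_eq]
  have hint1 : IntervalIntegrable g volume 0 T := hgint 0 T le_rfl hT0
  have hint2 : IntervalIntegrable g volume T t := hgint T t hT0 (hT0.trans htT)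
  have hsplit : ∫ s in (0:ℝ)..t, g s = (∫ s in (0:ℝ)..T, g s) + ∫ s in T..t, g s :=
    (intervalIntegral.integral_add_adjacent_intervals hint1 hint2).symm
  have hexp_cont : Continuous fun s : ℝ => Real.exp (k * s) :=
    Real.continuous_exp.comp (continuous_const.mul continuous_id)
  have hexp_int : IntervalIntegrable (fun s => Real.exp (k * s)) volume T t :=
    hexp_cont.intervalIntegrable T t
  have hmid : |(∫ s in T..t, g s) - L * (Real.exp (k * t) - Real.exp (k * T)) / k|
      ≤ δ * k / 3 * Real.exp (k * t) / k := by
    have heq : (∫ s in T..t, g s) - L * (Real.exp (k * t) - Real.exp (k * T)) / k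
        = ∫ s in T..t, (g s - L * Real.exp (k * s)) := by
      rw [intervalIntegral.integral_sub hint2 (hexp_int.const_mul L),
        intervalIntegral.integral_const_mul, integral_exp_mul k hk.ne' T t]
      ring
    rw [heq]
    have hae : ∀ᵐ s ∂(volume.restrict (Set.uIoc T t)),
        ‖g s - L * Real.exp (k * s)‖ ≤ δ * k / 3 * Real.exp (k * s) := by
      refine (ae_restrict_mem measurableSet_uIoc).mono fun s hs => ?_
      rw [Set.uIoc_of_le htT] at hs
      rw [Real.norm_eq_abs]
      exact hTbound s hs.1.le
    have hb := intervalIntegral.norm_integral_le_abs_of_norm_le hae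
      ((hexp_cont.intervalIntegrable T t).const_mul (δ * k / 3))
    rw [Real.norm_eq_abs] at hb
    refine hb.trans ?_
    rw [intervalIntegral.integral_const_mul, integral_exp_mul k hk.ne' T t]
    have hEle : Real.exp (k * T) ≤ Real.exp (k * t) :=
      Real.exp_le_exp.mpr (mul_le_mul_of_nonneg_left htT hk.le)
    rw [abs_of_nonneg (mul_nonneg (by positivity)
      (div_nonneg (by linarith) hk.le))]
    have hEpos := Real.exp_pos (k * T)
    have lhs_eq : δ * k / 3 * ((Real.exp (k * t) - Real.exp (k * T)) / k)
        = δ * (Real.exp (k * t) - Real.exp (k * T)) / 3 := by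
      field_simp
      try ring
    have rhs_eq : δ * k / 3 * Real.exp (k * t) / k = δ * Real.exp (k * t) / 3 := by
      field_simp
      try ring
    rw [lhs_eq, rhs_eq]
    nlinarith [mul_pos hδ hEpos]
  have hee : Real.exp (-(k * t)) * Real.exp (k * t) = 1 := by
    rw [← Real.exp_add]; simp
  have hfinal : Real.exp (-(k * t)) * (∫ s in (0:ℝ)..t, g s) - L / k
      = Real.exp (-(k * t)) * (∫ s in (0:ℝ)..T, g s)
        + Real.exp (-(k * t)) * ((∫ s in T..t, g s)
            - L * (Real.exp (k * t) - Real.exp (k * T)) / k)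
        + (-(L * Real.exp (k * T) * Real.exp (-(k * t)) / k)) := by
    rw [hsplit]
    simp only [Real.exp_neg]
    field_simp
    ring
  rw [hfinal]
  have habs := abs_add_three (Real.exp (-(k * t)) * (∫ s in (0:ℝ)..T, g s))
    (Real.exp (-(k * t)) * ((∫ s in T..t, g s)
        - L * (Real.exp (k * t) - Real.exp (k * T)) / k))
    (-(L * Real.exp (k * T) * Real.exp (-(k * t)) / k))
  refine lt_of_le_of_lt habs ?_
  have e1 : |Real.exp (-(k * t)) * (∫ s in (0:ℝ)..T, g s)|
      = Real.exp (-(k * t)) * |∫ s in (0:ℝ)..T, g s| := by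
    rw [abs_mul, abs_of_pos (Real.exp_pos _)]
  have e2 : |Real.exp (-(k * t)) * ((∫ s in T..t, g s)
      - L * (Real.exp (k * t) - Real.exp (k * T)) / k)|
      ≤ Real.exp (-(k * t)) * (δ * k / 3 * Real.exp (k * t) / k) := by
    rw [abs_mul, abs_of_pos (Real.exp_pos _)]
    exact mul_le_mul_of_nonneg_left hmid (Real.exp_pos _).le
  have e3 : |(-(L * Real.exp (k * T) * Real.exp (-(k * t)) / k))|
      = |L| * Real.exp (k * T) / k * Real.exp (-(k * t)) := by
    rw [abs_neg, abs_div, abs_mul, abs_mul, abs_of_pos (Real.exp_pos (k*T)),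
      abs_of_pos (Real.exp_pos _), abs_of_pos hk]
    ring
  have e2' : Real.exp (-(k * t)) * (δ * k / 3 * Real.exp (k * t) / k) = δ / 3 := by
    field_simp
    nlinarith [hee]
  have hsum : Real.exp (-(k * t)) * |∫ s in (0:ℝ)..T, g s|
      + δ / 3 + |L| * Real.exp (k * T) / k * Real.exp (-(k * t))
      = C * Real.exp (-(k * t)) + δ / 3 := by
    rw [hCdef]; ring
  calc |Real.exp (-(k * t)) * (∫ s in (0:ℝ)..T, g s)|
        + |Real.exp (-(k * t)) * ((∫ s in T..t, g s)
            - L * (Real.exp (k * t) - Real.exp (k * T)) / k)|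
        + |(-(L * Real.exp (k * T) * Real.exp (-(k * t)) / k))|
      ≤ Real.exp (-(k * t)) * |∫ s in (0:ℝ)..T, g s|
        + δ / 3 + |L| * Real.exp (k * T) / k * Real.exp (-(k * t)) := by
        rw [e1, e3]
        refine add_le_add (add_le_add le_rfl (e2.trans (le_of_eq e2'))) le_rfl
    _ = C * Real.exp (-(k * t)) + δ / 3 := hsum
    _ < δ / 3 + δ / 3 := by linarith
    _ < δ := by linarith

lemma phi_pos_of_ode {Φ q : ℝ → ℝ} (hq : Continuous q) (hΦ0 : Φ 0 = 1)
    (hΦ : ∀ t, 0 ≤ t → HasDerivAt Φ (-(q t) * Φ t) t) :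
    ∀ t, 0 ≤ t → 0 < Φ t := by
  intro t ht
  set A : ℝ → ℝ := fun u => ∫ s in (0:ℝ)..u, q s with hA
  have hAderiv : ∀ u : ℝ, HasDerivAt A (q u) u := fun u =>
    (hq.integral_hasStrictDerivAt 0 u).hasDerivAt
  have hF : ∀ u ∈ Set.uIcc 0 t, HasDerivAt (fun x => Φ x * Real.exp (A x))
      ((fun _ => (0:ℝ)) u) u := by
    intro u hu
    rw [Set.uIcc_of_le ht] at hu
    have h1 := hΦ u hu.1
    have h2 := (hAderiv u).exp
    have h3 : HasDerivAt (fun x => Φ x * Real.exp (A x)) _ u := h1.mul h2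
    convert h3 using 1
    ring
  have hzero := intervalIntegral.integral_eq_sub_of_hasDerivAt hF
    (intervalIntegrable_const)
  simp only [intervalIntegral.integral_const, smul_eq_mul, mul_zero] at hzero
  have hA0 : A 0 = 0 := by simp [hA]
  rw [hΦ0, hA0] at hzero
  simp at hzero
  -- hzero : 0 = Φ t * Real.exp (A t) - 1  (some form)
  have hΦt : Φ t * Real.exp (A t) = 1 := by linarith
  have hexp := Real.exp_pos (A t)
  nlinarith [hexp]

lemma J_tendsto {Φ : ℝ → ℝ} {a c : ℝ} (ha : 0 < a)
    (hpos : ∀ t, 0 ≤ t → 0 < Φ t) (hcont : ContinuousOn Φ (Set.Ici 0))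
    (hc : c ≠ 0)
    (hclim : Tendsto (fun t => Real.exp (a * t) * Φ t) atTop (nhds c)) :
    Tendsto (fun t => Φ t ^ 2 * ∫ s in (0:ℝ)..t, (1 / Φ s) ^ 2) atTop
      (nhds (1 / (2 * a))) := by
  set g : ℝ → ℝ := fun s => (1 / Φ s) ^ 2 with hg
  have hgc : ContinuousOn g (Set.Ici 0) := by
    refine ContinuousOn.pow ?_ 2
    exact continuousOn_const.div hcont fun t ht => (hpos t ht).ne'
  have hL : Tendsto (fun s => g s * Real.exp (-(2 * a * s))) atTop (nhds ((1 / c) ^ 2)) := by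
    have heq : ∀ s : ℝ, g s * Real.exp (-(2 * a * s))
        = (1 / (Real.exp (a * s) * Φ s)) ^ 2 := by
      intro s
      rw [hg]
      simp only [div_pow, one_pow, mul_pow]
      have h2 : Real.exp (a * s) ^ 2 = Real.exp (2 * a * s) := by
        rw [sq, ← Real.exp_add]; ring_nf
      rw [show Real.exp (-(2 * a * s)) = (Real.exp (a * s) ^ 2)⁻¹ by
        rw [h2, ← Real.exp_neg]]
      field_simp
      try ring
    refine Tendsto.congr (fun s => (heq s).symm) ?_
    exact ((tendsto_const_nhds.div hclim hc).pow 2)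
  have hmain := exp_decay_integral (by positivity : (0:ℝ) < 2 * a) hgc hL
  have hsq : Tendsto (fun t => (Real.exp (a * t) * Φ t) ^ 2) atTop (nhds (c ^ 2)) :=
    hclim.pow 2
  have hprod := hsq.mul hmain
  have hval : c ^ 2 * ((1 / c) ^ 2 / (2 * a)) = 1 / (2 * a) := by
    field_simp
  rw [hval] at hprod
  refine hprod.congr fun t => ?_
  have hee : Real.exp (a * t) ^ 2 * Real.exp (-(2 * a * t)) = 1 := by
    rw [sq, ← Real.exp_add, ← Real.exp_add]
    ring_nf
    exact Real.exp_zero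
  linear_combination (Φ t ^ 2 * ∫ s in (0:ℝ)..t, g s) * hee

lemma mean_identity {a y₀ ε Φt b tcε : ℝ} (ha : 0 < a) (hy : y₀ ≠ 0) (hε : 0 < ε)
    (htc : tcε = (1 / (2 * a)) * (Real.log (1 / ε) + Real.log (2 * a * y₀ ^ 2))) :
    Φt * y₀ / Real.sqrt (ε / (2 * a))
      = (Real.exp (a * (tcε + b * (1 / a))) * Φt) * (Real.exp (-b) * (y₀ / |y₀|)) := by
  have hK : (0:ℝ) < 2 * a * y₀ ^ 2 := by positivity
  set E := Real.exp (-(a * tcε)) with hE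
  have hEpos : 0 < E := Real.exp_pos _
  have hEsq : E ^ 2 = ε / (2 * a * y₀ ^ 2) := by
    have h2atc : 2 * a * tcε = Real.log (1 / ε) + Real.log (2 * a * y₀ ^ 2) := by
      rw [htc]; field_simp
    have : E ^ 2 = Real.exp (-(2 * a * tcε)) := by
      rw [hE, sq, ← Real.exp_add]; ring_nf
    rw [this, h2atc, neg_add, Real.exp_add, Real.exp_neg, Real.exp_neg,
      Real.exp_log (by positivity : (0:ℝ) < 1 / ε), Real.exp_log hK]
    rw [one_div, inv_inv, div_eq_mul_inv]
  have hEval : E = Real.sqrt (ε / (2 * a)) / |y₀| := by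
    have h1 : E = Real.sqrt (E ^ 2) := (Real.sqrt_sq hEpos.le).symm
    rw [h1, hEsq, show ε / (2 * a * y₀ ^ 2) = (ε / (2 * a)) / y₀ ^ 2 by ring,
      Real.sqrt_div (by positivity : (0:ℝ) ≤ ε / (2 * a)), Real.sqrt_sq_eq_abs]
  have hS : (0:ℝ) < Real.sqrt (ε / (2 * a)) := Real.sqrt_pos.mpr (by positivity)
  have hexp1 : Real.exp (a * (tcε + b * (1 / a))) = E⁻¹ * Real.exp b := by
    rw [hE, ← Real.exp_neg, neg_neg, ← Real.exp_add]
    congr 1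
    field_simp
  rw [hexp1]
  have hSval : Real.sqrt (ε / (2 * a)) = E * |y₀| := by
    rw [hEval]; field_simp; try ring
  rw [hSval]
  have hbb : Real.exp b * Real.exp (-b) = 1 := by rw [← Real.exp_add]; simp
  have habs : |y₀| ≠ 0 := by simpa using hy
  field_simp
  linear_combination (-Φt) * hbb

/-- profile cut-off for the linearized diffusion.
With `d ε t` the total variation distance between the law
`N(Φ t y₀, ε Φ t² ∫₀ᵗ (1/Φ s)² ds)` of the linearized diffusion at time `t` and its
equilibrium `N(0, ε/(2V''(0)))`, with cut-off time
`t_ε = (1/(2V''(0)))(ln(1/ε) + ln(2V''(0) y₀²))`, window `w_ε = 1/V''(0)`,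
`c ≠ 0` the limit of `e^{V''(0)t} Φ t`, and profile
`G b = ‖N(c e^{-b},1) − N(0,1)‖`, one has `d ε (t_ε + b w_ε) → G b` as `ε → 0⁺` for
every `b`, with `G(b) → 1` as `b → -∞` and `G(b) → 0` as `b → +∞`. -/
theorem linearized_diffusion_profile_cutoff
    (V ψ Φ : ℝ → ℝ) (x₀ y₀ c : ℝ)
    (hV : ContDiff ℝ 3 V)
    (hV0 : V 0 = 0)
    (hcrit : ∀ x : ℝ, deriv V x = 0 ↔ x = 0)
    (hV''0 : 0 < deriv (deriv V) 0)
    (hcoercive : Tendsto V (Filter.cocompact ℝ) atTop)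
    (hx₀ : x₀ ≠ 0)
    (hψ0 : ψ 0 = x₀)
    (hψ : ∀ t : ℝ, 0 ≤ t → HasDerivAt ψ (-(deriv V (ψ t))) t)
    (hΦ0 : Φ 0 = 1)
    (hΦ : ∀ t : ℝ, 0 ≤ t → HasDerivAt Φ (-(deriv (deriv V) (ψ t)) * Φ t) t)
    (hy₀ : y₀ ≠ 0)
    (hc : c ≠ 0)
    (hclim : Tendsto (fun t : ℝ => Real.exp (deriv (deriv V) 0 * t) * Φ t) atTop (nhds c))
    (d : ℝ → ℝ → ℝ)
    (hd : ∀ ε t : ℝ, d ε t =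
      tvDist
        (gaussianReal (Φ t * y₀)
          (ε * (Φ t) ^ 2 * ∫ s in (0:ℝ)..t, (1 / Φ s) ^ 2).toNNReal)
        (gaussianReal 0 (ε / (2 * deriv (deriv V) 0)).toNNReal))
    (tc w : ℝ → ℝ)
    (htc : ∀ ε : ℝ, tc ε = (1 / (2 * deriv (deriv V) 0)) *
      (Real.log (1 / ε) + Real.log (2 * deriv (deriv V) 0 * y₀ ^ 2)))
    (hw : ∀ ε : ℝ, w ε = 1 / deriv (deriv V) 0)
    (G : ℝ → ℝ)
    (hG : ∀ b : ℝ, G b =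
      tvDist (gaussianReal (c * Real.exp (-b)) 1) (gaussianReal 0 1)) :
    (∀ b : ℝ, Tendsto (fun ε : ℝ => d ε (tc ε + b * w ε))
        (nhdsWithin 0 (Set.Ioi 0)) (nhds (G b))) ∧
      Tendsto G atBot (nhds 1) ∧ Tendsto G atTop (nhds 0) := by
  set a := deriv (deriv V) 0 with ha
  -- continuity of the second derivative
  have hV3 : ContDiff ℝ (2 + 1) V := hV
  have hdV : ContDiff ℝ 2 (deriv V) := (contDiff_succ_iff_deriv.mp hV3).2.2
  have hddV : ContDiff ℝ 1 (deriv (deriv V)) :=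
    (contDiff_succ_iff_deriv.mp (show ContDiff ℝ (1 + 1) (deriv V) from hdV)).2.2
  have hV''cont : Continuous (deriv (deriv V)) := hddV.continuous
  have hψmax : Continuous fun s : ℝ => ψ (max s 0) := by
    rw [continuous_iff_continuousAt]
    intro s
    have h1 : ContinuousAt (fun u : ℝ => max u 0) s :=
      (continuous_id.max continuous_const).continuousAt
    have h2 : ContinuousAt ψ (max s 0) := (hψ _ (le_max_right s 0)).continuousAt
    exact ContinuousAt.comp (g := ψ) h2 h1
  have hqc : Continuous fun s : ℝ => deriv (deriv V) (ψ (max s 0)) := hV''cont.comp hψmax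
  have hΦ' : ∀ t, 0 ≤ t → HasDerivAt Φ (-((fun s : ℝ => deriv (deriv V) (ψ (max s 0))) t) * Φ t) t := by
    intro t ht
    have h := hΦ t ht
    simpa [max_eq_left ht] using h
  have hΦpos : ∀ t, 0 ≤ t → 0 < Φ t := phi_pos_of_ode hqc hΦ0 hΦ'
  have hΦcont : ContinuousOn Φ (Set.Ici 0) := fun t ht =>
    (hΦ t ht).continuousAt.continuousWithinAt
  have hJ := J_tendsto hV''0 hΦpos hΦcont hc hclim
  have hGform : ∀ b : ℝ, G b = 1 - ∫ x, min (gaussianPDFReal (c * Real.exp (-b)) 1 x)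
      (gaussianPDFReal 0 1 x) := fun b => by
    rw [hG b, tvDist_gaussianReal _ _ one_ne_zero one_ne_zero]
  refine ⟨?_, ?_, ?_⟩
  · -- main convergence
    intro b
    have hTat : Tendsto (fun ε => tc ε + b * w ε) (nhdsWithin 0 (Set.Ioi 0)) atTop := by
      have hlog : Tendsto (fun ε : ℝ => Real.log (1 / ε)) (nhdsWithin 0 (Set.Ioi 0)) atTop := by
        have h1 := Real.tendsto_log_nhdsGT_zero
        have h2 : Tendsto (fun ε : ℝ => -Real.log ε) (nhdsWithin 0 (Set.Ioi 0)) atTop :=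
          tendsto_neg_atTop_iff.mpr h1
        refine h2.congr fun ε => ?_
        rw [one_div, Real.log_inv]
      have h3 : Tendsto (fun ε : ℝ => (1 / (2 * a)) * (Real.log (1 / ε)
          + Real.log (2 * a * y₀ ^ 2)) + b * (1 / a)) (nhdsWithin 0 (Set.Ioi 0)) atTop := by
        refine tendsto_atTop_add_const_right _ _ ?_
        refine Tendsto.const_mul_atTop (by positivity) ?_
        exact tendsto_atTop_add_const_right _ _ hlog
      refine h3.congr fun ε => ?_
      rw [htc ε, hw ε]
    have hW : Tendsto (fun ε => 2 * a * (Φ (tc ε + b * w ε) ^ 2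
        * ∫ s in (0:ℝ)..(tc ε + b * w ε), (1 / Φ s) ^ 2))
        (nhdsWithin 0 (Set.Ioi 0)) (nhds 1) := by
      have h := (hJ.comp hTat).const_mul (2 * a)
      rw [show (2 * a) * (1 / (2 * a)) = 1 by field_simp] at h
      exact h
    have hM : Tendsto (fun ε => (Real.exp (a * (tc ε + b * w ε)) * Φ (tc ε + b * w ε))
        * (Real.exp (-b) * (y₀ / |y₀|)))
        (nhdsWithin 0 (Set.Ioi 0)) (nhds (c * (Real.exp (-b) * (y₀ / |y₀|)))) := by
      refine Tendsto.mul_const _ ?_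
      exact hclim.comp hTat
    have hlim0 := tendsto_min_integral hM hW
    have hGb : G b = 1 - ∫ x, min (gaussianPDFReal (c * (Real.exp (-b) * (y₀ / |y₀|))) 1 x)
        (gaussianPDFReal 0 1 x) := by
      rw [hGform b]
      rcases lt_or_gt_of_ne hy₀ with hneg | hpos
      · rw [abs_of_neg hneg]
        rw [show c * (Real.exp (-b) * (y₀ / -y₀)) = -(c * Real.exp (-b)) by
          field_simp]
        rw [min_integral_neg]
      · rw [abs_of_pos hpos, div_self hpos.ne']
        norm_num
    rw [hGb]
    refine Tendsto.congr' ?_ (tendsto_const_nhds.sub hlim0)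
    -- eventual equality
    have hev1 : ∀ᶠ ε in nhdsWithin 0 (Set.Ioi 0), 1 ≤ tc ε + b * w ε :=
      hTat.eventually (eventually_ge_atTop 1)
    filter_upwards [hev1, self_mem_nhdsWithin] with ε hTε hεpos
    rw [Set.mem_Ioi] at hεpos
    have hT0 : (0:ℝ) ≤ tc ε + b * w ε := by linarith
    have hΦT := hΦpos _ hT0
    have hIint : IntervalIntegrable (fun s => (1 / Φ s) ^ 2) volume 0 (tc ε + b * w ε) := by
      have hsub : Set.uIcc (0:ℝ) (tc ε + b * w ε) ⊆ Set.Ici 0 := by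
        rw [Set.uIcc_of_le hT0]
        exact fun x hx => hx.1
      exact ((continuousOn_const.div (hΦcont.mono hsub)
        (fun x hx => (hΦpos x (hsub hx)).ne')).pow 2).intervalIntegrable
    have hIpos : 0 < ∫ s in (0:ℝ)..(tc ε + b * w ε), (1 / Φ s) ^ 2 := by
      refine intervalIntegral.intervalIntegral_pos_of_pos_on hIint ?_ (by linarith)
      intro x hx
      have := hΦpos x hx.1.le
      positivity
    have hvpos : 0 < ε * Φ (tc ε + b * w ε) ^ 2
        * ∫ s in (0:ℝ)..(tc ε + b * w ε), (1 / Φ s) ^ 2 := by positivity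
    have hspos : 0 < ε / (2 * a) := by positivity
    have hvne : (ε * Φ (tc ε + b * w ε) ^ 2
        * ∫ s in (0:ℝ)..(tc ε + b * w ε), (1 / Φ s) ^ 2).toNNReal ≠ 0 := fun h =>
      absurd (Real.toNNReal_eq_zero.mp h) (not_le.mpr hvpos)
    have hsne : (ε / (2 * a)).toNNReal ≠ 0 := fun h =>
      absurd (Real.toNNReal_eq_zero.mp h) (not_le.mpr hspos)
    rw [hd ε _, tvDist_gaussianReal _ _ hvne hsne, min_integral_scaling hvpos hspos]
    have hWeq : (ε * Φ (tc ε + b * w ε) ^ 2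
        * ∫ s in (0:ℝ)..(tc ε + b * w ε), (1 / Φ s) ^ 2) / (ε / (2 * a))
        = 2 * a * (Φ (tc ε + b * w ε) ^ 2
          * ∫ s in (0:ℝ)..(tc ε + b * w ε), (1 / Φ s) ^ 2) := by
      field_simp
    have hMeq : Φ (tc ε + b * w ε) * y₀ / Real.sqrt (ε / (2 * a))
        = (Real.exp (a * (tc ε + b * w ε)) * Φ (tc ε + b * w ε))
          * (Real.exp (-b) * (y₀ / |y₀|)) := by
      rw [hw ε]
      exact mean_identity hV''0 hy₀ hεpos (htc ε)
    rw [hWeq, hMeq]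
  · -- G tendsto 1 at atBot
    have h1 : Tendsto (fun b : ℝ => ∫ x, min (gaussianPDFReal (c * Real.exp (-b)) 1 x)
        (gaussianPDFReal 0 1 x)) atBot (nhds 0) := by
      refine tendsto_min_integral_escape ?_
      have h2 : Tendsto (fun b : ℝ => |c| * Real.exp (-b)) atBot atTop := by
        refine Tendsto.const_mul_atTop (abs_pos.mpr hc) ?_
        exact Real.tendsto_exp_atTop.comp (tendsto_neg_atTop_iff.mpr tendsto_id)
      refine h2.congr fun b => ?_
      rw [abs_mul, abs_of_pos (Real.exp_pos _)]
    have h3 : Tendsto G atBot (nhds (1 - 0)) := by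
      refine Tendsto.congr (fun b => (hGform b).symm) ?_
      exact tendsto_const_nhds.sub h1
    simpa using h3
  · -- G tendsto 0 at atTop
    have hM : Tendsto (fun b : ℝ => c * Real.exp (-b)) atTop (nhds 0) := by
      rw [show (0:ℝ) = c * 0 by ring]
      refine Tendsto.const_mul c ?_
      exact Real.tendsto_exp_atBot.comp (tendsto_neg_atBot_iff.mpr tendsto_id)
    have h1 := tendsto_min_integral (l := atTop) hM tendsto_const_nhds
    simp only [Real.toNNReal_one] at h1
    have h2 : ∫ x, min (gaussianPDFReal 0 1 x) (gaussianPDFReal 0 1 x) = 1 := by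
      simp only [min_self]
      exact integral_gaussianPDFReal_eq_one 0 one_ne_zero
    rw [h2] at h1
    have h3 : Tendsto G atTop (nhds (1 - 1)) := by
      refine Tendsto.congr (fun b => (hGform b).symm) ?_
      exact tendsto_const_nhds.sub h1
    simpa using h3
end

section
/- Let V be a smooth coercive regular potential with κ₂ := sup_x |V''(x)| < ∞. Let x₀ ∈ ℝ \ {0}, let ψ be the solution of dψ_t = -V'(ψ_t)dt with ψ_0 = x₀, let W : [0,∞) → ℝ be a continuous function with W(0) = 0 (a fixed Brownian path), set B_t := sup_{0≤s≤t} |W(s)|, and for ε > 0 let x^ε be a continuous solution of the integral equation x^ε_t = x₀ − ∫₀ᵗ V'(x^ε_s) ds + √ε W_t. Then for every t ≥ 0, |x^ε_t − ψ_t| ≤ √ε B_t (κ₂ t + 1). -/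
open Filter
open Topology

lemma aux_pos_bound (Z : ℝ → ℝ) (C T : ℝ) (hC : 0 ≤ C) (hT : 0 ≤ T) (hZ0 : Z 0 = 0)
    (hcont : ContinuousOn Z (Set.Icc 0 T))
    (hderiv : ∀ s ∈ Set.Ioo (0:ℝ) T, 0 < Z s → DifferentiableAt ℝ Z s ∧ deriv Z s ≤ C) :
    Z T ≤ C * T := by
  by_contra hcon
  push_neg at hcon
  set S : Set ℝ := {s | s ∈ Set.Icc (0:ℝ) T ∧ Z s ≤ C * s} with hSdef
  have h0S : (0:ℝ) ∈ S := ⟨⟨le_refl 0, hT⟩, by simp [hZ0]⟩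
  have hSne : S.Nonempty := ⟨0, h0S⟩
  have hSbdd : BddAbove S := ⟨T, fun s hs => hs.1.2⟩
  have hfcont : ContinuousOn (fun s => Z s - C * s) (Set.Icc 0 T) :=
    hcont.sub (continuous_const.mul continuous_id).continuousOn
  have hSclosed : IsClosed S := by
    have hEq : S = Set.Icc 0 T ∩ (fun s => Z s - C * s) ⁻¹' Set.Iic 0 := by
      ext s
      simp only [hSdef, Set.mem_setOf_eq, Set.mem_inter_iff, Set.mem_preimage, Set.mem_Iic,
        sub_nonpos]
    rw [hEq]
    exact hfcont.preimage_isClosed_of_isClosed isClosed_Icc isClosed_Iic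
  have hτS : sSup S ∈ S := hSclosed.csSup_mem hSne hSbdd
  set τ := sSup S with hτdef
  have hτ0 : 0 ≤ τ := hτS.1.1
  have hτT : τ ≤ T := hτS.1.2
  have hτZ : Z τ ≤ C * τ := hτS.2
  have hτltT : τ < T := by
    rcases lt_or_eq_of_le hτT with h | h
    · exact h
    · exfalso; rw [h] at hτZ; linarith
  have hpos : ∀ s ∈ Set.Ioo τ T, 0 < Z s ∧ s ∈ Set.Ioo (0:ℝ) T := by
    intro s hs
    have hnot : ¬ Z s ≤ C * s := by
      intro h
      have : s ≤ τ := le_csSup hSbdd ⟨⟨le_trans hτ0 hs.1.le, hs.2.le⟩, h⟩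
      exact absurd hs.1 (not_lt.mpr this)
    have hs0 : 0 < s := lt_of_le_of_lt hτ0 hs.1
    refine ⟨?_, ⟨hs0, hs.2⟩⟩
    have : 0 ≤ C * s := mul_nonneg hC hs0.le
    linarith [not_le.mp hnot]
  have hanti : AntitoneOn (fun s => Z s - C * s) (Set.Icc τ T) := by
    apply antitoneOn_of_deriv_nonpos (convex_Icc τ T)
      (hfcont.mono (Set.Icc_subset_Icc_left hτ0))
    · rw [interior_Icc]
      intro s hs
      obtain ⟨hz, hio⟩ := hpos s hs
      exact ((hderiv s hio hz).1.sub ((differentiable_id.const_mul C) s)).differentiableWithinAt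
    · rw [interior_Icc]
      intro s hs
      obtain ⟨hz, hio⟩ := hpos s hs
      obtain ⟨hd, hle⟩ := hderiv s hio hz
      have h2 : HasDerivAt (fun u => Z u - C * u) (deriv Z s - C * 1) s :=
        hd.hasDerivAt.sub ((hasDerivAt_id s).const_mul C)
      rw [h2.deriv]
      linarith
  have := hanti ⟨le_refl τ, hτT⟩ ⟨hτT, le_refl T⟩ hτT
  simp only at this
  linarith

/-- zeroth order estimate. For a smooth coercive regular potential `V`,
a fixed continuous path `W` with `W 0 = 0`, `B t := sup_{0 ≤ s ≤ t} |W s|`,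
`κ₂ := sup_x |V''(x)|`, the solution `x^ε` of
`x^ε_t = x₀ - ∫₀ᵗ V'(x^ε_s) ds + √ε W_t` and the gradient flow `ψ` started at `x₀`
satisfy `|x^ε_t - ψ_t| ≤ √ε B_t (κ₂ t + 1)` for every `t ≥ 0`. -/
theorem zeroth_order_estimate
    (V ψ W x : ℝ → ℝ) (x₀ ε δ : ℝ)
    (hV : ContDiff ℝ 3 V)
    (hV0 : V 0 = 0)
    (hcrit : ∀ z : ℝ, deriv V z = 0 ↔ z = 0)
    (hV''0 : 0 < deriv (deriv V) 0)
    (hcoercive : Tendsto V (Filter.cocompact ℝ) atTop)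
    (hδ : 0 < δ)
    (hconvex : ∀ z : ℝ, δ ≤ deriv (deriv V) z)
    (hbdd2 : BddAbove (Set.range fun z : ℝ => |deriv (deriv V) z|))
    (hbdd3 : BddAbove (Set.range fun z : ℝ => |deriv (deriv (deriv V)) z|))
    (hx₀ : x₀ ≠ 0)
    (hψ0 : ψ 0 = x₀)
    (hψ : ∀ t : ℝ, 0 ≤ t → HasDerivAt ψ (-(deriv V (ψ t))) t)
    (hW : ContinuousOn W (Set.Ici 0))
    (hW0 : W 0 = 0)
    (hε : 0 < ε)
    (hxcont : ContinuousOn x (Set.Ici 0))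
    (hx : ∀ t : ℝ, 0 ≤ t →
      x t = x₀ - (∫ s in (0:ℝ)..t, deriv V (x s)) + Real.sqrt ε * W t) :
    ∀ t : ℝ, 0 ≤ t →
      |x t - ψ t| ≤ Real.sqrt ε * (⨆ s : Set.Icc (0:ℝ) t, |W s|) *
        ((⨆ z : ℝ, |deriv (deriv V) z|) * t + 1) := by
  -- basic facts about V'
  have h3 : ContDiff ℝ ((2:WithTop ℕ∞)+1) V := by convert hV using 2; norm_num
  rw [contDiff_succ_iff_deriv] at h3
  have hV'diff : Differentiable ℝ (deriv V) := h3.2.2.differentiable (by norm_num)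
  have hV'cont : Continuous (deriv V) := hV'diff.continuous
  set κ : ℝ := ⨆ z : ℝ, |deriv (deriv V) z| with hκdef
  have hκ_ge : ∀ c : ℝ, |deriv (deriv V) c| ≤ κ := fun c => le_ciSup hbdd2 c
  have hκ0 : 0 ≤ κ := le_trans (abs_nonneg _) (hκ_ge 0)
  have hmono : Monotone (deriv V) := by
    apply StrictMono.monotone
    apply strictMono_of_deriv_pos
    intro z
    exact lt_of_lt_of_le hδ (hconvex z)
  have hlip : ∀ a b : ℝ, a ≤ b → deriv V b - deriv V a ≤ κ * (b - a) := by
    intro a b hab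
    rcases eq_or_lt_of_le hab with rfl | hab
    · simp
    · obtain ⟨c, _, hc⟩ := exists_hasDerivAt_eq_slope (deriv V) (deriv (deriv V)) hab
        hV'cont.continuousOn (fun u _ => (hV'diff u).hasDerivAt)
      have h1 : deriv V b - deriv V a = deriv (deriv V) c * (b - a) := by
        rw [hc, div_mul_cancel₀ _ (sub_ne_zero.mpr hab.ne')]
      rw [h1]
      exact mul_le_mul_of_nonneg_right (le_trans (le_abs_self _) (hκ_ge c)) (by linarith)
  -- continuity of ψ on [0, ∞)
  have hψcont : ContinuousOn ψ (Set.Ici 0) := fun u hu =>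
    ((hψ u hu).continuousAt).continuousWithinAt
  -- FTC for ψ
  have hψ_int : ∀ u : ℝ, 0 ≤ u → ψ u = x₀ - ∫ s in (0:ℝ)..u, deriv V (ψ s) := by
    intro u hu
    have huIcc : Set.uIcc (0:ℝ) u = Set.Icc 0 u := Set.uIcc_of_le hu
    have hsub : Set.uIcc (0:ℝ) u ⊆ Set.Ici 0 := by
      rw [huIcc]; exact fun s hs => hs.1
    have hci : ContinuousOn (fun s => -(deriv V (ψ s))) (Set.uIcc 0 u) :=
      ((hV'cont.comp_continuousOn (hψcont.mono hsub))).neg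
    have hftc := intervalIntegral.integral_eq_sub_of_hasDerivAt
      (f := ψ) (f' := fun s => -(deriv V (ψ s)))
      (fun s hs => hψ s (hsub hs).out) hci.intervalIntegrable
    rw [intervalIntegral.integral_neg, hψ0] at hftc
    linarith
  -- the function Z
  set g : ℝ → ℝ := fun s => deriv V (ψ s) - deriv V (x s) with hgdef
  set Z : ℝ → ℝ := fun u => ∫ s in (0:ℝ)..u, g s with hZdef
  have hgcont : ContinuousOn g (Set.Ici 0) :=
    (hV'cont.comp_continuousOn hψcont).sub (hV'cont.comp_continuousOn hxcont)
  have hZ_eq : ∀ u : ℝ, 0 ≤ u → Z u = x u - ψ u - Real.sqrt ε * W u := by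
    intro u hu
    have hsub : Set.uIcc (0:ℝ) u ⊆ Set.Ici 0 := by
      rw [Set.uIcc_of_le hu]; exact fun s hs => hs.1
    have hi1 : IntervalIntegrable (fun s => deriv V (ψ s)) MeasureTheory.volume 0 u :=
      ((hV'cont.comp_continuousOn (hψcont.mono hsub))).intervalIntegrable
    have hi2 : IntervalIntegrable (fun s => deriv V (x s)) MeasureTheory.volume 0 u :=
      ((hV'cont.comp_continuousOn (hxcont.mono hsub))).intervalIntegrable
    have hZu : Z u = (∫ s in (0:ℝ)..u, deriv V (ψ s)) - ∫ s in (0:ℝ)..u, deriv V (x s) := by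
      rw [hZdef]
      exact intervalIntegral.integral_sub hi1 hi2
    have hxu := hx u hu
    have hψu := hψ_int u hu
    rw [hZu]
    linarith
  have hZ0 : Z 0 = 0 := by rw [hZdef]; simp
  -- derivative of Z at interior points
  have hZd : ∀ T : ℝ, ∀ s ∈ Set.Ioo (0:ℝ) T, HasDerivAt Z (g s) s := by
    intro T s hs
    have hgIoi : ContinuousOn g (Set.Ioi 0) := hgcont.mono Set.Ioi_subset_Ici_self
    have hca : ContinuousAt g s :=
      hgIoi.continuousAt (isOpen_Ioi.mem_nhds hs.1)
    have hmeas : StronglyMeasurableAtFilter g (𝓝 s) :=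
      hgIoi.stronglyMeasurableAtFilter isOpen_Ioi s hs.1
    have hint : IntervalIntegrable g MeasureTheory.volume 0 s := by
      apply ContinuousOn.intervalIntegrable
      apply hgcont.mono
      rw [Set.uIcc_of_le hs.1.le]
      exact fun u hu => hu.1
    exact intervalIntegral.integral_hasDerivAt_right hint hmeas hca
  -- main argument
  intro T hT
  set B : ℝ := ⨆ s : Set.Icc (0:ℝ) T, |W s| with hBdef
  haveI hne : Nonempty (Set.Icc (0:ℝ) T) := ⟨⟨0, Set.mem_Icc.mpr ⟨le_refl 0, hT⟩⟩⟩
  have hBbdd : BddAbove (Set.range fun s : Set.Icc (0:ℝ) T => |W s|) := by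
    have himg := (isCompact_Icc.image_of_continuousOn
      ((hW.mono (Set.Icc_subset_Ici_self : Set.Icc (0:ℝ) T ⊆ Set.Ici 0)).abs)).bddAbove
    rwa [Set.image_eq_range] at himg
  have hBle : ∀ s : ℝ, 0 ≤ s → s ≤ T → |W s| ≤ B := fun s h1 h2 =>
    le_ciSup hBbdd ⟨s, Set.mem_Icc.mpr ⟨h1, h2⟩⟩
  have hB0 : 0 ≤ B := le_trans (abs_nonneg (W 0)) (hBle 0 le_rfl hT)
  have hsq : 0 ≤ Real.sqrt ε := Real.sqrt_nonneg ε
  set C : ℝ := κ * (Real.sqrt ε * B) with hCdef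
  have hC0 : 0 ≤ C := mul_nonneg hκ0 (mul_nonneg hsq hB0)
  -- sign bounds on g
  have hbound : ∀ s ∈ Set.Ioo (0:ℝ) T, (0 < Z s → g s ≤ C) ∧ (Z s < 0 → -C ≤ g s) := by
    intro s hs
    have hzs := hZ_eq s hs.1.le
    have hWb : |W s| ≤ B := hBle s hs.1.le hs.2.le
    have hWs1 : Real.sqrt ε * W s ≤ Real.sqrt ε * B :=
      mul_le_mul_of_nonneg_left (le_trans (le_abs_self _) hWb) hsq
    have hWs2 : -(Real.sqrt ε * B) ≤ Real.sqrt ε * W s := by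
      have := mul_le_mul_of_nonneg_left (le_trans (le_abs_self _) (by rwa [abs_neg])
        : -W s ≤ B) hsq
      linarith
    constructor
    · intro hz
      rcases le_or_gt (ψ s) (x s) with h | h
      · have := hmono h
        simp only [hgdef]
        linarith
      · have h2 := hlip (x s) (ψ s) h.le
        have h3 : ψ s - x s ≤ Real.sqrt ε * B := by
          have : ψ s - x s = -(Z s) - Real.sqrt ε * W s := by rw [hzs]; ring
          linarith
        simp only [hgdef]
        have := mul_le_mul_of_nonneg_left h3 hκ0
        linarith
    · intro hz
      rcases le_or_gt (x s) (ψ s) with h | h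
      · have := hmono h
        simp only [hgdef]
        linarith
      · have h2 := hlip (ψ s) (x s) h.le
        have h3 : x s - ψ s ≤ Real.sqrt ε * B := by
          have : x s - ψ s = Z s + Real.sqrt ε * W s := by rw [hzs]; ring
          linarith
        simp only [hgdef]
        have := mul_le_mul_of_nonneg_left h3 hκ0
        linarith
  have hZcont : ContinuousOn Z (Set.Icc 0 T) := by
    have hc : ContinuousOn (fun u => x u - ψ u - Real.sqrt ε * W u) (Set.Icc 0 T) :=
      ((hxcont.mono Set.Icc_subset_Ici_self).sub
        (hψcont.mono Set.Icc_subset_Ici_self)).sub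
        (continuousOn_const.mul (hW.mono Set.Icc_subset_Ici_self))
    exact hc.congr (fun u hu => hZ_eq u hu.1)
  have hZT1 : Z T ≤ C * T := by
    apply aux_pos_bound Z C T hC0 hT hZ0 hZcont
    intro s hs hz
    refine ⟨(hZd T s hs).differentiableAt, ?_⟩
    rw [(hZd T s hs).deriv]
    exact (hbound s hs).1 hz
  have hZT2 : -(Z T) ≤ C * T := by
    apply aux_pos_bound (fun u => -(Z u)) C T hC0 hT (by simp [hZ0]) hZcont.neg
    intro s hs hz
    have hzneg : Z s < 0 := by linarith [hz]
    refine ⟨((hZd T s hs).neg).differentiableAt, ?_⟩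
    rw [show (fun u => -Z u) = -Z from rfl, ((hZd T s hs).neg).deriv]
    linarith [(hbound s hs).2 hzneg]
  have habs : |Z T| ≤ C * T := abs_le.mpr ⟨by linarith, hZT1⟩
  have hWT : |Real.sqrt ε * W T| ≤ Real.sqrt ε * B := by
    rw [abs_mul, abs_of_nonneg hsq]
    exact mul_le_mul_of_nonneg_left (hBle T hT le_rfl) hsq
  have hfin : x T - ψ T = Z T + Real.sqrt ε * W T := by rw [hZ_eq T hT]; ring
  calc |x T - ψ T| = |Z T + Real.sqrt ε * W T| := by rw [hfin]
    _ ≤ |Z T| + |Real.sqrt ε * W T| := abs_add_le _ _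
    _ ≤ C * T + Real.sqrt ε * B := add_le_add habs hWT
    _ = Real.sqrt ε * B * (κ * T + 1) := by rw [hCdef]; ring
end

section
/- Let V be a smooth coercive regular potential with κ₂ := sup_x |V''(x)| < ∞ and κ₃ := sup_x |V'''(x)| < ∞. Let x₀ ∈ ℝ \ {0}, let ψ solve dψ_t = -V'(ψ_t)dt with ψ_0 = x₀, let W : [0,∞) → ℝ be a continuous function with W(0) = 0, set B_t := sup_{0≤s≤t} |W(s)|, let y be the continuous solution of the integral equation y_t = −∫₀ᵗ V''(ψ_s) y_s ds + W_t, and for ε > 0 let x^ε be a continuous solution of x^ε_t = x₀ − ∫₀ᵗ V'(x^ε_s) ds + √ε W_t. Then for every t ≥ 0, |x^ε_t − ψ_t − √ε y_t| ≤ ε B_t² κ₃ (κ₂ t + 1)³ t. -/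
open Filter MeasureTheory intervalIntegral

lemma barrier_aux {f : ℝ → ℝ} {c T : ℝ} (hT : 0 ≤ T)
    (hdiff : ∀ s, DifferentiableAt ℝ f s)
    (hf0 : f 0 ≤ c)
    (hder : ∀ s ∈ Set.Ioo 0 T, c < f s → deriv f s < 0) :
    f T ≤ c := by
  by_contra hcon
  push_neg at hcon
  have hfc : Continuous f := continuous_iff_continuousAt.mpr fun s => (hdiff s).continuousAt
  set S : Set ℝ := Set.Icc 0 T ∩ f ⁻¹' Set.Iic c with hS
  have h0S : (0:ℝ) ∈ S := ⟨⟨le_refl 0, hT⟩, hf0⟩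
  have hScomp : IsCompact S :=
    isCompact_Icc.inter_right (isClosed_Iic.preimage hfc)
  have hs₀S : sSup S ∈ S := hScomp.sSup_mem ⟨0, h0S⟩
  set s₀ := sSup S with hs₀
  have hs₀0 : 0 ≤ s₀ := hs₀S.1.1
  have hs₀T : s₀ < T := by
    rcases lt_or_eq_of_le hs₀S.1.2 with h | h
    · exact h
    · exact absurd (h ▸ hs₀S.2) (not_le.mpr hcon)
  have hgt : ∀ s ∈ Set.Ioc s₀ T, c < f s := by
    intro s hs
    by_contra hle
    push_neg at hle
    have hsS : s ∈ S := ⟨⟨hs₀0.trans hs.1.le, hs.2⟩, hle⟩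
    exact absurd (le_csSup hScomp.bddAbove hsS) (not_le.mpr hs.1)
  have anti : StrictAntiOn f (Set.Icc s₀ T) := by
    apply strictAntiOn_of_deriv_neg (convex_Icc _ _) hfc.continuousOn
    intro s hs
    rw [interior_Icc] at hs
    exact hder s ⟨lt_of_le_of_lt hs₀0 hs.1, hs.2⟩ (hgt s ⟨hs.1, hs.2.le⟩)
  have : f T < f s₀ :=
    anti (Set.left_mem_Icc.mpr hs₀T.le) (Set.right_mem_Icc.mpr hs₀T.le) hs₀T
  exact absurd (this.trans_le hs₀S.2) (not_lt.mpr hcon.le)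

lemma taylor_half {f f' f'' : ℝ → ℝ} {K : ℝ}
    (hd1 : ∀ z, HasDerivAt f (f' z) z) (hd2 : ∀ z, HasDerivAt f' (f'' z) z)
    (hc2 : Continuous f'') (hK : ∀ z, |f'' z| ≤ K) (a b : ℝ) :
    |f b - f a - f' a * (b - a)| ≤ K / 2 * (b - a) ^ 2 := by
  have hc1 : Continuous f' := continuous_iff_continuousAt.mpr fun s => (hd2 s).differentiableAt.continuousAt
  have hF : ∀ s, HasDerivAt (fun z => f z + (b - z) * f' z) ((b - s) * f'' s) s := by
    intro s
    have h : HasDerivAt (fun z => f z + (b - z) * f' z) _ s := (hd1 s).add ((((hasDerivAt_id s).const_sub b)).mul (hd2 s))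
    convert h using 1
    simp only [id]
    ring
  have hint : IntervalIntegrable (fun s => (b - s) * f'' s) MeasureTheory.volume a b :=
    (Continuous.mul (by continuity) hc2).intervalIntegrable _ _
  have key : f b - f a - f' a * (b - a) = ∫ s in a..b, (b - s) * f'' s := by
    have h := intervalIntegral.integral_eq_sub_of_hasDerivAt (fun s _ => hF s) hint
    rw [h]; ring
  rw [key]
  have habs : ∀ lo hi : ℝ, lo ≤ hi →
      (∫ s in lo..hi, |(b - s) * f'' s|) ≤ ∫ s in lo..hi, K * |b - s| := by
    intro lo hi hle
    apply intervalIntegral.integral_mono_on hle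
    · exact ((by continuity : Continuous fun s => (b - s) * f'' s).abs).intervalIntegrable _ _
    · exact (Continuous.mul continuous_const (by continuity)).intervalIntegrable _ _
    · intro s _
      rw [abs_mul, mul_comm]
      exact mul_le_mul_of_nonneg_right (hK s) (abs_nonneg _)
  rcases le_total a b with hab | hab
  · have h1 : |∫ s in a..b, (b - s) * f'' s| ≤ ∫ s in a..b, |(b - s) * f'' s| := by
      simpa [Real.norm_eq_abs, abs_mul] using
        intervalIntegral.norm_integral_le_integral_norm
          (f := fun s => (b - s) * f'' s) (μ := MeasureTheory.volume) hab
    have h2 : (∫ s in a..b, K * |b - s|) = K / 2 * (b - a) ^ 2 := by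
      have : ∀ s ∈ Set.uIcc a b, K * |b - s| = K * (b - s) := by
        intro s hs
        rw [Set.uIcc_of_le hab] at hs
        rw [abs_of_nonneg (by linarith [hs.2])]
      rw [intervalIntegral.integral_congr this, intervalIntegral.integral_const_mul,
        intervalIntegral.integral_sub (continuous_const.intervalIntegrable _ _)
          (continuous_id'.intervalIntegrable _ _), integral_id,
        intervalIntegral.integral_const]
      simp [smul_eq_mul]
      ring
    calc |∫ s in a..b, (b - s) * f'' s| ≤ ∫ s in a..b, |(b - s) * f'' s| := h1
      _ ≤ ∫ s in a..b, K * |b - s| := habs a b hab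
      _ = K / 2 * (b - a) ^ 2 := h2
  · have hsymm : (∫ s in a..b, (b - s) * f'' s) = -∫ s in b..a, (b - s) * f'' s :=
      (intervalIntegral.integral_symm _ _)
    rw [hsymm, abs_neg]
    have h1 : |∫ s in b..a, (b - s) * f'' s| ≤ ∫ s in b..a, |(b - s) * f'' s| := by
      simpa [Real.norm_eq_abs, abs_mul] using
        intervalIntegral.norm_integral_le_integral_norm
          (f := fun s => (b - s) * f'' s) (μ := MeasureTheory.volume) hab
    have h2 : (∫ s in b..a, K * |b - s|) = K / 2 * (b - a) ^ 2 := by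
      have : ∀ s ∈ Set.uIcc b a, K * |b - s| = K * (s - b) := by
        intro s hs
        rw [Set.uIcc_of_le hab] at hs
        rw [abs_of_nonpos (by linarith [hs.1])]
        ring
      rw [intervalIntegral.integral_congr this, intervalIntegral.integral_const_mul,
        intervalIntegral.integral_sub (continuous_id'.intervalIntegrable _ _)
          (continuous_const.intervalIntegrable _ _), integral_id,
        intervalIntegral.integral_const]
      simp [smul_eq_mul]
      ring
    calc |∫ s in b..a, (b - s) * f'' s| ≤ ∫ s in b..a, |(b - s) * f'' s| := h1
      _ ≤ ∫ s in b..a, K * |b - s| := habs b a hab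
      _ = K / 2 * (b - a) ^ 2 := h2

set_option maxHeartbeats 1000000 in
/-- first order estimate. For a smooth coercive regular potential `V`,
a fixed continuous path `W` with `W 0 = 0`, `B t := sup_{0 ≤ s ≤ t} |W s|`,
`κ₂ := sup_z |V''(z)|`, `κ₃ := sup_z |V'''(z)|`, the solution `y` of
`y_t = -∫₀ᵗ V''(ψ_s) y_s ds + W_t`, the solution `x^ε` of
`x^ε_t = x₀ - ∫₀ᵗ V'(x^ε_s) ds + √ε W_t` and the gradient flow `ψ` started at `x₀`
satisfy `|x^ε_t - ψ_t - √ε y_t| ≤ ε B_t² κ₃ (κ₂ t + 1)³ t` for every `t ≥ 0`. -/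
theorem first_order_estimate
    (V ψ W x y : ℝ → ℝ) (x₀ ε δ : ℝ)
    (hV : ContDiff ℝ 3 V)
    (hV0 : V 0 = 0)
    (hcrit : ∀ z : ℝ, deriv V z = 0 ↔ z = 0)
    (hV''0 : 0 < deriv (deriv V) 0)
    (hcoercive : Tendsto V (Filter.cocompact ℝ) atTop)
    (hδ : 0 < δ)
    (hconvex : ∀ z : ℝ, δ ≤ deriv (deriv V) z)
    (hbdd2 : BddAbove (Set.range fun z : ℝ => |deriv (deriv V) z|))
    (hbdd3 : BddAbove (Set.range fun z : ℝ => |deriv (deriv (deriv V)) z|))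
    (hx₀ : x₀ ≠ 0)
    (hψ0 : ψ 0 = x₀)
    (hψ : ∀ t : ℝ, 0 ≤ t → HasDerivAt ψ (-(deriv V (ψ t))) t)
    (hW : ContinuousOn W (Set.Ici 0))
    (hW0 : W 0 = 0)
    (hε : 0 < ε)
    (hycont : ContinuousOn y (Set.Ici 0))
    (hy : ∀ t : ℝ, 0 ≤ t →
      y t = -(∫ s in (0:ℝ)..t, deriv (deriv V) (ψ s) * y s) + W t)
    (hxcont : ContinuousOn x (Set.Ici 0))
    (hx : ∀ t : ℝ, 0 ≤ t →
      x t = x₀ - (∫ s in (0:ℝ)..t, deriv V (x s)) + Real.sqrt ε * W t) :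
    ∀ t : ℝ, 0 ≤ t →
      |x t - ψ t - Real.sqrt ε * y t| ≤
        ε * (⨆ s : Set.Icc (0:ℝ) t, |W s|) ^ 2 *
          (⨆ z : ℝ, |deriv (deriv (deriv V)) z|) *
          ((⨆ z : ℝ, |deriv (deriv V) z|) * t + 1) ^ 3 * t := by
  intro t ht
  -- smoothness facts
  have h3 : ContDiff ℝ 2 (deriv V) := by
    have h : ContDiff ℝ ((2:WithTop ℕ∞)+1) V := by convert hV using 2; norm_num
    exact (contDiff_succ_iff_deriv.mp h).2.2
  have h2 : ContDiff ℝ 1 (deriv (deriv V)) := by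
    have h : ContDiff ℝ ((1:WithTop ℕ∞)+1) (deriv V) := by convert h3 using 2; norm_num
    exact (contDiff_succ_iff_deriv.mp h).2.2
  have hVd_diff : ∀ z : ℝ, HasDerivAt (deriv V) (deriv (deriv V) z) z :=
    fun z => ((h3.differentiable (by norm_num)) z).hasDerivAt
  have hVdd_diff : ∀ z : ℝ, HasDerivAt (deriv (deriv V)) (deriv (deriv (deriv V)) z) z :=
    fun z => ((h2.differentiable (by norm_num)) z).hasDerivAt
  have hVd_cont : Continuous (deriv V) := h3.continuous
  have hVdd_cont : Continuous (deriv (deriv V)) := h2.continuous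
  have hVddd_cont : Continuous (deriv (deriv (deriv V))) := by
    have h : ContDiff ℝ ((0:WithTop ℕ∞)+1) (deriv (deriv V)) := by convert h2 using 2; norm_num
    exact ((contDiff_succ_iff_deriv.mp h).2.2).continuous
  set κ₂ : ℝ := ⨆ z : ℝ, |deriv (deriv V) z| with hκ₂def
  set κ₃ : ℝ := ⨆ z : ℝ, |deriv (deriv (deriv V)) z| with hκ₃def
  have hκ₂ : ∀ z : ℝ, |deriv (deriv V) z| ≤ κ₂ := fun z => le_ciSup hbdd2 z
  have hκ₃ : ∀ z : ℝ, |deriv (deriv (deriv V)) z| ≤ κ₃ := fun z => le_ciSup hbdd3 z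
  have hκ₂0 : 0 ≤ κ₂ := le_trans (abs_nonneg _) (hκ₂ 0)
  have hκ₃0 : 0 ≤ κ₃ := le_trans (abs_nonneg _) (hκ₃ 0)
  have hlip : ∀ a b : ℝ, |deriv V a - deriv V b| ≤ κ₂ * |a - b| := by
    intro a b
    have := Convex.norm_image_sub_le_of_norm_hasDerivWithin_le
      (f := deriv V) (f' := deriv (deriv V)) (s := Set.univ)
      (fun z _ => (hVd_diff z).hasDerivWithinAt)
      (fun z _ => by simpa [Real.norm_eq_abs] using hκ₂ z)
      convex_univ (Set.mem_univ b) (Set.mem_univ a)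
    simpa [Real.norm_eq_abs] using this
  have hmono : StrictMono (deriv V) :=
    strictMono_of_deriv_pos (fun z => lt_of_lt_of_le hδ (hconvex z))
  -- B
  set B : ℝ := ⨆ s : Set.Icc (0:ℝ) t, |W s| with hBdef
  have hWB : ∀ s ∈ Set.Icc (0:ℝ) t, |W s| ≤ B := by
    have hbB : BddAbove (Set.range fun s : Set.Icc (0:ℝ) t => |W ↑s|) := by
      have him : (fun z => |W z|) '' Set.Icc (0:ℝ) t
          = Set.range (fun s : Set.Icc (0:ℝ) t => |W ↑s|) :=
        Set.image_eq_range _ _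
      rw [← him]
      exact (isCompact_Icc.image_of_continuousOn
        ((hW.mono (fun z hz => hz.1)).abs)).bddAbove
    intro s hs
    exact le_ciSup hbB ⟨s, hs⟩
  have hB0 : 0 ≤ B := le_trans (abs_nonneg _) (hWB 0 ⟨le_rfl, ht⟩)
  -- tilde functions
  have hψc : ContinuousOn ψ (Set.Ici 0) :=
    fun s hs => ((hψ s hs).continuousAt).continuousWithinAt
  set X : ℝ → ℝ := fun s => x (max s 0) with hXdef
  set Ψ : ℝ → ℝ := fun s => ψ (max s 0) with hΨdef
  set Y : ℝ → ℝ := fun s => y (max s 0) with hYdef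
  have hmaxc : Continuous (fun s : ℝ => max s 0) := continuous_id.max continuous_const
  have hmaxm : ∀ s : ℝ, max s 0 ∈ Set.Ici (0:ℝ) := fun s => le_max_right s 0
  have hXc : Continuous X := hxcont.comp_continuous hmaxc hmaxm
  have hΨc : Continuous Ψ := hψc.comp_continuous hmaxc hmaxm
  have hYc : Continuous Y := hycont.comp_continuous hmaxc hmaxm
  have hmax : ∀ s : ℝ, 0 ≤ s → max s 0 = s := fun s hs => max_eq_left hs
  set g : ℝ → ℝ := fun s => deriv V (X s) - deriv V (Ψ s) with hgdef
  have hgc : Continuous g := (hVd_cont.comp hXc).sub (hVd_cont.comp hΨc)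
  set h : ℝ → ℝ := fun s => g s - Real.sqrt ε * (deriv (deriv V) (Ψ s) * Y s) with hhdef
  have hhc : Continuous h := hgc.sub (continuous_const.mul ((hVdd_cont.comp hΨc).mul hYc))
  set u : ℝ → ℝ := fun τ => -(∫ s in (0:ℝ)..τ, g s) with hudef
  set ρ : ℝ → ℝ := fun τ => -(∫ s in (0:ℝ)..τ, h s) with hρdef
  have FTC : ∀ (f : ℝ → ℝ), Continuous f → ∀ τ : ℝ,
      HasDerivAt (fun σ => ∫ s in (0:ℝ)..σ, f s) (f τ) τ := by
    intro f hf τ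
    exact intervalIntegral.integral_hasDerivAt_right (hf.intervalIntegrable _ _)
      (hf.stronglyMeasurableAtFilter _ _) hf.continuousAt
  have hu' : ∀ τ : ℝ, HasDerivAt u (-(g τ)) τ := fun τ => (FTC g hgc τ).neg
  have hρ' : ∀ τ : ℝ, HasDerivAt ρ (-(h τ)) τ := fun τ => (FTC h hhc τ).neg
  -- integral form of psi
  have hψint : ∀ τ : ℝ, 0 ≤ τ → ψ τ = x₀ - ∫ s in (0:ℝ)..τ, deriv V (ψ s) := by
    intro τ hτ
    have hder : ∀ s ∈ Set.uIcc (0:ℝ) τ, HasDerivAt ψ (-(deriv V (ψ s))) s := by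
      intro s hs
      rw [Set.uIcc_of_le hτ] at hs
      exact hψ s hs.1
    have hint : IntervalIntegrable (fun s => -(deriv V (ψ s))) volume 0 τ := by
      apply ContinuousOn.intervalIntegrable
      apply ContinuousOn.neg
      apply hVd_cont.comp_continuousOn
      apply hψc.mono
      rw [Set.uIcc_of_le hτ]
      exact fun z hz => hz.1
    have heq := intervalIntegral.integral_eq_sub_of_hasDerivAt hder hint
    rw [intervalIntegral.integral_neg, hψ0] at heq
    linarith
  have hxint : ∀ τ : ℝ, 0 ≤ τ → IntervalIntegrable (fun s => deriv V (x s)) volume 0 τ := by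
    intro τ hτ
    apply ContinuousOn.intervalIntegrable
    apply hVd_cont.comp_continuousOn
    apply hxcont.mono
    rw [Set.uIcc_of_le hτ]
    exact fun z hz => hz.1
  have hψint2 : ∀ τ : ℝ, 0 ≤ τ → IntervalIntegrable (fun s => deriv V (ψ s)) volume 0 τ := by
    intro τ hτ
    apply ContinuousOn.intervalIntegrable
    apply hVd_cont.comp_continuousOn
    apply hψc.mono
    rw [Set.uIcc_of_le hτ]
    exact fun z hz => hz.1
  -- I2
  have huτ : ∀ τ : ℝ, 0 ≤ τ → u τ = x τ - ψ τ - Real.sqrt ε * W τ := by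
    intro τ hτ
    have hcong : (∫ s in (0:ℝ)..τ, g s)
        = ∫ s in (0:ℝ)..τ, (deriv V (x s) - deriv V (ψ s)) := by
      apply intervalIntegral.integral_congr
      intro s hs
      rw [Set.uIcc_of_le hτ] at hs
      simp only [hgdef, hXdef, hΨdef, hmax s hs.1]
    have hsplit := intervalIntegral.integral_sub (hxint τ hτ) (hψint2 τ hτ)
    have hxτ := hx τ hτ
    have hψτ := hψint τ hτ
    simp only [hudef]
    rw [hcong, hsplit]
    linarith
  -- I3
  have hρτ : ∀ τ : ℝ, 0 ≤ τ → ρ τ = x τ - ψ τ - Real.sqrt ε * y τ := by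
    intro τ hτ
    have hyint : IntervalIntegrable (fun s => deriv (deriv V) (ψ s) * y s) volume 0 τ := by
      apply ContinuousOn.intervalIntegrable
      apply ContinuousOn.mul
      · apply hVdd_cont.comp_continuousOn
        apply hψc.mono; rw [Set.uIcc_of_le hτ]; exact fun z hz => hz.1
      · apply hycont.mono; rw [Set.uIcc_of_le hτ]; exact fun z hz => hz.1
    have hcong : (∫ s in (0:ℝ)..τ, h s)
        = ∫ s in (0:ℝ)..τ, ((deriv V (x s) - deriv V (ψ s))
            - Real.sqrt ε * (deriv (deriv V) (ψ s) * y s)) := by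
      apply intervalIntegral.integral_congr
      intro s hs
      rw [Set.uIcc_of_le hτ] at hs
      simp only [hhdef, hgdef, hXdef, hΨdef, hYdef, hmax s hs.1]
    have hsub : IntervalIntegrable (fun s => deriv V (x s) - deriv V (ψ s)) volume 0 τ :=
      (hxint τ hτ).sub (hψint2 τ hτ)
    have hsplit := intervalIntegral.integral_sub hsub (hyint.const_mul (Real.sqrt ε))
    have hsplit2 := intervalIntegral.integral_sub (hxint τ hτ) (hψint2 τ hτ)
    have hcm : (∫ s in (0:ℝ)..τ, Real.sqrt ε * (deriv (deriv V) (ψ s) * y s))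
        = Real.sqrt ε * ∫ s in (0:ℝ)..τ, deriv (deriv V) (ψ s) * y s :=
      intervalIntegral.integral_const_mul _ _
    have hxτ := hx τ hτ
    have hψτ := hψint τ hτ
    have hyτ := hy τ hτ
    simp only [hρdef]
    rw [hcong, hsplit, hsplit2, hcm, hyτ, hxτ, hψτ]
    ring
  -- barrier bound on u
  have hub : ∀ τ ∈ Set.Icc (0:ℝ) t, |u τ| ≤ Real.sqrt ε * B := by
    intro τ hτ
    have hc0 : 0 ≤ Real.sqrt ε * B := mul_nonneg (Real.sqrt_nonneg _) hB0
    have hu0 : u 0 = 0 := by simp [hudef]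
    have hWsb : ∀ s : ℝ, s ∈ Set.Ioo 0 τ → -(Real.sqrt ε * B) ≤ Real.sqrt ε * W s
        ∧ Real.sqrt ε * W s ≤ Real.sqrt ε * B := by
      intro s hs
      have hsc : s ∈ Set.Icc (0:ℝ) t := ⟨hs.1.le, hs.2.le.trans hτ.2⟩
      have hW' := abs_le.mp (hWB s hsc)
      constructor
      · nlinarith [Real.sqrt_nonneg ε]
      · nlinarith [Real.sqrt_nonneg ε]
    have hupper : u τ ≤ Real.sqrt ε * B := by
      apply barrier_aux hτ.1 (fun s => (hu' s).differentiableAt)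
        (by rw [hu0]; exact hc0)
      intro s hs hgt
      have hs0 : (0:ℝ) ≤ s := hs.1.le
      have hxψ : x s - ψ s = u s + Real.sqrt ε * W s := by
        have := huτ s hs0; linarith
      have hpos : ψ s < x s := by
        have := (hWsb s hs).1; linarith
      have hd : deriv u s = -(g s) := (hu' s).deriv
      rw [hd]
      have hlt : deriv V (Ψ s) < deriv V (X s) := by
        apply hmono
        simp only [hΨdef, hXdef, hmax s hs0]
        exact hpos
      simp only [hgdef]
      linarith
    have hlower : -(u τ) ≤ Real.sqrt ε * B := by
      apply barrier_aux (f := fun s => -(u s)) hτ.1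
        (fun s => ((hu' s).neg).differentiableAt)
        (by simp [hu0]; exact hc0)
      intro s hs hgt
      have hs0 : (0:ℝ) ≤ s := hs.1.le
      have hxψ : x s - ψ s = u s + Real.sqrt ε * W s := by
        have := huτ s hs0; linarith
      have hneg : x s < ψ s := by
        have := (hWsb s hs).2; linarith
      have hd : deriv (fun s => -(u s)) s = g s := by
        have := ((hu' s).neg).deriv
        simpa using this
      rw [hd]
      have hlt : deriv V (X s) < deriv V (Ψ s) := by
        apply hmono
        simp only [hΨdef, hXdef, hmax s hs0]
        exact hneg
      simp only [hgdef]
      linarith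
    exact abs_le.mpr ⟨by linarith, hupper⟩
  -- coarse bound on x - psi
  have hzb : ∀ s ∈ Set.Icc (0:ℝ) t, |x s - ψ s| ≤ 2 * (Real.sqrt ε * B) := by
    intro s hs
    have h1 := hub s hs
    have h2 := hWB s hs
    have h3 := huτ s hs.1
    have h4 : |x s - ψ s| ≤ |u s| + |Real.sqrt ε * W s| := by
      rw [show x s - ψ s = u s + Real.sqrt ε * W s by linarith]
      exact abs_add_le _ _
    have h5 : |Real.sqrt ε * W s| ≤ Real.sqrt ε * B := by
      rw [abs_mul, abs_of_nonneg (Real.sqrt_nonneg ε)]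
      exact mul_le_mul_of_nonneg_left h2 (Real.sqrt_nonneg ε)
    linarith
  -- refined bound on u
  have hub2 : ∀ s ∈ Set.Icc (0:ℝ) t, |u s| ≤ κ₂ * (2 * (Real.sqrt ε * B)) * s := by
    intro s hs
    have hbnd : ∀ r ∈ Set.uIoc (0:ℝ) s, ‖g r‖ ≤ κ₂ * (2 * (Real.sqrt ε * B)) := by
      intro r hr
      rw [Set.uIoc_of_le hs.1] at hr
      have hr' : r ∈ Set.Icc (0:ℝ) t := ⟨hr.1.le, hr.2.trans hs.2⟩
      have : g r = deriv V (x r) - deriv V (ψ r) := by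
        simp only [hgdef, hXdef, hΨdef, hmax r hr.1.le]
      rw [Real.norm_eq_abs, this]
      calc |deriv V (x r) - deriv V (ψ r)| ≤ κ₂ * |x r - ψ r| := hlip _ _
        _ ≤ κ₂ * (2 * (Real.sqrt ε * B)) :=
          mul_le_mul_of_nonneg_left (hzb r hr') hκ₂0
    have := intervalIntegral.norm_integral_le_of_norm_le_const hbnd
    simp only [hudef]
    rw [abs_neg]
    calc |∫ r in (0:ℝ)..s, g r| ≤ κ₂ * (2 * (Real.sqrt ε * B)) * |s - 0| := by
          simpa [Real.norm_eq_abs] using this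
      _ = κ₂ * (2 * (Real.sqrt ε * B)) * s := by
          rw [sub_zero, abs_of_nonneg hs.1]
  -- refined bound on x - psi
  have hzb2 : ∀ s ∈ Set.Icc (0:ℝ) t,
      |x s - ψ s| ≤ Real.sqrt ε * B * (1 + 2 * κ₂ * s) := by
    intro s hs
    have h1 := hub2 s hs
    have h2 := hWB s hs
    have h3 := huτ s hs.1
    have h4 : |x s - ψ s| ≤ |u s| + |Real.sqrt ε * W s| := by
      rw [show x s - ψ s = u s + Real.sqrt ε * W s by linarith]
      exact abs_add_le _ _
    have h5 : |Real.sqrt ε * W s| ≤ Real.sqrt ε * B := by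
      rw [abs_mul, abs_of_nonneg (Real.sqrt_nonneg ε)]
      exact mul_le_mul_of_nonneg_left h2 (Real.sqrt_nonneg ε)
    nlinarith
  -- Taylor remainder
  set C : ℝ := κ₃ / 2 * (Real.sqrt ε * B * (1 + 2 * κ₂ * t)) ^ 2 with hCdef
  set R : ℝ → ℝ := fun s => deriv V (X s) - deriv V (Ψ s)
      - deriv (deriv V) (Ψ s) * (X s - Ψ s) with hRdef
  have hRc : Continuous R := by
    apply Continuous.sub ((hVd_cont.comp hXc).sub (hVd_cont.comp hΨc))
    exact (hVdd_cont.comp hΨc).mul (hXc.sub hΨc)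
  have hRb : ∀ s ∈ Set.Icc (0:ℝ) t, |R s| ≤ C := by
    intro s hs
    have htay := taylor_half hVd_diff hVdd_diff hVddd_cont hκ₃ (Ψ s) (X s)
    have hXx : X s = x s := by simp only [hXdef, hmax s hs.1]
    have hΨψ : Ψ s = ψ s := by simp only [hΨdef, hmax s hs.1]
    have hz := hzb2 s hs
    have hz' := abs_le.mp hz
    have hsq : (X s - Ψ s) ^ 2 ≤ (Real.sqrt ε * B * (1 + 2 * κ₂ * t)) ^ 2 := by
      rw [hXx, hΨψ]
      have h0 : (0:ℝ) ≤ Real.sqrt ε * B * (1 + 2 * κ₂ * s) := by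
        apply mul_nonneg (mul_nonneg (Real.sqrt_nonneg ε) hB0)
        have := mul_nonneg hκ₂0 hs.1
        linarith
      have h1 : Real.sqrt ε * B * (1 + 2 * κ₂ * s)
          ≤ Real.sqrt ε * B * (1 + 2 * κ₂ * t) := by
        apply mul_le_mul_of_nonneg_left _ (mul_nonneg (Real.sqrt_nonneg ε) hB0)
        have := mul_le_mul_of_nonneg_left hs.2 hκ₂0
        linarith
      have step1 : (x s - ψ s) ^ 2 ≤ (Real.sqrt ε * B * (1 + 2 * κ₂ * s)) ^ 2 :=
        sq_le_sq' (by linarith [hz'.1]) hz'.2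
      have step2 : (Real.sqrt ε * B * (1 + 2 * κ₂ * s)) ^ 2
          ≤ (Real.sqrt ε * B * (1 + 2 * κ₂ * t)) ^ 2 := by
        apply pow_le_pow_left₀ h0 h1
      linarith
    calc |R s| ≤ κ₃ / 2 * (X s - Ψ s) ^ 2 := htay
      _ ≤ C := by
          rw [hCdef]
          exact mul_le_mul_of_nonneg_left hsq (by linarith)
  -- the integrating factor
  set A : ℝ → ℝ := fun τ => ∫ s in (0:ℝ)..τ, deriv (deriv V) (Ψ s) with hAdef
  have hA' : ∀ τ : ℝ, HasDerivAt A (deriv (deriv V) (Ψ τ)) τ :=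
    FTC _ (hVdd_cont.comp hΨc)
  have hAc : Continuous A :=
    continuous_iff_continuousAt.mpr fun s => (hA' s).differentiableAt.continuousAt
  have hAmono : ∀ s ∈ Set.Icc (0:ℝ) t, A s ≤ A t := by
    intro s hs
    have hadd : A s + (∫ r in s..t, deriv (deriv V) (Ψ r)) = A t := by
      simp only [hAdef]
      exact intervalIntegral.integral_add_adjacent_intervals
        ((hVdd_cont.comp hΨc).intervalIntegrable _ _)
        ((hVdd_cont.comp hΨc).intervalIntegrable _ _)
    have hpos : 0 ≤ ∫ r in s..t, deriv (deriv V) (Ψ r) :=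
      intervalIntegral.integral_nonneg hs.2
        (fun r _ => le_trans hδ.le (hconvex _))
    linarith
  -- derivative identity for F
  have hF' : ∀ τ ∈ Set.uIcc (0:ℝ) t,
      HasDerivAt (fun σ => Real.exp (A σ) * ρ σ)
        (-(Real.exp (A τ) * R τ)) τ := by
    intro τ hτm
    rw [Set.uIcc_of_le ht] at hτm
    have hd : HasDerivAt (fun σ => Real.exp (A σ) * ρ σ) _ τ := ((hA' τ).exp.mul (hρ' τ))
    have hρq : ρ τ = X τ - Ψ τ - Real.sqrt ε * Y τ := by
      rw [hρτ τ hτm.1]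
      simp only [hXdef, hΨdef, hYdef, hmax τ hτm.1]
    convert hd using 1
    simp only [hhdef, hgdef, hRdef]
    rw [hρq]
    ring
  have hFint : IntervalIntegrable (fun s => -(Real.exp (A s) * R s)) volume 0 t :=
    (((Real.continuous_exp.comp hAc).mul hRc).neg).intervalIntegrable _ _
  have hFTC := intervalIntegral.integral_eq_sub_of_hasDerivAt hF' hFint
  have hA0 : A 0 = 0 := by simp [hAdef]
  have hρ0 : ρ 0 = 0 := by simp [hρdef]
  have hkey : Real.exp (A t) * ρ t = -∫ s in (0:ℝ)..t, Real.exp (A s) * R s := by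
    have h' : (∫ s in (0:ℝ)..t, -(Real.exp (A s) * R s))
        = Real.exp (A t) * ρ t - Real.exp (A 0) * ρ 0 := hFTC
    rw [intervalIntegral.integral_neg, hA0, hρ0, Real.exp_zero] at h'
    linarith
  -- bound the integral
  have hintb : |∫ s in (0:ℝ)..t, Real.exp (A s) * R s| ≤ Real.exp (A t) * C * t := by
    have h1 : |∫ s in (0:ℝ)..t, Real.exp (A s) * R s|
        ≤ ∫ s in (0:ℝ)..t, Real.exp (A s) * |R s| := by
      simpa [Real.norm_eq_abs, abs_mul, abs_of_pos (Real.exp_pos _)] using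
        intervalIntegral.norm_integral_le_integral_norm
          (f := fun s => Real.exp (A s) * R s) (μ := volume) ht
    have h2 : (∫ s in (0:ℝ)..t, Real.exp (A s) * |R s|)
        ≤ ∫ _s in (0:ℝ)..t, Real.exp (A t) * C := by
      apply intervalIntegral.integral_mono_on ht
      · exact ((Real.continuous_exp.comp hAc).mul hRc.abs).intervalIntegrable _ _
      · exact (continuous_const).intervalIntegrable _ _
      · intro s hs
        apply mul_le_mul (Real.exp_le_exp.mpr (hAmono s hs)) (hRb s hs) (abs_nonneg _)
          (Real.exp_pos _).le
    have h3 : (∫ _s in (0:ℝ)..t, Real.exp (A t) * C) = Real.exp (A t) * C * t := by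
      rw [intervalIntegral.integral_const]
      rw [smul_eq_mul]
      ring
    linarith
  have hC0 : 0 ≤ C := by
    rw [hCdef]; positivity
  have hρb : |ρ t| ≤ C * t := by
    have he : Real.exp (A t) * |ρ t| = |Real.exp (A t) * ρ t| := by
      rw [abs_mul, abs_of_pos (Real.exp_pos _)]
    have : Real.exp (A t) * |ρ t| ≤ Real.exp (A t) * (C * t) := by
      rw [he, hkey, abs_neg]
      calc |∫ s in (0:ℝ)..t, Real.exp (A s) * R s| ≤ Real.exp (A t) * C * t := hintb
        _ = Real.exp (A t) * (C * t) := by ring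
    exact le_of_mul_le_mul_left this (Real.exp_pos _)
  -- conclusion
  have hfinal : |x t - ψ t - Real.sqrt ε * y t| ≤ C * t := by
    rw [← hρτ t ht]
    exact hρb
  have hsq : Real.sqrt ε ^ 2 = ε := Real.sq_sqrt hε.le
  calc |x t - ψ t - Real.sqrt ε * y t| ≤ C * t := hfinal
    _ ≤ ε * B ^ 2 * κ₃ * (κ₂ * t + 1) ^ 3 * t := by
        rw [hCdef]
        have hexp : κ₃ / 2 * (Real.sqrt ε * B * (1 + 2 * κ₂ * t)) ^ 2
            = κ₃ / 2 * (ε * B ^ 2) * (1 + 2 * κ₂ * t) ^ 2 := by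
          rw [mul_pow, mul_pow, hsq]
          ring
        rw [hexp]
        have ha : 0 ≤ κ₂ * t := mul_nonneg hκ₂0 ht
        nlinarith [mul_nonneg (mul_nonneg hε.le (sq_nonneg B)) hκ₃0,
          mul_nonneg (mul_nonneg (mul_nonneg hε.le (sq_nonneg B)) hκ₃0) ht,
          mul_nonneg ha ha, mul_nonneg (mul_nonneg ha ha) ha,
          mul_nonneg (mul_nonneg (mul_nonneg (mul_nonneg hε.le (sq_nonneg B)) hκ₃0) ht) ha,
          mul_nonneg (mul_nonneg (mul_nonneg (mul_nonneg (mul_nonneg hε.le (sq_nonneg B)) hκ₃0) ht) ha) ha,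
          mul_nonneg (mul_nonneg (mul_nonneg (mul_nonneg (mul_nonneg (mul_nonneg hε.le (sq_nonneg B)) hκ₃0) ht) ha) ha) ha]
end
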